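/- Fix n ≥ 1, a subset I = {i_1 < … < i_r} ⊆ {1,…,n} and j ∈ {1,…,n}∖I. If two Gauss diagrams G and G' on n strings are related by a single Reidemeister move Ω1, Ω2 or Ω3, then Z_{I,j}(G) = Z_{I,j}(G'). Consequently the tree invariant Z_{I,j} is well defined on ordered virtual tangles on n strings (equivalence classes of Gauss diagrams modulo these moves), and in particular is an isotopy invariant of ordered classical tangles. -/

import Mathlib

/-!
Combinatorial Gauss diagrams on `n` strings and the tree invariants `Z I j`.

A Gauss diagram is encoded by a finite set of arrows; each arrow records the
string (an element of `Fin n`) and the position (a rational number, increasing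
in the direction of the orientation of the string) of its tail and of its head,
together with a sign `±1`.  Only the induced combinatorial data (linear order of
the endpoints along each string, the tail/head pairing and the signs) is ever
used by the definitions below.

The tree invariant `Z I j G = ∑_{A ∈ 𝒜_{I,j}} sign(A) ⟨A, G⟩` is computed as a
signed count over all subsets `S` of the arrows of `G` that form a planar tree
diagram with leaves on `I` and trunk on `j`: each pair `(A, φ)` of a planar tree
diagram `A ∈ 𝒜_{I,j}` together with an embedding `φ : A → G` corresponds
bijectively to the subset `S = Im φ` of the arrows of `G`, which is itself a
planar tree diagram with leaves on `I` and trunk on `j`; the contribution of the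
pair to the sum is `sign(A) · sign(φ) = (-1)^{#right-pointing arrows of S} · ∏_{a ∈ S} sign(a)`.
-/

open scoped Classical

/-- An arrow of a Gauss diagram on `n` strings: a tail endpoint, a head
endpoint (each given by the string it lies on and its position along that
string) and a sign. -/
structure GArrow (n : ℕ) where
  tailStr : Fin n
  tailPos : ℚ
  headStr : Fin n
  headPos : ℚ
  sign : ℤ
deriving DecidableEq

namespace GArrow

/-- The two endpoints of an arrow: `false` is the tail, `true` is the head. -/
def ep {n : ℕ} (a : GArrow n) : Bool → Fin n × ℚ
  | false => (a.tailStr, a.tailPos)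
  | true => (a.headStr, a.headPos)

end GArrow

/-- A Gauss diagram on `n` strings: a finite set of signed arrows with all
endpoints pairwise distinct, and all signs equal to `±1`. -/
structure GaussDiagram (n : ℕ) where
  arrows : Finset (GArrow n)
  sign_pm : ∀ a ∈ arrows, a.sign = 1 ∨ a.sign = -1
  endpoints_distinct : ∀ a ∈ arrows, ∀ b ∈ arrows, ∀ s t : Bool,
    a.ep s = b.ep t → a = b ∧ s = t

/-- `S` is a tree diagram with leaves on `I` and trunk on `j`:
* the head and the tail of every arrow lie on different strings;
* for each `i ∈ I` there is exactly one arrow tail on string `i`, and there are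
  no arrow tails on strings outside `I`;
* every arrow head lies on a string of `I ∪ {j}`;
* on each string `i ∈ I` all arrow heads precede the unique arrow tail. -/
def IsTreeDiagram {n : ℕ} (I : Finset (Fin n)) (j : Fin n)
    (S : Finset (GArrow n)) : Prop :=
  (∀ a ∈ S, a.tailStr ≠ a.headStr) ∧
  (∀ i ∈ I, ∃! a, a ∈ S ∧ a.tailStr = i) ∧
  (∀ a ∈ S, a.tailStr ∈ I) ∧
  (∀ a ∈ S, a.headStr ∈ I ∨ a.headStr = j) ∧
  (∀ a ∈ S, ∀ b ∈ S, a.headStr = b.tailStr → a.headPos < b.tailPos)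

/-- `ParentRel S s t` : string `s` is the parent of string `t` in the rooted
tree determined by the tree diagram `S`, i.e. the (unique) arrow with tail on
`t` has its head on `s`. -/
def ParentRel {n : ℕ} (S : Finset (GArrow n)) (s t : Fin n) : Prop :=
  ∃ a ∈ S, a.tailStr = t ∧ a.headStr = s

/-- `Descends S s k` : string `k` belongs to the subtree of string `s` (it is
`s` itself or an iterated child of `s`). -/
def Descends {n : ℕ} (S : Finset (GArrow n)) : Fin n → Fin n → Prop :=
  Relation.ReflTransGen (ParentRel S)

/-- `S` is a *planar* tree diagram with leaves on `I` and trunk on `j`: the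
rooted tree `T_S` determined by `S` can be drawn in the plane so that the
clockwise order of its leaves, starting from the root on string `j`, is the
order of the string numbers.  Combinatorially this says that:
* the parent relation makes the strings carrying the arrows into a tree rooted
  at `j` (every leaf string is an iterated child of `j`);
* the whole subtree hanging from an arrow lies on the same side of the string
  carrying the head of that arrow as its tail does;
* two subtrees hanging on the same side of a common string are ordered, along
  that string, compatibly with the order of the strings: for two arrow heads on
  the same string, with both tails on the left, the subtree attached closer to
  the beginning of the string is the one carrying the larger string numbers,
  while for two tails on the right it is the one carrying the smaller string
  numbers. -/
def IsPlanarTreeDiagram {n : ℕ} (I : Finset (Fin n)) (j : Fin n)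
    (S : Finset (GArrow n)) : Prop :=
  IsTreeDiagram I j S ∧
  (∀ i ∈ I, Relation.TransGen (ParentRel S) j i) ∧
  (∀ a ∈ S, ∀ k : Fin n, Descends S a.tailStr k →
    (a.tailStr < a.headStr ↔ k < a.headStr)) ∧
  (∀ a ∈ S, ∀ b ∈ S, a.headStr = b.headStr → a.headPos < b.headPos →
    ∀ k k' : Fin n, Descends S a.tailStr k → Descends S b.tailStr k' →
      ((a.tailStr < a.headStr → b.tailStr < b.headStr → k' < k) ∧
       (a.headStr < a.tailStr → b.headStr < b.tailStr → k < k')))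

/-- The sign `(-1)^q` of an (embedded) arrow diagram, where `q` is the number
of right-pointing arrows (tail on a string of smaller number than the head). -/
noncomputable def treeSign {n : ℕ} (S : Finset (GArrow n)) : ℤ :=
  (-1) ^ (S.filter fun a => a.tailStr < a.headStr).card

/-- The tree invariant `Z_{I,j}(G) = ∑_{A ∈ 𝒜_{I,j}} sign(A)·⟨A,G⟩`, computed
as the signed count of embedded planar tree diagrams with leaves on `I` and
trunk on `j` inside `G`.  In particular `Z ∅ j G = 1` (only `S = ∅`
contributes). -/
noncomputable def Z {n : ℕ} (I : Finset (Fin n)) (j : Fin n)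
    (G : GaussDiagram n) : ℤ :=
  ∑ S ∈ G.arrows.powerset,
    if IsPlanarTreeDiagram I j S then treeSign S * ∏ a ∈ S, a.sign else 0

/-- The two points at positions `p` and `q` on string `str` are adjacent in the
Gauss diagram `G`: no arrow endpoint of `G` lies strictly between them. -/
def IsAdjacentPair {n : ℕ} (G : GaussDiagram n) (str : Fin n) (p q : ℚ) : Prop :=
  p ≠ q ∧ ∀ c ∈ G.arrows, ∀ s : Bool, (c.ep s).1 = str →
    ¬(min p q < (c.ep s).2 ∧ (c.ep s).2 < max p q)

/-- The sign `±1` associated to a Boolean. -/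
def bsign (b : Bool) : ℤ := if b then 1 else -1

/-- The arrow with endpoints `(s1, p1)` and `(s2, p2)` and sign `sg`, whose
tail is on `s1` if `d = true` and on `s2` if `d = false`. -/
def mkDirArrow {n : ℕ} (d : Bool) (s1 : Fin n) (p1 : ℚ) (s2 : Fin n) (p2 : ℚ)
    (sg : ℤ) : GArrow n :=
  if d then ⟨s1, p1, s2, p2, sg⟩ else ⟨s2, p2, s1, p1, sg⟩

/-- First Reidemeister move (deletion direction): `G'` is obtained from `G` by
deleting one arrow whose two endpoints are adjacent on a single string. -/
def Omega1Del {n : ℕ} (G G' : GaussDiagram n) : Prop :=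
  ∃ a ∈ G.arrows, a.tailStr = a.headStr ∧
    IsAdjacentPair G a.tailStr a.tailPos a.headPos ∧
    G'.arrows = G.arrows.erase a

/-- First Reidemeister move: insertion or deletion of an isolated arrow with
both (adjacent) endpoints on a single string. -/
def Omega1Rel {n : ℕ} (G G' : GaussDiagram n) : Prop :=
  Omega1Del G G' ∨ Omega1Del G' G

/-- Second Reidemeister move (deletion direction): `G'` is obtained from `G` by
deleting a pair of arrows of opposite signs joining the same two strings in the
same direction, whose tails are adjacent and whose heads are adjacent, the
arrow whose tail comes first being the one whose head comes second. -/
def Omega2Del {n : ℕ} (G G' : GaussDiagram n) : Prop :=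
  ∃ a ∈ G.arrows, ∃ b ∈ G.arrows, a ≠ b ∧
    a.tailStr = b.tailStr ∧ a.headStr = b.headStr ∧ a.sign = -b.sign ∧
    IsAdjacentPair G a.tailStr a.tailPos b.tailPos ∧
    IsAdjacentPair G a.headStr a.headPos b.headPos ∧
    ((a.tailPos < b.tailPos ∧ b.headPos < a.headPos) ∨
     (b.tailPos < a.tailPos ∧ a.headPos < b.headPos)) ∧
    G'.arrows = (G.arrows.erase a).erase b

/-- Second Reidemeister move: insertion or deletion of such a pair of arrows. -/
def Omega2Rel {n : ℕ} (G G' : GaussDiagram n) : Prop :=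
  Omega2Del G G' ∨ Omega2Del G' G

/-- Third Reidemeister move on Gauss diagrams: three string fragments (on the
strings `sX`, `sY`, `sZ`, not necessarily distinct) carry the six endpoints of
three arrows `a` (joining the first and second fragments), `b` (first and
third) and `c` (second and third); on each fragment the two endpoints are
adjacent, and the move simultaneously transposes the two endpoints on each
fragment, preserving the directions and the signs of the three arrows.

Exactly the configurations arising from the oriented third Reidemeister move on
tangle diagrams (sliding the first strand, which passes entirely over or
entirely under the other two, across the crossing of the other two strands) are
allowed; they are parametrised by the five Booleans `u` (the sliding strand
passes over), `w` (the second strand passes over the third at their crossing)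
and `ox`, `oy`, `oz` (the orientations of the three strands in the standard
local picture), which determine the directions, the signs and the mutual order
of the endpoints of the three arrows, as obtained by computing the writhes in
the local picture. -/
def Omega3Rel {n : ℕ} (G G' : GaussDiagram n) : Prop :=
  ∃ (sX sY sZ : Fin n) (xa xb ya yc zb zc : ℚ) (u w ox oy oz : Bool),
    mkDirArrow u sX xa sY ya (bsign u * bsign ox * bsign oy) ∈ G.arrows ∧
    mkDirArrow u sX xb sZ zb (-(bsign u * bsign ox * bsign oz)) ∈ G.arrows ∧
    mkDirArrow w sY yc sZ zc (-(bsign w * bsign oy * bsign oz)) ∈ G.arrows ∧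
    (if ox then xa < xb else xb < xa) ∧
    (if oy then ya < yc else yc < ya) ∧
    (if oz then zc < zb else zb < zc) ∧
    IsAdjacentPair G sX xa xb ∧ IsAdjacentPair G sY ya yc ∧
    IsAdjacentPair G sZ zb zc ∧
    G'.arrows =
      (((G.arrows.erase
            (mkDirArrow u sX xa sY ya (bsign u * bsign ox * bsign oy))).erase
            (mkDirArrow u sX xb sZ zb (-(bsign u * bsign ox * bsign oz)))).erase
            (mkDirArrow w sY yc sZ zc (-(bsign w * bsign oy * bsign oz)))) ∪
        {mkDirArrow u sX xb sY yc (bsign u * bsign ox * bsign oy),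
         mkDirArrow u sX xa sZ zc (-(bsign u * bsign ox * bsign oz)),
         mkDirArrow w sY ya sZ zb (-(bsign w * bsign oy * bsign oz))}


/-! ### Auxiliary infrastructure for the proof -/

open Finset Relation

namespace GArrow
@[simp] lemma ep_false {n : ℕ} (a : GArrow n) : a.ep false = (a.tailStr, a.tailPos) := rfl
@[simp] lemma ep_true {n : ℕ} (a : GArrow n) : a.ep true = (a.headStr, a.headPos) := rfl
end GArrow

/-- The contribution of a subset of arrows to the tree invariant. -/
noncomputable def tval {n : ℕ} (I : Finset (Fin n)) (j : Fin n)
    (S : Finset (GArrow n)) : ℤ :=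
  if IsPlanarTreeDiagram I j S then treeSign S * ∏ a ∈ S, a.sign else 0

lemma Z_eq {n : ℕ} (I : Finset (Fin n)) (j : Fin n) (G : GaussDiagram n) :
    Z I j G = ∑ S ∈ G.arrows.powerset, tval I j S := rfl

/-! #### Order window lemmas -/

lemma win_lt_iff {p q1 q2 : ℚ} (h : p < min q1 q2 ∨ max q1 q2 < p) :
    (p < q1 ↔ p < q2) ∧ (q1 < p ↔ q2 < p) := by
  rcases h with h | h
  · rw [lt_min_iff] at h
    exact ⟨⟨fun _ => h.2, fun _ => h.1⟩, ⟨fun h' => absurd (h.1.trans h') (lt_irrefl _),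
      fun h' => absurd (h.2.trans h') (lt_irrefl _)⟩⟩
  · rw [max_lt_iff] at h
    exact ⟨⟨fun h' => absurd (h'.trans h.1) (lt_irrefl _), fun h' => absurd (h'.trans h.2) (lt_irrefl _)⟩,
      ⟨fun _ => h.2, fun _ => h.1⟩⟩

lemma win_cross_iff {p1 p2 q1 q2 : ℚ}
    (h1 : q1 < min p1 p2 ∨ max p1 p2 < q1) (h2 : q2 < min p1 p2 ∨ max p1 p2 < q2)
    (h3 : p1 < min q1 q2 ∨ max q1 q2 < p1) :
    (p1 < q1 ↔ p2 < q2) := by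
  simp only [lt_min_iff, max_lt_iff] at h1 h2 h3
  rcases h1 with h1 | h1 <;> rcases h2 with h2 | h2 <;> rcases h3 with h3 | h3 <;>
    constructor <;> intro h <;>
    linarith [h1.1, h1.2, h2.1, h2.2, h3.1, h3.2]

lemma window_of_adj {n : ℕ} {G : GaussDiagram n} {str : Fin n} {p q : ℚ}
    (h : IsAdjacentPair G str p q) {c : GArrow n} (hc : c ∈ G.arrows) (s : Bool)
    (hstr : (c.ep s).1 = str) (h1 : (c.ep s).2 ≠ p) (h2 : (c.ep s).2 ≠ q) :
    (c.ep s).2 < min p q ∨ max p q < (c.ep s).2 := by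
  have h3 := h.2 c hc s hstr
  rcases lt_trichotomy ((c.ep s).2) (min p q) with h4 | h4 | h4
  · exact Or.inl h4
  · exact absurd h4 (by rcases min_choice p q with hm | hm <;> rw [hm] <;> assumption)
  · rcases lt_trichotomy ((c.ep s).2) (max p q) with h5 | h5 | h5
    · exact absurd ⟨h4, h5⟩ h3
    · exact absurd h5 (by rcases max_choice p q with hm | hm <;> rw [hm] <;> assumption)
    · exact Or.inr h5

lemma GaussDiagram.pos_ne {n : ℕ} (G : GaussDiagram n) {a b : GArrow n} (ha : a ∈ G.arrows)
    (hb : b ∈ G.arrows) (s t : Bool) (h : ¬(a = b ∧ s = t)) :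
    (a.ep s).2 ≠ (b.ep t).2 ∨ (a.ep s).1 ≠ (b.ep t).1 := by
  by_contra hc
  push_neg at hc
  exact h (G.endpoints_distinct a ha b hb s t (Prod.ext hc.2 hc.1))

lemma GaussDiagram.pos_ne' {n : ℕ} (G : GaussDiagram n) {a b : GArrow n} (ha : a ∈ G.arrows)
    (hb : b ∈ G.arrows) (s t : Bool) (h : ¬(a = b ∧ s = t))
    (hstr : (a.ep s).1 = (b.ep t).1) : (a.ep s).2 ≠ (b.ep t).2 := by
  rcases G.pos_ne ha hb s t h with h' | h'
  · exact h'
  · exact absurd hstr h'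

lemma adj_symm {n : ℕ} {G : GaussDiagram n} {str : Fin n} {p q : ℚ}
    (h : IsAdjacentPair G str p q) : IsAdjacentPair G str q p := by
  refine ⟨h.1.symm, fun c hc s hstr => ?_⟩
  rw [min_comm, max_comm]
  exact h.2 c hc s hstr

/-! #### Parent relation and descendants -/

lemma parentRel_insert {n : ℕ} (x : GArrow n) (S : Finset (GArrow n)) (s t : Fin n) :
    ParentRel (insert x S) s t ↔ (x.headStr = s ∧ x.tailStr = t) ∨ ParentRel S s t := by
  constructor
  · rintro ⟨a, ha, h1, h2⟩
    rcases mem_insert.mp ha with rfl | ha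
    · exact Or.inl ⟨h2, h1⟩
    · exact Or.inr ⟨a, ha, h1, h2⟩
  · rintro (⟨h2, h1⟩ | ⟨a, ha, h1, h2⟩)
    · exact ⟨x, mem_insert_self _ _, h1, h2⟩
    · exact ⟨a, mem_insert_of_mem ha, h1, h2⟩

lemma descends_congr {n : ℕ} {S S' : Finset (GArrow n)}
    (h : ∀ s t, ParentRel S s t ↔ ParentRel S' s t) (a b : Fin n) :
    Descends S a b ↔ Descends S' a b :=
  ⟨(Relation.ReflTransGen.mono fun s t hst => (h s t).mp hst) a b,
   (Relation.ReflTransGen.mono fun s t hst => (h s t).mpr hst) a b⟩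

lemma transGen_congr {n : ℕ} {S S' : Finset (GArrow n)}
    (h : ∀ s t, ParentRel S s t ↔ ParentRel S' s t) (a b : Fin n) :
    Relation.TransGen (ParentRel S) a b ↔ Relation.TransGen (ParentRel S') a b :=
  ⟨(Relation.TransGen.mono fun s t hst => (h s t).mp hst) a b,
   (Relation.TransGen.mono fun s t hst => (h s t).mpr hst) a b⟩

/-! #### Killing lemmas -/

lemma not_tree_two_tails {n : ℕ} {I : Finset (Fin n)} {j : Fin n} {S : Finset (GArrow n)}
    {a b : GArrow n} (ha : a ∈ S) (hb : b ∈ S) (hne : a ≠ b)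
    (hts : a.tailStr = b.tailStr) : ¬IsTreeDiagram I j S := by
  rintro ⟨-, h2, h3, -, -⟩
  obtain ⟨c, -, hc⟩ := h2 a.tailStr (h3 a ha)
  exact hne ((hc a ⟨ha, rfl⟩).trans (hc b ⟨hb, hts.symm⟩).symm)

lemma not_tree_self {n : ℕ} {I : Finset (Fin n)} {j : Fin n} {S : Finset (GArrow n)}
    {a : GArrow n} (ha : a ∈ S) (h : a.tailStr = a.headStr) : ¬IsTreeDiagram I j S :=
  fun h' => h'.1 a ha h

lemma tval_zero_of_not_tree {n : ℕ} {I : Finset (Fin n)} {j : Fin n} {S : Finset (GArrow n)}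
    (h : ¬IsTreeDiagram I j S) : tval I j S = 0 := by
  rw [tval, if_neg]
  exact fun hp => h hp.1

lemma tval_zero_of_not_pl {n : ℕ} {I : Finset (Fin n)} {j : Fin n} {S : Finset (GArrow n)}
    (h : ¬IsPlanarTreeDiagram I j S) : tval I j S = 0 := by
  rw [tval, if_neg h]

lemma treeSign_insert {n : ℕ} {S : Finset (GArrow n)} {x : GArrow n} (hx : x ∉ S) :
    treeSign (insert x S) = (if x.tailStr < x.headStr then -1 else 1) * treeSign S := by
  unfold treeSign
  rw [filter_insert]
  split
  · rw [card_insert_of_notMem (fun h => hx (Finset.mem_of_mem_filter x h)), pow_succ]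
    ring
  · rw [one_mul]

/-! #### Transfer of planarity along order-preserving replacement of one arrow -/

lemma mem_insert_cases {α : Type*} [DecidableEq α] {a x : α} {R : Finset α}
    (h : a ∈ insert x R) : x = a ∨ a ∈ R := (Finset.mem_insert.mp h).imp Eq.symm id

lemma pl_insert_imp {n : ℕ} {I : Finset (Fin n)} {j : Fin n} {x y : GArrow n}
    {R : Finset (GArrow n)}
    (hxR : x ∉ R) (hyR : y ∉ R)
    (hts : y.tailStr = x.tailStr) (hhs : y.headStr = x.headStr)
    (hxy : ∀ s t : Bool, (x.ep s).1 = (x.ep t).1 →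
      ((x.ep s).2 < (x.ep t).2 ↔ (y.ep s).2 < (y.ep t).2))
    (hR : ∀ r ∈ R, ∀ s t : Bool, (r.ep s).1 = (x.ep t).1 →
        (((r.ep s).2 < (x.ep t).2 ↔ (r.ep s).2 < (y.ep t).2) ∧
         ((x.ep t).2 < (r.ep s).2 ↔ (y.ep t).2 < (r.ep s).2)))
    (h : IsPlanarTreeDiagram I j (insert x R)) :
    IsPlanarTreeDiagram I j (insert y R) := by
  have hPR : ∀ s t, ParentRel (insert x R) s t ↔ ParentRel (insert y R) s t := by
    intro s t
    rw [parentRel_insert, parentRel_insert, hts, hhs]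
  have hD : ∀ s t, Descends (insert x R) s t ↔ Descends (insert y R) s t :=
    descends_congr hPR
  have hTG := transGen_congr hPR
  obtain ⟨⟨h1, h2, h3, h4, h5⟩, hreach, hside, hpair⟩ := h
  refine ⟨⟨?_, ?_, ?_, ?_, ?_⟩, ?_, ?_, ?_⟩
  · intro a ha
    rcases mem_insert_cases ha with rfl | ha
    · rw [hts, hhs]; exact h1 x (mem_insert_self x R)
    · exact h1 a (mem_insert_of_mem ha)
  · intro i hi
    obtain ⟨a, ⟨haS, hat⟩, huniq⟩ := h2 i hi
    rcases mem_insert_cases haS with rfl | haR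
    · refine ⟨y, ⟨mem_insert_self y R, hts.trans hat⟩, ?_⟩
      rintro b ⟨hbS, hbt⟩
      rcases mem_insert_cases hbS with rfl | hbR
      · rfl
      · have hbx : b = x := huniq b ⟨mem_insert_of_mem hbR, hbt⟩
        rw [hbx] at hbR
        exact absurd hbR hxR
    · refine ⟨a, ⟨mem_insert_of_mem haR, hat⟩, ?_⟩
      rintro b ⟨hbS, hbt⟩
      rcases mem_insert_cases hbS with rfl | hbR
      · have hxa : x = a := huniq x ⟨mem_insert_self x R, hts.symm.trans hbt⟩
        rw [← hxa] at haR
        exact absurd haR hxR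
      · exact huniq b ⟨mem_insert_of_mem hbR, hbt⟩
  · intro a ha
    rcases mem_insert_cases ha with rfl | ha
    · rw [hts]; exact h3 x (mem_insert_self x R)
    · exact h3 a (mem_insert_of_mem ha)
  · intro a ha
    rcases mem_insert_cases ha with rfl | ha
    · rw [hhs]; exact h4 x (mem_insert_self x R)
    · exact h4 a (mem_insert_of_mem ha)
  · intro a ha b hb hab
    rcases mem_insert_cases ha with rfl | ha <;> rcases mem_insert_cases hb with rfl | hb
    · have hs' : x.headStr = x.tailStr := by rw [← hhs, ← hts]; exact hab
      have hx5 : x.headPos < x.tailPos :=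
        h5 x (mem_insert_self x R) x (mem_insert_self x R) hs'
      exact (hxy true false hs').mp hx5
    · have h' : x.headStr = b.tailStr := by rw [← hhs]; exact hab
      have hord := (hR b (by exact hb) false true h'.symm).2
      exact hord.mp (h5 x (mem_insert_self x R) b (mem_insert_of_mem hb) h')
    · have h' : a.headStr = x.tailStr := hab.trans hts
      have hord := (hR a (by exact ha) true false h').1
      exact hord.mp (h5 a (mem_insert_of_mem ha) x (mem_insert_self x R) h')
    · exact h5 a (mem_insert_of_mem ha) b (mem_insert_of_mem hb) hab
  · intro i hi
    exact (hTG j i).mp (hreach i hi)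
  · intro a ha k hk
    rcases mem_insert_cases ha with rfl | ha
    · rw [hts, hhs]
      exact hside x (mem_insert_self x R) k ((hD x.tailStr k).mpr (hts ▸ hk))
    · exact hside a (mem_insert_of_mem ha) k ((hD a.tailStr k).mpr hk)
  · intro a ha b hb hH hP k k' hk hk'
    rcases mem_insert_cases ha with rfl | ha <;> rcases mem_insert_cases hb with rfl | hb
    · exact absurd hP (lt_irrefl _)
    · have hH' : x.headStr = b.headStr := by rw [← hhs]; exact hH
      have hP' : x.headPos < b.headPos := ((hR b (by exact hb) true true hH'.symm).2).mpr hP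
      have := hpair x (mem_insert_self x R) b (mem_insert_of_mem hb) hH' hP' k k'
        ((hD _ _).mpr (hts ▸ hk)) ((hD _ _).mpr hk')
      rw [hts, hhs]
      exact this
    · have hH' : a.headStr = x.headStr := hH.trans hhs
      have hP' : a.headPos < x.headPos := ((hR a (by exact ha) true true hH').1).mpr hP
      have := hpair a (mem_insert_of_mem ha) x (mem_insert_self x R) hH' hP' k k'
        ((hD _ _).mpr hk) ((hD _ _).mpr (hts ▸ hk'))
      rw [hts, hhs]
      exact this
    · exact hpair a (mem_insert_of_mem ha) b (mem_insert_of_mem hb) hH hP k k'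
        ((hD _ _).mpr hk) ((hD _ _).mpr hk')

lemma pl_insert_iff {n : ℕ} {I : Finset (Fin n)} {j : Fin n} {x y : GArrow n}
    {R : Finset (GArrow n)}
    (hxR : x ∉ R) (hyR : y ∉ R)
    (hts : y.tailStr = x.tailStr) (hhs : y.headStr = x.headStr)
    (hxy : ∀ s t : Bool, (x.ep s).1 = (x.ep t).1 →
      ((x.ep s).2 < (x.ep t).2 ↔ (y.ep s).2 < (y.ep t).2))
    (hR : ∀ r ∈ R, ∀ s t : Bool, (r.ep s).1 = (x.ep t).1 →
        (((r.ep s).2 < (x.ep t).2 ↔ (r.ep s).2 < (y.ep t).2) ∧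
         ((x.ep t).2 < (r.ep s).2 ↔ (y.ep t).2 < (r.ep s).2))) :
    IsPlanarTreeDiagram I j (insert x R) ↔ IsPlanarTreeDiagram I j (insert y R) := by
  have hstr : ∀ s : Bool, (y.ep s).1 = (x.ep s).1 := by
    intro s; cases s
    · exact hts
    · exact hhs
  constructor
  · exact pl_insert_imp hxR hyR hts hhs hxy hR
  · refine pl_insert_imp hyR hxR hts.symm hhs.symm ?_ ?_
    · intro s t hy
      exact (hxy s t ((hstr s).symm.trans (hy.trans (hstr t)))).symm
    · intro r hr s t hy
      have h0 := hR r hr s t (hy.trans (hstr t))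
      exact ⟨h0.1.symm, h0.2.symm⟩

lemma tval_insert_eq {n : ℕ} {I : Finset (Fin n)} {j : Fin n} {x y : GArrow n}
    {R : Finset (GArrow n)}
    (hxR : x ∉ R) (hyR : y ∉ R)
    (hts : y.tailStr = x.tailStr) (hhs : y.headStr = x.headStr) (hsg : y.sign = x.sign)
    (hxy : ∀ s t : Bool, (x.ep s).1 = (x.ep t).1 →
      ((x.ep s).2 < (x.ep t).2 ↔ (y.ep s).2 < (y.ep t).2))
    (hR : ∀ r ∈ R, ∀ s t : Bool, (r.ep s).1 = (x.ep t).1 →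
        (((r.ep s).2 < (x.ep t).2 ↔ (r.ep s).2 < (y.ep t).2) ∧
         ((x.ep t).2 < (r.ep s).2 ↔ (y.ep t).2 < (r.ep s).2))) :
    tval I j (insert x R) = tval I j (insert y R) := by
  by_cases hp : IsPlanarTreeDiagram I j (insert x R)
  · rw [tval, tval, if_pos hp, if_pos ((pl_insert_iff hxR hyR hts hhs hxy hR).mp hp),
      treeSign_insert hxR, treeSign_insert hyR, prod_insert hxR, prod_insert hyR,
      hts, hhs, hsg]
  · rw [tval, tval, if_neg hp,
      if_neg (fun h => hp ((pl_insert_iff hxR hyR hts hhs hxy hR).mpr h))]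

lemma tval_insert_neg {n : ℕ} {I : Finset (Fin n)} {j : Fin n} {x y : GArrow n}
    {R : Finset (GArrow n)}
    (hxR : x ∉ R) (hyR : y ∉ R)
    (hts : y.tailStr = x.tailStr) (hhs : y.headStr = x.headStr) (hsg : y.sign = -x.sign)
    (hxy : ∀ s t : Bool, (x.ep s).1 = (x.ep t).1 →
      ((x.ep s).2 < (x.ep t).2 ↔ (y.ep s).2 < (y.ep t).2))
    (hR : ∀ r ∈ R, ∀ s t : Bool, (r.ep s).1 = (x.ep t).1 →
        (((r.ep s).2 < (x.ep t).2 ↔ (r.ep s).2 < (y.ep t).2) ∧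
         ((x.ep t).2 < (r.ep s).2 ↔ (y.ep t).2 < (r.ep s).2))) :
    tval I j (insert y R) = - tval I j (insert x R) := by
  by_cases hp : IsPlanarTreeDiagram I j (insert x R)
  · rw [tval, tval, if_pos hp, if_pos ((pl_insert_iff hxR hyR hts hhs hxy hR).mp hp),
      treeSign_insert hxR, treeSign_insert hyR, prod_insert hxR, prod_insert hyR,
      hts, hhs, hsg]
    ring
  · rw [tval, tval, if_neg hp,
      if_neg (fun h => hp ((pl_insert_iff hxR hyR hts hhs hxy hR).mpr h)), neg_zero]

/-! #### Invariance under the first move -/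

lemma Z_omega1del {n : ℕ} {I : Finset (Fin n)} {j : Fin n} {G G' : GaussDiagram n}
    (h : Omega1Del G G') : Z I j G = Z I j G' := by
  obtain ⟨a, haG, hss, -, hGE⟩ := h
  rw [Z_eq, Z_eq, hGE]
  rw [← sum_filter_add_sum_filter_not G.arrows.powerset (fun S => a ∈ S) (tval I j)]
  have h1 : ∑ S ∈ G.arrows.powerset.filter (fun S => a ∈ S), tval I j S = 0 := by
    apply sum_eq_zero
    intro S hS
    exact tval_zero_of_not_tree (not_tree_self (mem_filter.mp hS).2 hss)
  have h2 : G.arrows.powerset.filter (fun S => ¬ a ∈ S) = (G.arrows.erase a).powerset := by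
    ext S
    simp only [mem_filter, mem_powerset, Finset.subset_erase]
  rw [h1, h2, zero_add]

/-! #### Invariance under the second move -/

lemma Z_omega2del {n : ℕ} {I : Finset (Fin n)} {j : Fin n} {G G' : GaussDiagram n}
    (h : Omega2Del G G') : Z I j G = Z I j G' := by
  obtain ⟨a, haG, b, hbG, hab, hts, hhs, hsg, hadjT, hadjH, -, hGE⟩ := h
  -- key : swapping `a` for `b` in a subset negates its contribution
  have key : ∀ (a b : GArrow n), a ∈ G.arrows → b ∈ G.arrows → a ≠ b →
      a.tailStr = b.tailStr → a.headStr = b.headStr → b.sign = -a.sign →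
      IsAdjacentPair G a.tailStr a.tailPos b.tailPos →
      IsAdjacentPair G a.headStr a.headPos b.headPos →
      ∀ S ⊆ G.arrows, a ∈ S → b ∉ S →
      tval I j (insert b (S.erase a)) = - tval I j S := by
    clear hGE hab hts hhs hsg hadjT hadjH haG hbG a b
    intro a b haG hbG hab hts hhs hsg hadjT hadjH S hSG haS hbS
    have hbs : ∀ s : Bool, (b.ep s).1 = (a.ep s).1 := by
      intro s; cases s
      · exact hts.symm
      · exact hhs.symm
    have adj : ∀ t : Bool, IsAdjacentPair G ((a.ep t).1) ((a.ep t).2) ((b.ep t).2) := by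
      intro t; cases t
      · exact hadjT
      · exact hadjH
    have hxy : ∀ s t : Bool, (a.ep s).1 = (a.ep t).1 →
        ((a.ep s).2 < (a.ep t).2 ↔ (b.ep s).2 < (b.ep t).2) := by
      intro s t hstr
      rcases eq_or_ne s t with rfl | hst
      · simp
      · have h1 : (a.ep t).2 < min ((a.ep s).2) ((b.ep s).2) ∨
            max ((a.ep s).2) ((b.ep s).2) < (a.ep t).2 :=
          window_of_adj (adj s) haG t hstr.symm
            (G.pos_ne' haG haG t s (fun hq => hst hq.2.symm) hstr.symm)
            (G.pos_ne' haG hbG t s (fun hq => hab hq.1) (hstr.symm.trans (hbs s).symm))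
        have h2 : (b.ep t).2 < min ((a.ep s).2) ((b.ep s).2) ∨
            max ((a.ep s).2) ((b.ep s).2) < (b.ep t).2 :=
          window_of_adj (adj s) hbG t ((hbs t).trans hstr.symm)
            (G.pos_ne' hbG haG t s (fun hq => hab hq.1.symm) ((hbs t).trans hstr.symm))
            (G.pos_ne' hbG hbG t s (fun hq => hst hq.2.symm) (((hbs t).trans hstr.symm).trans (hbs s).symm))
        have h3 : (a.ep s).2 < min ((a.ep t).2) ((b.ep t).2) ∨
            max ((a.ep t).2) ((b.ep t).2) < (a.ep s).2 :=
          window_of_adj (adj t) haG s hstr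
            (G.pos_ne' haG haG s t (fun hq => hst hq.2) hstr)
            (G.pos_ne' haG hbG s t (fun hq => hab hq.1) (hstr.trans (hbs t).symm))
        exact win_cross_iff h1 h2 h3
    have hR : ∀ r ∈ S.erase a, ∀ s t : Bool, (r.ep s).1 = (a.ep t).1 →
        (((r.ep s).2 < (a.ep t).2 ↔ (r.ep s).2 < (b.ep t).2) ∧
         ((a.ep t).2 < (r.ep s).2 ↔ (b.ep t).2 < (r.ep s).2)) := by
      intro r hr s t hstr
      have hrS := mem_erase.mp hr
      have hrG : r ∈ G.arrows := hSG hrS.2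
      have hrb : r ≠ b := fun h => hbS (h ▸ hrS.2)
      have hw : (r.ep s).2 < min ((a.ep t).2) ((b.ep t).2) ∨
          max ((a.ep t).2) ((b.ep t).2) < (r.ep s).2 :=
        window_of_adj (adj t) hrG s hstr
          (G.pos_ne' hrG haG s t (fun hq => hrS.1 hq.1) hstr)
          (G.pos_ne' hrG hbG s t (fun hq => hrb hq.1) (hstr.trans (hbs t).symm))
      exact win_lt_iff hw
    have hgoal := tval_insert_neg (I := I) (j := j) (x := a) (y := b) (R := S.erase a)
      (notMem_erase a S) (fun h => hbS (mem_of_mem_erase h)) hts.symm hhs.symm hsg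
      hxy hR
    rw [insert_erase haS] at hgoal
    exact hgoal
  rw [Z_eq, Z_eq, hGE]
  rw [← sum_filter_add_sum_filter_not G.arrows.powerset (fun S => a ∈ S ∨ b ∈ S) (tval I j)]
  have hrest : G.arrows.powerset.filter (fun S => ¬(a ∈ S ∨ b ∈ S)) =
      ((G.arrows.erase a).erase b).powerset := by
    ext S
    simp only [mem_filter, mem_powerset, Finset.subset_erase, not_or]
    tauto
  have hz : ∑ S ∈ G.arrows.powerset.filter (fun S => a ∈ S ∨ b ∈ S), tval I j S = 0 := by
    refine Finset.sum_involution
      (fun S _ => if a ∈ S ∧ b ∈ S then S else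
        if a ∈ S then insert b (S.erase a) else insert a (S.erase b)) ?_ ?_ ?_ ?_
    · -- sums to zero
      intro S hS
      have hSsub : S ⊆ G.arrows := mem_powerset.mp (mem_filter.mp hS).1
      by_cases h1 : a ∈ S ∧ b ∈ S
      · rw [if_pos h1]
        have h0 : tval I j S = 0 :=
          tval_zero_of_not_tree (not_tree_two_tails h1.1 h1.2 hab hts)
        rw [h0]; rfl
      · rw [if_neg h1]
        by_cases h2 : a ∈ S
        · rw [if_pos h2]
          have hbS : b ∉ S := fun hb' => h1 ⟨h2, hb'⟩
          rw [key a b haG hbG hab hts hhs (by rw [hsg, neg_neg]) hadjT hadjH S hSsub h2 hbS]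
          ring
        · rw [if_neg h2]
          have hbS : b ∈ S := by
            rcases (mem_filter.mp hS).2 with h' | h'
            · exact absurd h' h2
            · exact h'
          have hadjT' : IsAdjacentPair G b.tailStr b.tailPos a.tailPos := hts ▸ adj_symm hadjT
          have hadjH' : IsAdjacentPair G b.headStr b.headPos a.headPos := hhs ▸ adj_symm hadjH
          rw [key b a hbG haG hab.symm hts.symm hhs.symm hsg hadjT' hadjH' S hSsub hbS h2]
          ring
    · -- g_ne
      intro S hS hne0
      by_cases h1 : a ∈ S ∧ b ∈ S
      · exact absurd (tval_zero_of_not_tree (not_tree_two_tails h1.1 h1.2 hab hts)) hne0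
      · rw [if_neg h1]
        by_cases h2 : a ∈ S
        · rw [if_pos h2]
          intro hcon
          exact h1 ⟨h2, hcon ▸ mem_insert_self b (S.erase a)⟩
        · rw [if_neg h2]
          intro hcon
          exact h2 (hcon ▸ mem_insert_self a (S.erase b))
    · -- g_mem
      intro S hS
      have hSsub : S ⊆ G.arrows := mem_powerset.mp (mem_filter.mp hS).1
      by_cases h1 : a ∈ S ∧ b ∈ S
      · rw [if_pos h1]; exact hS
      · rw [if_neg h1]
        by_cases h2 : a ∈ S
        · rw [if_pos h2]
          refine mem_filter.mpr ⟨mem_powerset.mpr ?_, Or.inr (mem_insert_self _ _)⟩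
          exact insert_subset hbG ((erase_subset a S).trans hSsub)
        · rw [if_neg h2]
          refine mem_filter.mpr ⟨mem_powerset.mpr ?_, Or.inl (mem_insert_self _ _)⟩
          exact insert_subset haG ((erase_subset b S).trans hSsub)
    · -- g_inv
      intro S hS
      by_cases h1 : a ∈ S ∧ b ∈ S
      · rw [if_pos h1, if_pos h1]
      · rw [if_neg h1]
        by_cases h2 : a ∈ S
        · rw [if_pos h2]
          have hbS : b ∉ S := fun hb' => h1 ⟨h2, hb'⟩
          have hbnea : b ∉ S.erase a := fun h' => hbS (mem_of_mem_erase h')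
          have hanotin : a ∉ insert b (S.erase a) := by
            rw [mem_insert]
            rintro (rfl | h')
            · exact hab rfl
            · exact (notMem_erase a S) h'
          rw [if_neg (fun hc => hanotin hc.1), if_neg hanotin, erase_insert hbnea,
            insert_erase h2]
        · rw [if_neg h2]
          have hbS : b ∈ S := by
            rcases (mem_filter.mp hS).2 with h' | h'
            · exact absurd h' h2
            · exact h'
          have haneb : a ∉ S.erase b := fun h' => h2 (mem_of_mem_erase h')
          have hbin : b ∉ insert a (S.erase b) := by
            rw [mem_insert]
            rintro (rfl | h')
            · exact hab rfl
            · exact (notMem_erase b S) h'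
          have hain : a ∈ insert a (S.erase b) := mem_insert_self _ _
          rw [if_neg (fun hc => hbin hc.2), if_pos hain, erase_insert haneb,
            insert_erase hbS]
  rw [hz, hrest, zero_add]


/-! #### Rooted tree facts -/

lemma parent_unique {n : ℕ} {I : Finset (Fin n)} {j : Fin n} {S : Finset (GArrow n)}
    (hT : IsTreeDiagram I j S) {s s' t : Fin n} (h1 : ParentRel S s t) (h2 : ParentRel S s' t) :
    s = s' := by
  obtain ⟨a, ha, hat, hah⟩ := h1
  obtain ⟨b, hb, hbt, hbh⟩ := h2
  obtain ⟨c, -, hc⟩ := hT.2.1 t (hat ▸ hT.2.2.1 a ha)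
  have hac : a = c := hc a ⟨ha, hat⟩
  have hbc : b = c := hc b ⟨hb, hbt⟩
  rw [← hah, ← hbh, hac, hbc]

lemma no_parent_of_trunk {n : ℕ} {I : Finset (Fin n)} {j : Fin n} {S : Finset (GArrow n)}
    (hT : IsTreeDiagram I j S) (hj : j ∉ I) : ∀ s, ¬ ParentRel S s j := by
  rintro s ⟨a, ha, hat, -⟩
  exact hj (hat ▸ hT.2.2.1 a ha)

lemma cycle_up {n : ℕ} {I : Finset (Fin n)} {j : Fin n} {S : Finset (GArrow n)}
    (hT : IsTreeDiagram I j S) {x y : Fin n}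
    (hxy : Relation.TransGen (ParentRel S) x y)
    (hy : Relation.TransGen (ParentRel S) y y) :
    Relation.TransGen (ParentRel S) x x := by
  induction hxy using Relation.TransGen.head_induction_on with
  | single h =>
      obtain ⟨c, hc1, hc2⟩ := Relation.TransGen.tail'_iff.mp hy
      have hca := parent_unique hT hc2 h
      rw [hca] at hc1
      rcases Relation.reflTransGen_iff_eq_or_transGen.mp hc1 with h' | h'
      · rw [← h'] at h
        exact Relation.TransGen.single h
      · exact Relation.TransGen.head h h'
  | head h1 h2 ih =>
      have hcc := ih
      obtain ⟨d, hd1, hd2⟩ := Relation.TransGen.tail'_iff.mp hcc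
      have hda := parent_unique hT hd2 h1
      rw [hda] at hd1
      exact Relation.TransGen.head' h1 hd1

lemma desc_antisymm {n : ℕ} {I : Finset (Fin n)} {j : Fin n} {S : Finset (GArrow n)}
    (hT : IsTreeDiagram I j S) (hj : j ∉ I)
    (hreach : ∀ i ∈ I, Relation.TransGen (ParentRel S) j i) {a b : Fin n}
    (h1 : Descends S a b) (h2 : Descends S b a) : a = b := by
  by_contra hne
  have h1' : Relation.TransGen (ParentRel S) a b :=
    (Relation.reflTransGen_iff_eq_or_transGen.mp h1).resolve_left (fun h => hne h.symm)
  have h2' : Relation.TransGen (ParentRel S) b a :=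
    (Relation.reflTransGen_iff_eq_or_transGen.mp h2).resolve_left (fun h => hne h)
  have hcyc : Relation.TransGen (ParentRel S) a a := h1'.trans h2'
  obtain ⟨c, -, hc⟩ := Relation.TransGen.tail'_iff.mp hcyc
  have haI : a ∈ I := by
    obtain ⟨ar, har, hat, -⟩ := hc
    exact hat ▸ hT.2.2.1 ar har
  have hcj : Relation.TransGen (ParentRel S) j j := cycle_up hT (hreach a haI) hcyc
  obtain ⟨d, -, hd⟩ := Relation.TransGen.tail'_iff.mp hcj
  exact no_parent_of_trunk hT hj d hd

lemma desc_antisymm' {n : ℕ} {I : Finset (Fin n)} {j : Fin n} {S : Finset (GArrow n)}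
    (hpl : IsPlanarTreeDiagram I j S) (hj : j ∉ I) {a b : Fin n}
    (h1 : Descends S a b) (h2 : Descends S b a) : a = b :=
  desc_antisymm hpl.1 hj hpl.2.1 h1 h2

lemma descends_of_edges {n : ℕ} {S S' : Finset (GArrow n)}
    (h : ∀ s t, ParentRel S s t → Descends S' s t) {a b : Fin n} (hab : Descends S a b) :
    Descends S' a b := by
  induction hab with
  | refl => exact Relation.ReflTransGen.refl
  | tail h1 h2 ih => exact ih.trans (h _ _ h2)

lemma reach_of_edges {n : ℕ} {S S' : Finset (GArrow n)}
    (h : ∀ s t, ParentRel S s t → Descends S' s t) {a b : Fin n} (hne : a ≠ b)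
    (hab : Relation.TransGen (ParentRel S) a b) :
    Relation.TransGen (ParentRel S') a b := by
  have := descends_of_edges h hab.to_reflTransGen
  exact (Relation.reflTransGen_iff_eq_or_transGen.mp this).resolve_left (fun h' => hne h'.symm)

lemma descends_to_of_unique_parent {n : ℕ} {S : Finset (GArrow n)} {M T : Fin n}
    (hu : ∀ c, ParentRel S c M → c = T) {a : Fin n} (h : Descends S a M) :
    a = M ∨ Descends S a T := by
  rcases Relation.ReflTransGen.cases_tail h with h' | ⟨c, hc1, hc2⟩
  · exact Or.inl h'.symm
  · exact Or.inr ((hu c hc2) ▸ hc1)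

/-! #### Window membership helpers -/

lemma win_pair_iff {p x y u v : ℚ} (hw : p < min u v ∨ max u v < p)
    (hx : x = u ∨ x = v) (hy : y = u ∨ y = v) :
    (p < x ↔ p < y) ∧ (x < p ↔ y < p) := by
  have h := win_lt_iff hw
  rcases hx with rfl | rfl <;> rcases hy with rfl | rfl
  · exact ⟨Iff.rfl, Iff.rfl⟩
  · exact h
  · exact ⟨h.1.symm, h.2.symm⟩
  · exact ⟨Iff.rfl, Iff.rfl⟩

lemma pos_not_window {x u v : ℚ} (hx : x = u ∨ x = v) :
    ¬(x < min u v ∨ max u v < x) := by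
  rintro (h | h)
  · rcases hx with hx | hx <;> rw [hx] at h
    · exact absurd (min_le_left u v) (not_le.mpr h)
    · exact absurd (min_le_right u v) (not_le.mpr h)
  · rcases hx with hx | hx <;> rw [hx] at h
    · exact absurd (le_max_left u v) (not_le.mpr h)
    · exact absurd (le_max_right u v) (not_le.mpr h)


/-! #### The exchange move for the third Reidemeister move -/

section Exchange

variable {n : ℕ} {I : Finset (Fin n)} {j : Fin n} {E M T : Fin n}
  {e1 e2 m1 m2 t1 t2 : ℚ} {R : Finset (GArrow n)} {sA sB sC : ℤ}

/-- From a planar chain configuration, the two lower arrows are ordered. -/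
lemma chain_order {eC mC mD tD : ℚ}
    (hpl : IsPlanarTreeDiagram I j
      (insert ⟨E, eC, M, mC, sC⟩ (insert ⟨M, mD, T, tD, sB⟩ R))) :
    mC < mD :=
  hpl.1.2.2.2.2 ⟨E, eC, M, mC, sC⟩ (mem_insert_self _ _) ⟨M, mD, T, tD, sB⟩
    (mem_insert_of_mem (mem_insert_self _ _)) rfl

/-- From a planar chain configuration, `E` and `M` lie on the same side of `T`. -/
lemma chain_side {eC mC mD tD : ℚ}
    (hpl : IsPlanarTreeDiagram I j
      (insert ⟨E, eC, M, mC, sC⟩ (insert ⟨M, mD, T, tD, sB⟩ R))) :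
    (M < T ↔ E < T) :=
  hpl.2.2.1 ⟨M, mD, T, tD, sB⟩ (mem_insert_of_mem (mem_insert_self _ _)) E
    (Relation.ReflTransGen.single ⟨⟨E, eC, M, mC, sC⟩, mem_insert_self _ _, rfl, rfl⟩)

/-- From a planar sibling configuration on the same side, the order of the two
heads on `T` is determined by the relative position of the strings. -/
lemma sib_order {eS tS mS tS' : ℚ}
    (hside : E < T ↔ M < T) (htne : tS ≠ tS')
    (hpl : IsPlanarTreeDiagram I j
      (insert ⟨E, eS, T, tS, sA⟩ (insert ⟨M, mS, T, tS', sB⟩ R))) :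
    ((tS < tS') ↔ ((E < M) ↔ ¬(E < T))) := by
  have hAm : (⟨E, eS, T, tS, sA⟩ : GArrow n) ∈
      insert ⟨E, eS, T, tS, sA⟩ (insert ⟨M, mS, T, tS', sB⟩ R) := mem_insert_self _ _
  have hBm : (⟨M, mS, T, tS', sB⟩ : GArrow n) ∈
      insert ⟨E, eS, T, tS, sA⟩ (insert ⟨M, mS, T, tS', sB⟩ R) :=
    mem_insert_of_mem (mem_insert_self _ _)
  have hET : E ≠ T := hpl.1.1 _ hAm
  have hMT : M ≠ T := hpl.1.1 _ hBm
  have hEM : E ≠ M := by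
    intro h
    refine not_tree_two_tails (I := I) (j := j) hAm hBm ?_ h hpl.1
    intro hc
    exact htne (congrArg GArrow.headPos hc)
  have hdE : Descends (insert ⟨E, eS, T, tS, sA⟩ (insert ⟨M, mS, T, tS', sB⟩ R)) E E :=
    Relation.ReflTransGen.refl
  have hdM : Descends (insert ⟨E, eS, T, tS, sA⟩ (insert ⟨M, mS, T, tS', sB⟩ R)) M M :=
    Relation.ReflTransGen.refl
  rcases lt_or_gt_of_ne htne with ho | ho
  · have hp := hpl.2.2.2 _ hAm _ hBm rfl ho E M hdE hdM
    refine iff_of_true ho ?_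
    by_cases hETlt : E < T
    · have hME : M < E := hp.1 hETlt (hside.mp hETlt)
      constructor
      · intro hEMlt; exact absurd hEMlt (asymm hME)
      · intro hnET; exact absurd hETlt hnET
    · have hTE : T < E := (lt_or_gt_of_ne hET).resolve_left hETlt
      have hTM : T < M := by
        rcases lt_or_gt_of_ne hMT with h' | h'
        · exact absurd (hside.mpr h') hETlt
        · exact h'
      exact ⟨fun _ => hETlt, fun _ => hp.2 hTE hTM⟩
  · have hp := hpl.2.2.2 _ hBm _ hAm rfl ho M E hdM hdE
    refine iff_of_false (asymm ho) ?_
    intro hPO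
    by_cases hETlt : E < T
    · have hEMlt : E < M := hp.1 (hside.mp hETlt) hETlt
      exact (hPO.mp hEMlt) hETlt
    · have hTE : T < E := (lt_or_gt_of_ne hET).resolve_left hETlt
      have hTM : T < M := by
        rcases lt_or_gt_of_ne hMT with h' | h'
        · exact absurd (hside.mpr h') hETlt
        · exact h'
      have hME : M < E := hp.2 hTM hTE
      exact absurd (hPO.mpr hETlt) (asymm hME)

/-- From a planar sibling configuration on the same side, the two subtrees are
completely ordered. -/
lemma sib_ord_full {eS tS mS tS' : ℚ}
    (hside : E < T ↔ M < T) (htne : tS ≠ tS')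
    (hpl : IsPlanarTreeDiagram I j
      (insert ⟨E, eS, T, tS, sA⟩ (insert ⟨M, mS, T, tS', sB⟩ R))) :
    (∀ k k', Descends (insert ⟨E, eS, T, tS, sA⟩ (insert ⟨M, mS, T, tS', sB⟩ R)) E k →
        Descends (insert ⟨E, eS, T, tS, sA⟩ (insert ⟨M, mS, T, tS', sB⟩ R)) M k' → k < k') ∨
    (∀ k k', Descends (insert ⟨E, eS, T, tS, sA⟩ (insert ⟨M, mS, T, tS', sB⟩ R)) E k →
        Descends (insert ⟨E, eS, T, tS, sA⟩ (insert ⟨M, mS, T, tS', sB⟩ R)) M k' → k' < k) := by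
  have hAm : (⟨E, eS, T, tS, sA⟩ : GArrow n) ∈
      insert ⟨E, eS, T, tS, sA⟩ (insert ⟨M, mS, T, tS', sB⟩ R) := mem_insert_self _ _
  have hBm : (⟨M, mS, T, tS', sB⟩ : GArrow n) ∈
      insert ⟨E, eS, T, tS, sA⟩ (insert ⟨M, mS, T, tS', sB⟩ R) :=
    mem_insert_of_mem (mem_insert_self _ _)
  have hET : E ≠ T := hpl.1.1 _ hAm
  have hMT : M ≠ T := hpl.1.1 _ hBm
  by_cases hETlt : E < T
  · have hMTlt : M < T := hside.mp hETlt
    rcases lt_or_gt_of_ne htne with ho | ho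
    · exact Or.inr (fun k k' hk hk' => (hpl.2.2.2 _ hAm _ hBm rfl ho k k' hk hk').1 hETlt hMTlt)
    · exact Or.inl (fun k k' hk hk' => (hpl.2.2.2 _ hBm _ hAm rfl ho k' k hk' hk).1 hMTlt hETlt)
  · have hTE : T < E := (lt_or_gt_of_ne hET).resolve_left hETlt
    have hTM : T < M := by
      rcases lt_or_gt_of_ne hMT with h' | h'
      · exact absurd (hside.mpr h') hETlt
      · exact h'
    rcases lt_or_gt_of_ne htne with ho | ho
    · exact Or.inl (fun k k' hk hk' => (hpl.2.2.2 _ hAm _ hBm rfl ho k k' hk hk').2 hTE hTM)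
    · exact Or.inr (fun k k' hk hk' => (hpl.2.2.2 _ hBm _ hAm rfl ho k' k hk' hk).2 hTM hTE)

/-- If the two sibling configurations with opposite head orders are both
planar, then `E` and `M` lie on opposite sides of `T`. -/
lemma sib_both {eS tS mS tS' eS2 mS2 : ℚ} (htne : tS ≠ tS')
    (h1 : IsPlanarTreeDiagram I j
      (insert ⟨E, eS, T, tS, sA⟩ (insert ⟨M, mS, T, tS', sB⟩ R)))
    (h2 : IsPlanarTreeDiagram I j
      (insert ⟨E, eS2, T, tS', sA⟩ (insert ⟨M, mS2, T, tS, sB⟩ R))) :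
    ¬(E < T ↔ M < T) := by
  intro hside
  have o1 := sib_order hside htne h1
  have o2 := sib_order hside (Ne.symm htne) h2
  rcases lt_or_gt_of_ne htne with ho | ho
  · exact absurd (o2.mpr (o1.mp ho)) (asymm ho)
  · exact absurd (o1.mpr (o2.mp ho)) (asymm ho)


/-- Transfer planarity from a sibling configuration to a chain configuration. -/
lemma sib_to_chain {eS tS mS tS' eC mC mD tD : ℚ}
    (hjI : j ∉ I) (hEM : E ≠ M) (hMT : M ≠ T) (hET : E ≠ T)
    (hWE : ∀ r ∈ R, ∀ s : Bool, (r.ep s).1 = E →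
      ((r.ep s).2 < min e1 e2 ∨ max e1 e2 < (r.ep s).2))
    (hWM : ∀ r ∈ R, ∀ s : Bool, (r.ep s).1 = M →
      ((r.ep s).2 < min m1 m2 ∨ max m1 m2 < (r.ep s).2))
    (hWT : ∀ r ∈ R, ∀ s : Bool, (r.ep s).1 = T →
      ((r.ep s).2 < min t1 t2 ∨ max t1 t2 < (r.ep s).2))
    (heS : eS = e1 ∨ eS = e2) (heC : eC = e1 ∨ eC = e2)
    (hmS : mS = m1 ∨ mS = m2) (hmC : mC = m1 ∨ mC = m2) (hmD : mD = m1 ∨ mD = m2)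
    (htS : tS = t1 ∨ tS = t2) (htS' : tS' = t1 ∨ tS' = t2) (htD : tD = t1 ∨ tD = t2)
    (hq : mC < mD)
    (hside : E < T ↔ M < T)
    (hpl : IsPlanarTreeDiagram I j
      (insert ⟨E, eS, T, tS, sA⟩ (insert ⟨M, mS, T, tS', sB⟩ R)))
    (hOrd : (∀ k k', Descends (insert ⟨E, eS, T, tS, sA⟩ (insert ⟨M, mS, T, tS', sB⟩ R)) E k →
        Descends (insert ⟨E, eS, T, tS, sA⟩ (insert ⟨M, mS, T, tS', sB⟩ R)) M k' → k < k') ∨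
      (∀ k k', Descends (insert ⟨E, eS, T, tS, sA⟩ (insert ⟨M, mS, T, tS', sB⟩ R)) E k →
        Descends (insert ⟨E, eS, T, tS, sA⟩ (insert ⟨M, mS, T, tS', sB⟩ R)) M k' → k' < k)) :
    IsPlanarTreeDiagram I j
      (insert ⟨E, eC, M, mC, sC⟩ (insert ⟨M, mD, T, tD, sB⟩ R)) := by
  set Ss := insert (⟨E, eS, T, tS, sA⟩ : GArrow n) (insert ⟨M, mS, T, tS', sB⟩ R) with hSs
  set Sc := insert (⟨E, eC, M, mC, sC⟩ : GArrow n) (insert ⟨M, mD, T, tD, sB⟩ R) with hSc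
  have hAm : (⟨E, eS, T, tS, sA⟩ : GArrow n) ∈ Ss := mem_insert_self _ _
  have hBm : (⟨M, mS, T, tS', sB⟩ : GArrow n) ∈ Ss := mem_insert_of_mem (mem_insert_self _ _)
  have hCm : (⟨E, eC, M, mC, sC⟩ : GArrow n) ∈ Sc := mem_insert_self _ _
  have hDm : (⟨M, mD, T, tD, sB⟩ : GArrow n) ∈ Sc := mem_insert_of_mem (mem_insert_self _ _)
  have hRs : ∀ r ∈ R, r ∈ Ss := fun r hr => mem_insert_of_mem (mem_insert_of_mem hr)
  have hRc : ∀ r ∈ R, r ∈ Sc := fun r hr => mem_insert_of_mem (mem_insert_of_mem hr)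
  obtain ⟨⟨c1, c2, c3, c4, c5⟩, hreach, hside3, hpair4⟩ := hpl
  have htree : IsTreeDiagram I j Ss := ⟨c1, c2, c3, c4, c5⟩
  have hfEI : E ∈ I := c3 _ hAm
  have hfMI : M ∈ I := c3 _ hBm
  have hfT : T ∈ I ∨ T = j := c4 _ hAm
  have hAR : (⟨E, eS, T, tS, sA⟩ : GArrow n) ∉ R := fun hr =>
    pos_not_window htS (hWT _ hr true rfl)
  have hRtE : ∀ r ∈ R, r.tailStr ≠ E := by
    intro r hr hre
    obtain ⟨c, -, hc⟩ := c2 E hfEI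
    have h1 : r = c := hc r ⟨hRs r hr, hre⟩
    have h2 : (⟨E, eS, T, tS, sA⟩ : GArrow n) = c := hc _ ⟨hAm, rfl⟩
    exact hAR ((h1.trans h2.symm) ▸ hr)
  have hBR : (⟨M, mS, T, tS', sB⟩ : GArrow n) ∉ R := fun hr =>
    pos_not_window htS' (hWT _ hr true rfl)
  have hRtM : ∀ r ∈ R, r.tailStr ≠ M := by
    intro r hr hre
    obtain ⟨c, -, hc⟩ := c2 M hfMI
    have h1 : r = c := hc r ⟨hRs r hr, hre⟩
    have h2 : (⟨M, mS, T, tS', sB⟩ : GArrow n) = c := hc _ ⟨hBm, rfl⟩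
    exact hBR ((h1.trans h2.symm) ▸ hr)
  have hwE : ∀ r ∈ R, ∀ s : Bool, (r.ep s).1 = E → ∀ {x y : ℚ},
      (x = e1 ∨ x = e2) → (y = e1 ∨ y = e2) →
      (((r.ep s).2 < x ↔ (r.ep s).2 < y) ∧ (x < (r.ep s).2 ↔ y < (r.ep s).2)) :=
    fun r hr s h _ _ hx hy => win_pair_iff (hWE r hr s h) hx hy
  have hwM : ∀ r ∈ R, ∀ s : Bool, (r.ep s).1 = M → ∀ {x y : ℚ},
      (x = m1 ∨ x = m2) → (y = m1 ∨ y = m2) →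
      (((r.ep s).2 < x ↔ (r.ep s).2 < y) ∧ (x < (r.ep s).2 ↔ y < (r.ep s).2)) :=
    fun r hr s h _ _ hx hy => win_pair_iff (hWM r hr s h) hx hy
  have hwT : ∀ r ∈ R, ∀ s : Bool, (r.ep s).1 = T → ∀ {x y : ℚ},
      (x = t1 ∨ x = t2) → (y = t1 ∨ y = t2) →
      (((r.ep s).2 < x ↔ (r.ep s).2 < y) ∧ (x < (r.ep s).2 ↔ y < (r.ep s).2)) :=
    fun r hr s h _ _ hx hy => win_pair_iff (hWT r hr s h) hx hy
  have hPRs : ∀ s t, ParentRel Ss s t ↔ ((T = s ∧ E = t) ∨ ((T = s ∧ M = t) ∨ ParentRel R s t)) := by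
    intro s t
    rw [hSs, parentRel_insert, parentRel_insert]
  have hPRc : ∀ s t, ParentRel Sc s t ↔ ((M = s ∧ E = t) ∨ ((T = s ∧ M = t) ∨ ParentRel R s t)) := by
    intro s t
    rw [hSc, parentRel_insert, parentRel_insert]
  have hRsubS : ∀ s t, ParentRel R s t → ParentRel Ss s t := by
    rintro s t ⟨r, hr, h1, h2⟩
    exact ⟨r, hRs r hr, h1, h2⟩
  have hRsubC : ∀ s t, ParentRel R s t → ParentRel Sc s t := by
    rintro s t ⟨r, hr, h1, h2⟩
    exact ⟨r, hRc r hr, h1, h2⟩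
  have hPRcTM : ParentRel Sc T M := ⟨⟨M, mD, T, tD, sB⟩, hDm, rfl, rfl⟩
  have hPRcME : ParentRel Sc M E := ⟨⟨E, eC, M, mC, sC⟩, hCm, rfl, rfl⟩
  have hPRsTE : ParentRel Ss T E := ⟨⟨E, eS, T, tS, sA⟩, hAm, rfl, rfl⟩
  have hPRsTM : ParentRel Ss T M := ⟨⟨M, mS, T, tS', sB⟩, hBm, rfl, rfl⟩
  have hedge : ∀ s t, ParentRel Ss s t → Descends Sc s t := by
    intro s t hst
    rcases (hPRs s t).mp hst with ⟨rfl, rfl⟩ | ⟨rfl, rfl⟩ | h'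
    · exact Relation.ReflTransGen.tail (Relation.ReflTransGen.single hPRcTM) hPRcME
    · exact Relation.ReflTransGen.single hPRcTM
    · exact Relation.ReflTransGen.single (hRsubC _ _ h')
  have U1 : ∀ a b, Descends Ss a b → Descends Sc a b := fun a b h =>
    descends_of_edges hedge h
  have U2 : ∀ a b, Descends Sc a b → Descends Ss a b ∨ (Descends Ss a M ∧ Descends Ss E b) := by
    intro a b h
    induction h with
    | refl => exact Or.inl Relation.ReflTransGen.refl
    | tail h1 h2 ih =>
      rcases (hPRc _ _).mp h2 with ⟨rfl, rfl⟩ | ⟨rfl, rfl⟩ | h2'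
      · rcases ih with ih | ⟨ih1, -⟩
        · exact Or.inr ⟨ih, Relation.ReflTransGen.refl⟩
        · exact Or.inr ⟨ih1, Relation.ReflTransGen.refl⟩
      · rcases ih with ih | ⟨ih1, ih2⟩
        · exact Or.inl (ih.tail hPRsTM)
        · exact Or.inr ⟨ih1, ih2.tail hPRsTM⟩
      · rcases ih with ih | ⟨ih1, ih2⟩
        · exact Or.inl (ih.tail (hRsubS _ _ h2'))
        · exact Or.inr ⟨ih1, ih2.tail (hRsubS _ _ h2')⟩
  have hMup : ∀ a, Descends Ss a M → a = M ∨ Descends Ss a T := by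
    intro a h
    refine descends_to_of_unique_parent ?_ h
    intro c hc
    rcases (hPRs c M).mp hc with ⟨rfl, h'⟩ | ⟨rfl, -⟩ | ⟨r, hr, h1, -⟩
    · exact absurd h' hEM
    · rfl
    · exact absurd h1 (hRtM r hr)
  have hdescE : ∀ k, Descends Sc E k → Descends Ss E k := by
    intro k h
    rcases U2 E k h with h' | ⟨h1, h2⟩
    · exact h'
    · rcases hMup E h1 with h'' | h''
      · exact absurd h'' hEM
      · exact absurd (desc_antisymm htree hjI hreach h''
          (Relation.ReflTransGen.single hPRsTE)) hET
  have hdescR : ∀ r ∈ R, ∀ k, Descends Sc r.tailStr k → Descends Ss r.tailStr k := by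
    intro r hr k h
    rcases U2 _ _ h with h' | ⟨h1, h2⟩
    · exact h'
    · rcases hMup _ h1 with h'' | h''
      · exact absurd h'' (hRtM r hr)
      · exact (h''.tail hPRsTE).trans h2
  have hdescM : ∀ k, Descends Sc M k → Descends Ss M k ∨ Descends Ss E k := by
    intro k h
    rcases U2 _ _ h with h' | ⟨-, h2⟩
    · exact Or.inl h'
    · exact Or.inr h2
  have hordEM : ∀ k k', Descends Ss E k → Descends Ss M k' →
      ((E < M → k < k') ∧ (M < E → k' < k)) := by
    rcases hOrd with hO | hO <;> intro k k' hk hk'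
    · exact ⟨fun _ => hO k k' hk hk',
        fun hME => absurd (hO E M Relation.ReflTransGen.refl Relation.ReflTransGen.refl)
          (asymm hME)⟩
    · exact ⟨fun hEM' => absurd (hO E M Relation.ReflTransGen.refl Relation.ReflTransGen.refl)
          (asymm hEM'), fun _ => hO k k' hk hk'⟩
  have hside' : T < M ↔ T < E := by
    constructor
    · intro h
      rcases lt_or_gt_of_ne hET with h' | h'
      · exact absurd (hside.mp h') (asymm h)
      · exact h'
    · intro h
      rcases lt_or_gt_of_ne hMT with h' | h'
      · exact absurd (hside.mpr h') (asymm h)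
      · exact h'
  refine ⟨⟨?_, ?_, ?_, ?_, ?_⟩, ?_, ?_, ?_⟩
  · -- no arrow joins a string to itself
    intro a ha
    rcases mem_insert_cases ha with rfl | ha
    · exact hEM
    rcases mem_insert_cases ha with rfl | ha
    · exact hMT
    · exact c1 a (hRs a ha)
  · -- unique tails
    intro i hi
    by_cases hiE : i = E
    · refine ⟨⟨E, eC, M, mC, sC⟩, ⟨hCm, hiE.symm⟩, ?_⟩
      rintro b ⟨hb, hbt⟩
      rcases mem_insert_cases hb with rfl | hb
      · rfl
      rcases mem_insert_cases hb with rfl | hb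
      · exact absurd (hbt.trans hiE) (Ne.symm hEM)
      · exact absurd (hbt.trans hiE) (hRtE b hb)
    by_cases hiM : i = M
    · refine ⟨⟨M, mD, T, tD, sB⟩, ⟨hDm, hiM.symm⟩, ?_⟩
      rintro b ⟨hb, hbt⟩
      rcases mem_insert_cases hb with rfl | hb
      · exact absurd (hbt.trans hiM) hEM
      rcases mem_insert_cases hb with rfl | hb
      · rfl
      · exact absurd (hbt.trans hiM) (hRtM b hb)
    · obtain ⟨c, ⟨hcm, hct⟩, hc⟩ := c2 i hi
      rcases mem_insert_cases hcm with rfl | hcm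
      · exact absurd hct.symm hiE
      rcases mem_insert_cases hcm with rfl | hcm
      · exact absurd hct.symm hiM
      · refine ⟨c, ⟨hRc c hcm, hct⟩, ?_⟩
        rintro b ⟨hb, hbt⟩
        rcases mem_insert_cases hb with rfl | hb
        · exact absurd hbt.symm hiE
        rcases mem_insert_cases hb with rfl | hb
        · exact absurd hbt.symm hiM
        · exact hc b ⟨hRs b hb, hbt⟩
  · -- tails in I
    intro a ha
    rcases mem_insert_cases ha with rfl | ha
    · exact hfEI
    rcases mem_insert_cases ha with rfl | ha
    · exact hfMI
    · exact c3 a (hRs a ha)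
  · -- heads in I ∪ {j}
    intro a ha
    rcases mem_insert_cases ha with rfl | ha
    · exact Or.inl hfMI
    rcases mem_insert_cases ha with rfl | ha
    · exact hfT
    · exact c4 a (hRs a ha)
  · -- heads precede tails
    intro a ha b hb hab
    rcases mem_insert_cases ha with rfl | ha
    · rcases mem_insert_cases hb with rfl | hb
      · exact absurd hab (Ne.symm hEM)
      rcases mem_insert_cases hb with rfl | hb
      · exact hq
      · exact absurd hab.symm (hRtM b hb)
    rcases mem_insert_cases ha with rfl | ha
    · rcases mem_insert_cases hb with rfl | hb
      · exact absurd hab.symm hET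
      rcases mem_insert_cases hb with rfl | hb
      · exact absurd hab.symm hMT
      · exact ((hwT b hb false hab.symm htD htS).2).mpr (c5 _ hAm b (hRs b hb) hab)
    · rcases mem_insert_cases hb with rfl | hb
      · exact ((hwE a ha true hab heS heC).1).mp (c5 a (hRs a ha) _ hAm hab)
      rcases mem_insert_cases hb with rfl | hb
      · exact ((hwM a ha true hab hmS hmD).1).mp (c5 a (hRs a ha) _ hBm hab)
      · exact c5 a (hRs a ha) b (hRs b hb) hab
  · -- reachability
    intro i hi
    refine reach_of_edges hedge (fun h => hjI (by rw [h]; exact hi)) (hreach i hi)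
  · -- one-sidedness of subtrees
    intro a ha k hk
    rcases mem_insert_cases ha with rfl | ha
    · have hk' := hdescE k hk
      rcases lt_or_gt_of_ne hEM with h | h
      · exact ⟨fun _ => (hordEM k M hk' Relation.ReflTransGen.refl).1 h, fun _ => h⟩
      · constructor
        · intro h'; exact absurd h' (asymm h)
        · intro h'; exact absurd h' (asymm ((hordEM k M hk' Relation.ReflTransGen.refl).2 h))
    rcases mem_insert_cases ha with rfl | ha
    · rcases hdescM k hk with hk' | hk'
      · exact hside3 _ hBm k hk'
      · exact hside.symm.trans (hside3 _ hAm k hk')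
    · exact hside3 a (hRs a ha) k (hdescR a ha k hk)
  · -- ordering of subtrees attached to a common string
    intro a ha b hb hH hP k k' hk hk'
    rcases mem_insert_cases ha with rfl | ha
    · rcases mem_insert_cases hb with rfl | hb
      · exact absurd hP (lt_irrefl _)
      rcases mem_insert_cases hb with rfl | hb
      · exact absurd hH hMT
      · -- (C, r) : contradiction
        have h5' := c5 b (hRs b hb) _ hBm hH.symm
        have hlt : b.headPos < mC := ((hwM b hb true hH.symm hmS hmC).1).mp h5'
        exact absurd hP (asymm hlt)
    rcases mem_insert_cases ha with rfl | ha
    · rcases mem_insert_cases hb with rfl | hb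
      · exact absurd hH.symm hMT
      rcases mem_insert_cases hb with rfl | hb
      · exact absurd hP (lt_irrefl _)
      · -- (D, r)
        have hPS : tS < b.headPos := ((hwT b hb true hH.symm htD htS).2).mp hP
        have hPS' : tS' < b.headPos := ((hwT b hb true hH.symm htD htS').2).mp hP
        have hk'' := hdescR b hb k' hk'
        constructor
        · intro h1 h2
          rcases hdescM k hk with hkM | hkE
          · exact (hpair4 _ hBm b (hRs b hb) hH hPS' k k' hkM hk'').1 h1 h2
          · exact (hpair4 _ hAm b (hRs b hb) hH hPS k k' hkE hk'').1 (hside.mpr h1) h2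
        · intro h1 h2
          rcases hdescM k hk with hkM | hkE
          · exact (hpair4 _ hBm b (hRs b hb) hH hPS' k k' hkM hk'').2 h1 h2
          · exact (hpair4 _ hAm b (hRs b hb) hH hPS k k' hkE hk'').2 (hside'.mp h1) h2
    · rcases mem_insert_cases hb with rfl | hb
      · -- (r, C)
        have hkr := hdescR a ha k hk
        have hk'E := hdescE k' hk'
        have hkM : Descends Ss M k :=
          Relation.ReflTransGen.head ⟨a, hRs a ha, rfl, hH⟩ hkr
        exact ⟨fun _ h2 => (hordEM k' k hk'E hkM).1 h2,
          fun _ h2 => (hordEM k' k hk'E hkM).2 h2⟩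
      rcases mem_insert_cases hb with rfl | hb
      · -- (r, D)
        have hPS : a.headPos < tS := ((hwT a ha true hH htD htS).1).mp hP
        have hPS' : a.headPos < tS' := ((hwT a ha true hH htD htS').1).mp hP
        have hkr := hdescR a ha k hk
        constructor
        · intro h1 h2
          rcases hdescM k' hk' with hk'M | hk'E
          · exact (hpair4 a (hRs a ha) _ hBm hH hPS' k k' hkr hk'M).1 h1 h2
          · exact (hpair4 a (hRs a ha) _ hAm hH hPS k k' hkr hk'E).1 h1 (hside.mpr h2)
        · intro h1 h2
          rcases hdescM k' hk' with hk'M | hk'E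
          · exact (hpair4 a (hRs a ha) _ hBm hH hPS' k k' hkr hk'M).2 h1 h2
          · exact (hpair4 a (hRs a ha) _ hAm hH hPS k k' hkr hk'E).2 h1 (hside'.mp h2)
      · exact hpair4 a (hRs a ha) b (hRs b hb) hH hP k k'
          (hdescR a ha k hk) (hdescR b hb k' hk')


/-- Transfer planarity from a chain configuration to a sibling configuration:
given a planar chain, a sibling configuration is planar if and only if the
order of its two heads on `T` matches the relative position of the strings. -/
lemma chain_to_sib {eS tS mS tS' eC mC mD tD : ℚ}
    (hjI : j ∉ I) (hEM : E ≠ M) (hMT : M ≠ T) (hET : E ≠ T)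
    (hWE : ∀ r ∈ R, ∀ s : Bool, (r.ep s).1 = E →
      ((r.ep s).2 < min e1 e2 ∨ max e1 e2 < (r.ep s).2))
    (hWM : ∀ r ∈ R, ∀ s : Bool, (r.ep s).1 = M →
      ((r.ep s).2 < min m1 m2 ∨ max m1 m2 < (r.ep s).2))
    (hWT : ∀ r ∈ R, ∀ s : Bool, (r.ep s).1 = T →
      ((r.ep s).2 < min t1 t2 ∨ max t1 t2 < (r.ep s).2))
    (heS : eS = e1 ∨ eS = e2) (heC : eC = e1 ∨ eC = e2)
    (hmS : mS = m1 ∨ mS = m2) (hmC : mC = m1 ∨ mC = m2) (hmD : mD = m1 ∨ mD = m2)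
    (htS : tS = t1 ∨ tS = t2) (htS' : tS' = t1 ∨ tS' = t2) (htD : tD = t1 ∨ tD = t2)
    (htSne : tS ≠ tS')
    (hplc : IsPlanarTreeDiagram I j
      (insert ⟨E, eC, M, mC, sC⟩ (insert ⟨M, mD, T, tD, sB⟩ R))) :
    (IsPlanarTreeDiagram I j
      (insert ⟨E, eS, T, tS, sA⟩ (insert ⟨M, mS, T, tS', sB⟩ R)) ↔
      ((tS < tS') ↔ ((E < M) ↔ ¬(E < T)))) := by
  set Ss := insert (⟨E, eS, T, tS, sA⟩ : GArrow n) (insert ⟨M, mS, T, tS', sB⟩ R) with hSs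
  set Sc := insert (⟨E, eC, M, mC, sC⟩ : GArrow n) (insert ⟨M, mD, T, tD, sB⟩ R) with hSc
  have hAm : (⟨E, eS, T, tS, sA⟩ : GArrow n) ∈ Ss := mem_insert_self _ _
  have hBm : (⟨M, mS, T, tS', sB⟩ : GArrow n) ∈ Ss := mem_insert_of_mem (mem_insert_self _ _)
  have hCm : (⟨E, eC, M, mC, sC⟩ : GArrow n) ∈ Sc := mem_insert_self _ _
  have hDm : (⟨M, mD, T, tD, sB⟩ : GArrow n) ∈ Sc := mem_insert_of_mem (mem_insert_self _ _)
  have hRs : ∀ r ∈ R, r ∈ Ss := fun r hr => mem_insert_of_mem (mem_insert_of_mem hr)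
  have hRc : ∀ r ∈ R, r ∈ Sc := fun r hr => mem_insert_of_mem (mem_insert_of_mem hr)
  obtain ⟨⟨c1, c2, c3, c4, c5⟩, hreach, hside3, hpair4⟩ := hplc
  have hctree : IsTreeDiagram I j Sc := ⟨c1, c2, c3, c4, c5⟩
  have hfEI : E ∈ I := c3 _ hCm
  have hfMI : M ∈ I := c3 _ hDm
  have hfT : T ∈ I ∨ T = j := c4 _ hDm
  have hCR : (⟨E, eC, M, mC, sC⟩ : GArrow n) ∉ R := fun hr =>
    pos_not_window hmC (hWM _ hr true rfl)
  have hDR : (⟨M, mD, T, tD, sB⟩ : GArrow n) ∉ R := fun hr =>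
    pos_not_window htD (hWT _ hr true rfl)
  have hRtE : ∀ r ∈ R, r.tailStr ≠ E := by
    intro r hr hre
    obtain ⟨c, -, hc⟩ := c2 E hfEI
    have h1 : r = c := hc r ⟨hRc r hr, hre⟩
    have h2 : (⟨E, eC, M, mC, sC⟩ : GArrow n) = c := hc _ ⟨hCm, rfl⟩
    exact hCR ((h1.trans h2.symm) ▸ hr)
  have hRtM : ∀ r ∈ R, r.tailStr ≠ M := by
    intro r hr hre
    obtain ⟨c, -, hc⟩ := c2 M hfMI
    have h1 : r = c := hc r ⟨hRc r hr, hre⟩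
    have h2 : (⟨M, mD, T, tD, sB⟩ : GArrow n) = c := hc _ ⟨hDm, rfl⟩
    exact hDR ((h1.trans h2.symm) ▸ hr)
  have hwE : ∀ r ∈ R, ∀ s : Bool, (r.ep s).1 = E → ∀ {x y : ℚ},
      (x = e1 ∨ x = e2) → (y = e1 ∨ y = e2) →
      (((r.ep s).2 < x ↔ (r.ep s).2 < y) ∧ (x < (r.ep s).2 ↔ y < (r.ep s).2)) :=
    fun r hr s h _ _ hx hy => win_pair_iff (hWE r hr s h) hx hy
  have hwM : ∀ r ∈ R, ∀ s : Bool, (r.ep s).1 = M → ∀ {x y : ℚ},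
      (x = m1 ∨ x = m2) → (y = m1 ∨ y = m2) →
      (((r.ep s).2 < x ↔ (r.ep s).2 < y) ∧ (x < (r.ep s).2 ↔ y < (r.ep s).2)) :=
    fun r hr s h _ _ hx hy => win_pair_iff (hWM r hr s h) hx hy
  have hwT : ∀ r ∈ R, ∀ s : Bool, (r.ep s).1 = T → ∀ {x y : ℚ},
      (x = t1 ∨ x = t2) → (y = t1 ∨ y = t2) →
      (((r.ep s).2 < x ↔ (r.ep s).2 < y) ∧ (x < (r.ep s).2 ↔ y < (r.ep s).2)) :=
    fun r hr s h _ _ hx hy => win_pair_iff (hWT r hr s h) hx hy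
  have hPRs : ∀ s t, ParentRel Ss s t ↔ ((T = s ∧ E = t) ∨ ((T = s ∧ M = t) ∨ ParentRel R s t)) := by
    intro s t
    rw [hSs, parentRel_insert, parentRel_insert]
  have hPRc : ∀ s t, ParentRel Sc s t ↔ ((M = s ∧ E = t) ∨ ((T = s ∧ M = t) ∨ ParentRel R s t)) := by
    intro s t
    rw [hSc, parentRel_insert, parentRel_insert]
  have hRsubS : ∀ s t, ParentRel R s t → ParentRel Ss s t := by
    rintro s t ⟨r, hr, h1, h2⟩
    exact ⟨r, hRs r hr, h1, h2⟩
  have hRsubC : ∀ s t, ParentRel R s t → ParentRel Sc s t := by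
    rintro s t ⟨r, hr, h1, h2⟩
    exact ⟨r, hRc r hr, h1, h2⟩
  have hPRcTM : ParentRel Sc T M := ⟨⟨M, mD, T, tD, sB⟩, hDm, rfl, rfl⟩
  have hPRcME : ParentRel Sc M E := ⟨⟨E, eC, M, mC, sC⟩, hCm, rfl, rfl⟩
  have hPRsTE : ParentRel Ss T E := ⟨⟨E, eS, T, tS, sA⟩, hAm, rfl, rfl⟩
  have hPRsTM : ParentRel Ss T M := ⟨⟨M, mS, T, tS', sB⟩, hBm, rfl, rfl⟩
  have hedge : ∀ s t, ParentRel Ss s t → Descends Sc s t := by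
    intro s t hst
    rcases (hPRs s t).mp hst with ⟨rfl, rfl⟩ | ⟨rfl, rfl⟩ | h'
    · exact Relation.ReflTransGen.tail (Relation.ReflTransGen.single hPRcTM) hPRcME
    · exact Relation.ReflTransGen.single hPRcTM
    · exact Relation.ReflTransGen.single (hRsubC _ _ h')
  have U1 : ∀ a b, Descends Ss a b → Descends Sc a b := fun a b h =>
    descends_of_edges hedge h
  have V2 : ∀ a b, Descends Sc a b → Descends Ss a b ∨ (Descends Ss a M ∧ Descends Ss E b) := by
    intro a b h
    induction h with
    | refl => exact Or.inl Relation.ReflTransGen.refl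
    | tail h1 h2 ih =>
      rcases (hPRc _ _).mp h2 with ⟨rfl, rfl⟩ | ⟨rfl, rfl⟩ | h2'
      · rcases ih with ih | ⟨ih1, -⟩
        · exact Or.inr ⟨ih, Relation.ReflTransGen.refl⟩
        · exact Or.inr ⟨ih1, Relation.ReflTransGen.refl⟩
      · rcases ih with ih | ⟨ih1, ih2⟩
        · exact Or.inl (ih.tail hPRsTM)
        · exact Or.inr ⟨ih1, ih2.tail hPRsTM⟩
      · rcases ih with ih | ⟨ih1, ih2⟩
        · exact Or.inl (ih.tail (hRsubS _ _ h2'))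
        · exact Or.inr ⟨ih1, ih2.tail (hRsubS _ _ h2')⟩
  have hMupS : ∀ a, Descends Ss a M → a = M ∨ Descends Ss a T := by
    intro a h
    refine descends_to_of_unique_parent ?_ h
    intro c hc
    rcases (hPRs c M).mp hc with ⟨rfl, h'⟩ | ⟨rfl, -⟩ | ⟨r, hr, h1, -⟩
    · exact absurd h' hEM
    · rfl
    · exact absurd h1 (hRtM r hr)
  have hreachS : ∀ i ∈ I, Relation.TransGen (ParentRel Ss) j i := by
    intro i hi
    have hRS : ∀ b, Descends Sc j b → Descends Ss j b := by
      intro b h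
      rcases V2 j b h with h' | ⟨h1, h2⟩
      · exact h'
      · rcases hMupS j h1 with h'' | h'' 
        · exact absurd (h'' ▸ hfMI) hjI
        · exact ((h''.tail hPRsTE).trans h2)
    have h0 := hRS i (hreach i hi).to_reflTransGen
    exact (Relation.reflTransGen_iff_eq_or_transGen.mp h0).resolve_left
      (fun h' => hjI (by rw [← h']; exact hi))
  have hsideC : M < T ↔ E < T :=
    hside3 _ hDm E (Relation.ReflTransGen.single hPRcME)
  have hside'C : T < M ↔ T < E := by
    constructor
    · intro h
      rcases lt_or_gt_of_ne hET with h' | h'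
      · exact absurd (hsideC.mpr h') (asymm h)
      · exact h'
    · intro h
      rcases lt_or_gt_of_ne hMT with h' | h'
      · exact absurd (hsideC.mp h') (asymm h)
      · exact h'
  -- the complete ordering of the two subtrees, derived from the chain
  have hMne : ∀ k, Descends Sc E k → k ≠ M := by
    intro k hk hkM
    exact hEM (desc_antisymm hctree hjI hreach
      (Relation.ReflTransGen.single hPRcME) (hkM ▸ hk)).symm
  have hordC : ∀ k k', Descends Ss E k → Descends Ss M k' →
      ((E < M → k < k') ∧ (M < E → k' < k)) := by
    intro k k' hk hk'
    have hkc : Descends Sc E k := U1 E k hk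
    have hkM : (E < M ↔ k < M) := hside3 _ hCm k hkc
    have hkM' : M < E → M < k := by
      intro h
      rcases lt_or_gt_of_ne (hMne k hkc) with h' | h'
      · exact absurd (hkM.mpr h') (asymm h)
      · exact h'
    rcases Relation.ReflTransGen.cases_head hk' with heq | ⟨c, hc, hck⟩
    · rw [← heq]
      exact ⟨fun h => hkM.mp h, fun h => hkM' h⟩
    · rcases (hPRs M c).mp hc with ⟨h', -⟩ | ⟨h', -⟩ | ⟨r, hr, h1, h2⟩
      · exact absurd h'.symm hMT
      · exact absurd h'.symm hMT
      · have hk'c : Descends Sc r.tailStr k' := U1 _ _ (by rw [h1]; exact hck)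
        have hrM : (r.tailStr < M ↔ k' < M) := by
          have h3 := hside3 r (hRc r hr) k' hk'c
          rwa [h2] at h3
        have hk'Mne : k' ≠ M := by
          intro hkm
          have h3 : Descends Sc r.tailStr M := hkm ▸ hk'c
          have h4 : Descends Sc M r.tailStr :=
            Relation.ReflTransGen.single ⟨r, hRc r hr, rfl, h2⟩
          exact hRtM r hr (desc_antisymm hctree hjI hreach h3 h4)
        have hrtne : r.tailStr ≠ M := hRtM r hr
        have hPrhp : r.headPos < mC := by
          have h5 : r.headPos < mD := c5 r (hRc r hr) _ hDm (by rw [h2])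
          exact ((hwM r hr true h2 hmD hmC).1).mp h5
        have hpC := hpair4 r (hRc r hr) _ hCm h2 hPrhp k' k hk'c hkc
        rw [h2] at hpC
        constructor
        · intro h
          by_cases hrt : r.tailStr < M
          · exact hpC.1 hrt h
          · have hMr : M < r.tailStr := (lt_or_gt_of_ne hrtne).resolve_left hrt
            have hMk' : M < k' := by
              rcases lt_or_gt_of_ne hk'Mne with h' | h'
              · exact absurd (hrM.mpr h') hrt
              · exact h'
            exact lt_trans (hkM.mp h) hMk'
        · intro h
          by_cases hrt : r.tailStr < M
          · exact lt_trans (hrM.mp hrt) (hkM' h)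
          · exact hpC.2 ((lt_or_gt_of_ne hrtne).resolve_left hrt) h
  constructor
  · intro hplS
    exact sib_order hsideC.symm htSne hplS
  · intro horder
    refine ⟨⟨?_, ?_, ?_, ?_, ?_⟩, hreachS, ?_, ?_⟩
    · -- no arrow joins a string to itself
      intro a ha
      rcases mem_insert_cases ha with rfl | ha
      · exact hET
      rcases mem_insert_cases ha with rfl | ha
      · exact hMT
      · exact c1 a (hRc a ha)
    · -- unique tails
      intro i hi
      by_cases hiE : i = E
      · refine ⟨⟨E, eS, T, tS, sA⟩, ⟨hAm, hiE.symm⟩, ?_⟩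
        rintro b ⟨hb, hbt⟩
        rcases mem_insert_cases hb with rfl | hb
        · rfl
        rcases mem_insert_cases hb with rfl | hb
        · exact absurd (hbt.trans hiE) (Ne.symm hEM)
        · exact absurd (hbt.trans hiE) (hRtE b hb)
      by_cases hiM : i = M
      · refine ⟨⟨M, mS, T, tS', sB⟩, ⟨hBm, hiM.symm⟩, ?_⟩
        rintro b ⟨hb, hbt⟩
        rcases mem_insert_cases hb with rfl | hb
        · exact absurd (hbt.trans hiM) hEM
        rcases mem_insert_cases hb with rfl | hb
        · rfl
        · exact absurd (hbt.trans hiM) (hRtM b hb)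
      · obtain ⟨c, ⟨hcm, hct⟩, hc⟩ := c2 i hi
        rcases mem_insert_cases hcm with rfl | hcm
        · exact absurd hct.symm hiE
        rcases mem_insert_cases hcm with rfl | hcm
        · exact absurd hct.symm hiM
        · refine ⟨c, ⟨hRs c hcm, hct⟩, ?_⟩
          rintro b ⟨hb, hbt⟩
          rcases mem_insert_cases hb with rfl | hb
          · exact absurd hbt.symm hiE
          rcases mem_insert_cases hb with rfl | hb
          · exact absurd hbt.symm hiM
          · exact hc b ⟨hRc b hb, hbt⟩
    · -- tails in I
      intro a ha
      rcases mem_insert_cases ha with rfl | ha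
      · exact hfEI
      rcases mem_insert_cases ha with rfl | ha
      · exact hfMI
      · exact c3 a (hRc a ha)
    · -- heads in I ∪ {j}
      intro a ha
      rcases mem_insert_cases ha with rfl | ha
      · exact hfT
      rcases mem_insert_cases ha with rfl | ha
      · exact hfT
      · exact c4 a (hRc a ha)
    · -- heads precede tails
      intro a ha b hb hab
      rcases mem_insert_cases ha with rfl | ha
      · rcases mem_insert_cases hb with rfl | hb
        · exact absurd hab.symm hET
        rcases mem_insert_cases hb with rfl | hb
        · exact absurd hab.symm hMT
        · exact ((hwT b hb false hab.symm htD htS).2).mp (c5 _ hDm b (hRc b hb) hab)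
      rcases mem_insert_cases ha with rfl | ha
      · rcases mem_insert_cases hb with rfl | hb
        · exact absurd hab.symm hET
        rcases mem_insert_cases hb with rfl | hb
        · exact absurd hab.symm hMT
        · exact ((hwT b hb false hab.symm htD htS').2).mp (c5 _ hDm b (hRc b hb) hab)
      · rcases mem_insert_cases hb with rfl | hb
        · exact ((hwE a ha true hab heC heS).1).mp (c5 a (hRc a ha) _ hCm hab)
        rcases mem_insert_cases hb with rfl | hb
        · exact ((hwM a ha true hab hmD hmS).1).mp (c5 a (hRc a ha) _ hDm hab)
        · exact c5 a (hRc a ha) b (hRc b hb) hab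
    · -- one-sidedness of subtrees
      intro a ha k hk
      rcases mem_insert_cases ha with rfl | ha
      · exact hsideC.symm.trans
          (hside3 _ hDm k (Relation.ReflTransGen.head hPRcME (U1 E k hk)))
      rcases mem_insert_cases ha with rfl | ha
      · exact hside3 _ hDm k (U1 M k hk)
      · exact hside3 a (hRc a ha) k (U1 _ k hk)
    · -- ordering of subtrees attached to a common string
      intro a ha b hb hH hP k k' hk hk'
      rcases mem_insert_cases ha with rfl | ha
      · rcases mem_insert_cases hb with rfl | hb
        · exact absurd hP (lt_irrefl _)
        rcases mem_insert_cases hb with rfl | hb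
        · -- (A, B)
          have hPO := horder.mp hP
          by_cases hETlt : E < T
          · have hME : M < E := by
              rcases lt_or_gt_of_ne hEM with h' | h'
              · exact absurd hETlt (hPO.mp h')
              · exact h'
            exact ⟨fun _ _ => (hordC k k' hk hk').2 hME,
              fun h1 _ => absurd hETlt (asymm h1)⟩
          · have hEMlt : E < M := hPO.mpr hETlt
            exact ⟨fun h1 _ => absurd h1 hETlt, fun _ _ => (hordC k k' hk hk').1 hEMlt⟩
        · -- (A, r)
          have hPD : tD < b.headPos := ((hwT b hb true hH.symm htS htD).2).mp hP
          have hkM : Descends Sc M k := Relation.ReflTransGen.head hPRcME (U1 E k hk)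
          have hcp := hpair4 _ hDm b (hRc b hb) hH hPD k k' hkM (U1 _ k' hk')
          exact ⟨fun h1 h2 => hcp.1 (hsideC.mpr h1) h2,
            fun h1 h2 => hcp.2 (hside'C.mpr h1) h2⟩
      rcases mem_insert_cases ha with rfl | ha
      · rcases mem_insert_cases hb with rfl | hb
        · -- (B, A)
          have hnPO : ¬((E < M) ↔ ¬(E < T)) := fun hPO => absurd (horder.mpr hPO) (asymm hP)
          by_cases hETlt : E < T
          · have hEMlt : E < M := by
              by_contra hnEM
              exact hnPO (iff_of_false hnEM (fun h => h hETlt))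
            exact ⟨fun _ _ => (hordC k' k hk' hk).1 hEMlt,
              fun h1 _ => absurd (hsideC.mpr hETlt) (asymm h1)⟩
          · have hME : M < E := by
              rcases lt_or_gt_of_ne hEM with h' | h'
              · exact absurd (iff_of_true h' hETlt) hnPO
              · exact h'
            exact ⟨fun h1 _ => absurd (hsideC.mp h1) hETlt,
              fun _ _ => (hordC k' k hk' hk).2 hME⟩
        rcases mem_insert_cases hb with rfl | hb
        · exact absurd hP (lt_irrefl _)
        · -- (B, r)
          have hPD : tD < b.headPos := ((hwT b hb true hH.symm htS' htD).2).mp hP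
          have hcp := hpair4 _ hDm b (hRc b hb) hH hPD k k' (U1 M k hk) (U1 _ k' hk')
          exact hcp
      · rcases mem_insert_cases hb with rfl | hb
        · -- (r, A)
          have hPD : a.headPos < tD := ((hwT a ha true hH htS htD).1).mp hP
          have hk'M : Descends Sc M k' := Relation.ReflTransGen.head hPRcME (U1 E k' hk')
          have hcp := hpair4 a (hRc a ha) _ hDm hH hPD k k' (U1 _ k hk) hk'M
          exact ⟨fun h1 h2 => hcp.1 h1 (hsideC.mpr h2),
            fun h1 h2 => hcp.2 h1 (hside'C.mpr h2)⟩
        rcases mem_insert_cases hb with rfl | hb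
        · -- (r, B)
          have hPD : a.headPos < tD := ((hwT a ha true hH htS' htD).1).mp hP
          exact hpair4 a (hRc a ha) _ hDm hH hPD k k' (U1 _ k hk) (U1 M k' hk')
        · exact hpair4 a (hRc a ha) b (hRc b hb) hH hP k k' (U1 _ k hk) (U1 _ k' hk')


/-- When `E` and `M` lie on opposite sides of `T`, the two sibling
configurations are simultaneously planar. -/
lemma sib_swap {eS tS mS tS' eS2 tS2 mS2 tS2' : ℚ}
    (hEM : E ≠ M) (hMT : M ≠ T) (hET : E ≠ T)
    (hWE : ∀ r ∈ R, ∀ s : Bool, (r.ep s).1 = E →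
      ((r.ep s).2 < min e1 e2 ∨ max e1 e2 < (r.ep s).2))
    (hWM : ∀ r ∈ R, ∀ s : Bool, (r.ep s).1 = M →
      ((r.ep s).2 < min m1 m2 ∨ max m1 m2 < (r.ep s).2))
    (hWT : ∀ r ∈ R, ∀ s : Bool, (r.ep s).1 = T →
      ((r.ep s).2 < min t1 t2 ∨ max t1 t2 < (r.ep s).2))
    (heS : eS = e1 ∨ eS = e2) (heS2 : eS2 = e1 ∨ eS2 = e2)
    (hmS : mS = m1 ∨ mS = m2) (hmS2 : mS2 = m1 ∨ mS2 = m2)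
    (htS : tS = t1 ∨ tS = t2) (htS' : tS' = t1 ∨ tS' = t2)
    (htS2 : tS2 = t1 ∨ tS2 = t2) (htS2' : tS2' = t1 ∨ tS2' = t2)
    (hOpp : ¬(E < T ↔ M < T))
    (hpl : IsPlanarTreeDiagram I j
      (insert ⟨E, eS, T, tS, sA⟩ (insert ⟨M, mS, T, tS', sB⟩ R))) :
    IsPlanarTreeDiagram I j
      (insert ⟨E, eS2, T, tS2, sA⟩ (insert ⟨M, mS2, T, tS2', sB⟩ R)) := by
  set Ss := insert (⟨E, eS, T, tS, sA⟩ : GArrow n) (insert ⟨M, mS, T, tS', sB⟩ R) with hSs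
  set S2 := insert (⟨E, eS2, T, tS2, sA⟩ : GArrow n) (insert ⟨M, mS2, T, tS2', sB⟩ R) with hS2
  have hAm : (⟨E, eS, T, tS, sA⟩ : GArrow n) ∈ Ss := mem_insert_self _ _
  have hBm : (⟨M, mS, T, tS', sB⟩ : GArrow n) ∈ Ss := mem_insert_of_mem (mem_insert_self _ _)
  have hA2m : (⟨E, eS2, T, tS2, sA⟩ : GArrow n) ∈ S2 := mem_insert_self _ _
  have hB2m : (⟨M, mS2, T, tS2', sB⟩ : GArrow n) ∈ S2 := mem_insert_of_mem (mem_insert_self _ _)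
  have hRs : ∀ r ∈ R, r ∈ Ss := fun r hr => mem_insert_of_mem (mem_insert_of_mem hr)
  have hR2 : ∀ r ∈ R, r ∈ S2 := fun r hr => mem_insert_of_mem (mem_insert_of_mem hr)
  obtain ⟨⟨c1, c2, c3, c4, c5⟩, hreach, hside3, hpair4⟩ := hpl
  have hfEI : E ∈ I := c3 _ hAm
  have hfMI : M ∈ I := c3 _ hBm
  have hfT : T ∈ I ∨ T = j := c4 _ hAm
  have hAR : (⟨E, eS, T, tS, sA⟩ : GArrow n) ∉ R := fun hr =>
    pos_not_window htS (hWT _ hr true rfl)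
  have hBR : (⟨M, mS, T, tS', sB⟩ : GArrow n) ∉ R := fun hr =>
    pos_not_window htS' (hWT _ hr true rfl)
  have hRtE : ∀ r ∈ R, r.tailStr ≠ E := by
    intro r hr hre
    obtain ⟨c, -, hc⟩ := c2 E hfEI
    have h1 : r = c := hc r ⟨hRs r hr, hre⟩
    have h2 : (⟨E, eS, T, tS, sA⟩ : GArrow n) = c := hc _ ⟨hAm, rfl⟩
    exact hAR ((h1.trans h2.symm) ▸ hr)
  have hRtM : ∀ r ∈ R, r.tailStr ≠ M := by
    intro r hr hre
    obtain ⟨c, -, hc⟩ := c2 M hfMI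
    have h1 : r = c := hc r ⟨hRs r hr, hre⟩
    have h2 : (⟨M, mS, T, tS', sB⟩ : GArrow n) = c := hc _ ⟨hBm, rfl⟩
    exact hBR ((h1.trans h2.symm) ▸ hr)
  have hwE : ∀ r ∈ R, ∀ s : Bool, (r.ep s).1 = E → ∀ {x y : ℚ},
      (x = e1 ∨ x = e2) → (y = e1 ∨ y = e2) →
      (((r.ep s).2 < x ↔ (r.ep s).2 < y) ∧ (x < (r.ep s).2 ↔ y < (r.ep s).2)) :=
    fun r hr s h _ _ hx hy => win_pair_iff (hWE r hr s h) hx hy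
  have hwM : ∀ r ∈ R, ∀ s : Bool, (r.ep s).1 = M → ∀ {x y : ℚ},
      (x = m1 ∨ x = m2) → (y = m1 ∨ y = m2) →
      (((r.ep s).2 < x ↔ (r.ep s).2 < y) ∧ (x < (r.ep s).2 ↔ y < (r.ep s).2)) :=
    fun r hr s h _ _ hx hy => win_pair_iff (hWM r hr s h) hx hy
  have hwT : ∀ r ∈ R, ∀ s : Bool, (r.ep s).1 = T → ∀ {x y : ℚ},
      (x = t1 ∨ x = t2) → (y = t1 ∨ y = t2) →
      (((r.ep s).2 < x ↔ (r.ep s).2 < y) ∧ (x < (r.ep s).2 ↔ y < (r.ep s).2)) :=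
    fun r hr s h _ _ hx hy => win_pair_iff (hWT r hr s h) hx hy
  have hPReq : ∀ s t, ParentRel Ss s t ↔ ParentRel S2 s t := by
    intro s t
    rw [hSs, hS2, parentRel_insert, parentRel_insert, parentRel_insert, parentRel_insert]
  have hDeq := descends_congr hPReq
  have hTeq := transGen_congr hPReq
  refine ⟨⟨?_, ?_, ?_, ?_, ?_⟩, ?_, ?_, ?_⟩
  · intro a ha
    rcases mem_insert_cases ha with rfl | ha
    · exact hET
    rcases mem_insert_cases ha with rfl | ha
    · exact hMT
    · exact c1 a (hRs a ha)
  · intro i hi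
    by_cases hiE : i = E
    · refine ⟨⟨E, eS2, T, tS2, sA⟩, ⟨hA2m, hiE.symm⟩, ?_⟩
      rintro b ⟨hb, hbt⟩
      rcases mem_insert_cases hb with rfl | hb
      · rfl
      rcases mem_insert_cases hb with rfl | hb
      · exact absurd (hbt.trans hiE) (Ne.symm hEM)
      · exact absurd (hbt.trans hiE) (hRtE b hb)
    by_cases hiM : i = M
    · refine ⟨⟨M, mS2, T, tS2', sB⟩, ⟨hB2m, hiM.symm⟩, ?_⟩
      rintro b ⟨hb, hbt⟩
      rcases mem_insert_cases hb with rfl | hb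
      · exact absurd (hbt.trans hiM) hEM
      rcases mem_insert_cases hb with rfl | hb
      · rfl
      · exact absurd (hbt.trans hiM) (hRtM b hb)
    · obtain ⟨c, ⟨hcm, hct⟩, hc⟩ := c2 i hi
      rcases mem_insert_cases hcm with rfl | hcm
      · exact absurd hct.symm hiE
      rcases mem_insert_cases hcm with rfl | hcm
      · exact absurd hct.symm hiM
      · refine ⟨c, ⟨hR2 c hcm, hct⟩, ?_⟩
        rintro b ⟨hb, hbt⟩
        rcases mem_insert_cases hb with rfl | hb
        · exact absurd hbt.symm hiE
        rcases mem_insert_cases hb with rfl | hb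
        · exact absurd hbt.symm hiM
        · exact hc b ⟨hRs b hb, hbt⟩
  · intro a ha
    rcases mem_insert_cases ha with rfl | ha
    · exact hfEI
    rcases mem_insert_cases ha with rfl | ha
    · exact hfMI
    · exact c3 a (hRs a ha)
  · intro a ha
    rcases mem_insert_cases ha with rfl | ha
    · exact hfT
    rcases mem_insert_cases ha with rfl | ha
    · exact hfT
    · exact c4 a (hRs a ha)
  · intro a ha b hb hab
    rcases mem_insert_cases ha with rfl | ha
    · rcases mem_insert_cases hb with rfl | hb
      · exact absurd hab.symm hET
      rcases mem_insert_cases hb with rfl | hb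
      · exact absurd hab.symm hMT
      · exact ((hwT b hb false hab.symm htS htS2).2).mp (c5 _ hAm b (hRs b hb) hab)
    rcases mem_insert_cases ha with rfl | ha
    · rcases mem_insert_cases hb with rfl | hb
      · exact absurd hab.symm hET
      rcases mem_insert_cases hb with rfl | hb
      · exact absurd hab.symm hMT
      · exact ((hwT b hb false hab.symm htS' htS2').2).mp (c5 _ hBm b (hRs b hb) hab)
    · rcases mem_insert_cases hb with rfl | hb
      · exact ((hwE a ha true hab heS heS2).1).mp (c5 a (hRs a ha) _ hAm hab)
      rcases mem_insert_cases hb with rfl | hb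
      · exact ((hwM a ha true hab hmS hmS2).1).mp (c5 a (hRs a ha) _ hBm hab)
      · exact c5 a (hRs a ha) b (hRs b hb) hab
  · intro i hi
    exact (hTeq j i).mp (hreach i hi)
  · intro a ha k hk
    rcases mem_insert_cases ha with rfl | ha
    · exact hside3 _ hAm k ((hDeq E k).mpr hk)
    rcases mem_insert_cases ha with rfl | ha
    · exact hside3 _ hBm k ((hDeq M k).mpr hk)
    · exact hside3 a (hRs a ha) k ((hDeq _ k).mpr hk)
  · intro a ha b hb hH hP k k' hk hk'
    rcases mem_insert_cases ha with rfl | ha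
    · rcases mem_insert_cases hb with rfl | hb
      · exact absurd hP (lt_irrefl _)
      rcases mem_insert_cases hb with rfl | hb
      · -- (A2, B2) : vacuous by opposite sides
        exact ⟨fun h1 h2 => absurd (iff_of_true h1 h2) hOpp,
          fun h1 h2 => absurd (iff_of_false (asymm h1) (asymm h2)) hOpp⟩
      · have hP' : tS < b.headPos := ((hwT b hb true hH.symm htS2 htS).2).mp hP
        exact hpair4 _ hAm b (hRs b hb) hH hP' k k' ((hDeq E k).mpr hk) ((hDeq _ k').mpr hk')
    rcases mem_insert_cases ha with rfl | ha
    · rcases mem_insert_cases hb with rfl | hb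
      · exact ⟨fun h1 h2 => absurd (iff_of_true h2 h1) hOpp,
          fun h1 h2 => absurd (iff_of_false (asymm h2) (asymm h1)) hOpp⟩
      rcases mem_insert_cases hb with rfl | hb
      · exact absurd hP (lt_irrefl _)
      · have hP' : tS' < b.headPos := ((hwT b hb true hH.symm htS2' htS').2).mp hP
        exact hpair4 _ hBm b (hRs b hb) hH hP' k k' ((hDeq M k).mpr hk) ((hDeq _ k').mpr hk')
    · rcases mem_insert_cases hb with rfl | hb
      · have hP' : a.headPos < tS := ((hwT a ha true hH htS2 htS).1).mp hP
        exact hpair4 a (hRs a ha) _ hAm hH hP' k k' ((hDeq _ k).mpr hk) ((hDeq E k').mpr hk')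
      rcases mem_insert_cases hb with rfl | hb
      · have hP' : a.headPos < tS' := ((hwT a ha true hH htS2' htS').1).mp hP
        exact hpair4 a (hRs a ha) _ hBm hH hP' k k' ((hDeq _ k).mpr hk) ((hDeq M k').mpr hk')
      · exact hpair4 a (hRs a ha) b (hRs b hb) hH hP k k' ((hDeq _ k).mpr hk) ((hDeq _ k').mpr hk')


lemma tval_insert2 {x y : GArrow n} (hxy : x ≠ y) (hxR : x ∉ R) (hyR : y ∉ R) :
    tval I j (insert x (insert y R)) =
      if IsPlanarTreeDiagram I j (insert x (insert y R)) then
        ((if x.tailStr < x.headStr then -1 else 1) *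
          ((if y.tailStr < y.headStr then -1 else 1) * treeSign R)) *
          (x.sign * (y.sign * ∏ r ∈ R, r.sign))
      else 0 := by
  rw [tval]
  split
  · rw [treeSign_insert (fun h => (mem_insert.mp h).elim hxy hxR), treeSign_insert hyR,
      prod_insert (fun h => (mem_insert.mp h).elim hxy hxR), prod_insert hyR]
  · rfl

/-- The key exchange identity for the third Reidemeister move. -/
lemma exchange_sum
    (hjI : j ∉ I)
    (hWE : ∀ r ∈ R, ∀ s : Bool, (r.ep s).1 = E →
      ((r.ep s).2 < min e1 e2 ∨ max e1 e2 < (r.ep s).2))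
    (hWM : ∀ r ∈ R, ∀ s : Bool, (r.ep s).1 = M →
      ((r.ep s).2 < min m1 m2 ∨ max m1 m2 < (r.ep s).2))
    (hWT : ∀ r ∈ R, ∀ s : Bool, (r.ep s).1 = T →
      ((r.ep s).2 < min t1 t2 ∨ max t1 t2 < (r.ep s).2))
    (hm : m1 ≠ m2) (ht : t1 ≠ t2)
    (hsA : sA = 1 ∨ sA = -1) (hsC : sC = 1 ∨ sC = -1)
    (hsign : sA * sC =
      -((if t1 < t2 then 1 else (-1 : ℤ)) * (if m1 < m2 then 1 else -1))) :
    tval I j (insert ⟨E, e1, T, t1, sA⟩ (insert ⟨M, m1, T, t2, sB⟩ R))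
      + tval I j (insert ⟨E, e2, M, m2, sC⟩ (insert ⟨M, m1, T, t2, sB⟩ R))
    = tval I j (insert ⟨E, e2, T, t2, sA⟩ (insert ⟨M, m2, T, t1, sB⟩ R))
      + tval I j (insert ⟨E, e1, M, m1, sC⟩ (insert ⟨M, m2, T, t1, sB⟩ R)) := by
  have hB1m : ∀ (m t : ℚ), (⟨M, m, T, t, sB⟩ : GArrow n) ∈
      insert (⟨E, e1, T, t1, sA⟩ : GArrow n) (insert ⟨M, m, T, t, sB⟩ R) :=
    fun m t => mem_insert_of_mem (mem_insert_self _ _)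
  by_cases hEMs : E = M
  · have kill : ∀ (e t e' m' t' m'' : ℚ), t ≠ t' →
        tval I j (insert ⟨E, e, T, t, sA⟩ (insert ⟨M, m'', T, t', sB⟩ R)) = 0 ∧
        tval I j (insert ⟨E, e', M, m', sC⟩ (insert ⟨M, m'', T, t', sB⟩ R)) = 0 := by
      intro e t e' m' t' m'' htt
      constructor
      · exact tval_zero_of_not_tree (not_tree_two_tails (mem_insert_self _ _)
          (mem_insert_of_mem (mem_insert_self _ _))
          (fun hcon => htt (congrArg GArrow.headPos hcon)) hEMs)
      · exact tval_zero_of_not_tree (not_tree_self (mem_insert_self _ _) hEMs)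
    rw [(kill e1 t1 e2 m2 t2 m1 ht).1, (kill e1 t1 e2 m2 t2 m1 ht).2,
      (kill e2 t2 e1 m1 t1 m2 (Ne.symm ht)).1, (kill e2 t2 e1 m1 t1 m2 (Ne.symm ht)).2]
  by_cases hMTs : M = T
  · have kill1 : ∀ (e t t' m'' : ℚ),
        tval I j (insert ⟨E, e, T, t, sA⟩ (insert ⟨M, m'', T, t', sB⟩ R)) = 0 :=
      fun e t t' m'' => tval_zero_of_not_tree
        (not_tree_self (mem_insert_of_mem (mem_insert_self _ _)) hMTs)
    have kill2 : ∀ (e' m' t' m'' : ℚ),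
        tval I j (insert ⟨E, e', M, m', sC⟩ (insert ⟨M, m'', T, t', sB⟩ R)) = 0 :=
      fun e' m' t' m'' => tval_zero_of_not_tree
        (not_tree_self (mem_insert_of_mem (mem_insert_self _ _)) hMTs)
    rw [kill1 e1 t1 t2 m1, kill2 e2 m2 t2 m1, kill1 e2 t2 t1 m2, kill2 e1 m1 t1 m2]
  by_cases hETs : E = T
  · have kill1 : ∀ (e t t' m'' : ℚ),
        tval I j (insert ⟨E, e, T, t, sA⟩ (insert ⟨M, m'', T, t', sB⟩ R)) = 0 :=
      fun e t t' m'' => tval_zero_of_not_tree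
        (not_tree_self (mem_insert_self _ _) hETs)
    have kill2 : ∀ (e' m' t' m'' : ℚ),
        tval I j (insert ⟨E, e', M, m', sC⟩ (insert ⟨M, m'', T, t', sB⟩ R)) = 0 := by
      intro e' m' t' m''
      refine tval_zero_of_not_pl ?_
      intro hpl
      have h1 : Descends (insert (⟨E, e', M, m', sC⟩ : GArrow n) (insert ⟨M, m'', T, t', sB⟩ R)) M E :=
        Relation.ReflTransGen.single ⟨⟨E, e', M, m', sC⟩, mem_insert_self _ _, rfl, rfl⟩
      have h2 : Descends (insert (⟨E, e', M, m', sC⟩ : GArrow n) (insert ⟨M, m'', T, t', sB⟩ R)) E M := by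
        refine Relation.ReflTransGen.single ?_
        rw [hETs]
        exact ⟨⟨M, m'', T, t', sB⟩, mem_insert_of_mem (mem_insert_self _ _), rfl, rfl⟩
      exact hEMs (desc_antisymm hpl.1 hjI hpl.2.1 h2 h1)
    rw [kill1 e1 t1 t2 m1, kill2 e2 m2 t2 m1, kill1 e2 t2 t1 m2, kill2 e1 m1 t1 m2]
  -- main case: the three strings are distinct
  have hnAB : ∀ (e t m t' : ℚ), (⟨E, e, T, t, sA⟩ : GArrow n) ≠ ⟨M, m, T, t', sB⟩ :=
    fun e t m t' h => hEMs (congrArg GArrow.tailStr h)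
  have hnCB : ∀ (e m m' t' : ℚ), (⟨E, e, M, m, sC⟩ : GArrow n) ≠ ⟨M, m', T, t', sB⟩ :=
    fun e m m' t' h => hEMs (congrArg GArrow.tailStr h)
  have hnRT : ∀ (a : GArrow n), a.headStr = T → (a.headPos = t1 ∨ a.headPos = t2) → a ∉ R :=
    fun a h1 h2 hr => pos_not_window h2 (hWT _ hr true h1)
  have hnRM : ∀ (a : GArrow n), a.headStr = M → (a.headPos = m1 ∨ a.headPos = m2) → a ∉ R :=
    fun a h1 h2 hr => pos_not_window h2 (hWM _ hr true h1)
  have hA1R : (⟨E, e1, T, t1, sA⟩ : GArrow n) ∉ R := hnRT _ rfl (Or.inl rfl)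
  have hA2R : (⟨E, e2, T, t2, sA⟩ : GArrow n) ∉ R := hnRT _ rfl (Or.inr rfl)
  have hB1R : (⟨M, m1, T, t2, sB⟩ : GArrow n) ∉ R := hnRT _ rfl (Or.inr rfl)
  have hB2R : (⟨M, m2, T, t1, sB⟩ : GArrow n) ∉ R := hnRT _ rfl (Or.inl rfl)
  have hC1R : (⟨E, e2, M, m2, sC⟩ : GArrow n) ∉ R := hnRM _ rfl (Or.inr rfl)
  have hC2R : (⟨E, e1, M, m1, sC⟩ : GArrow n) ∉ R := hnRM _ rfl (Or.inl rfl)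
  rw [tval_insert2 (hnAB e1 t1 m1 t2) hA1R hB1R, tval_insert2 (hnCB e2 m2 m1 t2) hC1R hB1R,
    tval_insert2 (hnAB e2 t2 m2 t1) hA2R hB2R, tval_insert2 (hnCB e1 m1 m2 t1) hC2R hB2R]
  dsimp only
  by_cases b1 : IsPlanarTreeDiagram I j (insert ⟨E, e1, T, t1, sA⟩ (insert ⟨M, m1, T, t2, sB⟩ R)) <;>
  by_cases b2 : IsPlanarTreeDiagram I j (insert ⟨E, e2, T, t2, sA⟩ (insert ⟨M, m2, T, t1, sB⟩ R))
  · -- both sibling configurations planar: both chains vanish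
    have hOpp : ¬(E < T ↔ M < T) := sib_both ht b1 b2
    have hnc1 : ¬ IsPlanarTreeDiagram I j
        (insert ⟨E, e2, M, m2, sC⟩ (insert ⟨M, m1, T, t2, sB⟩ R)) :=
      fun h => hOpp (chain_side h).symm
    have hnc2 : ¬ IsPlanarTreeDiagram I j
        (insert ⟨E, e1, M, m1, sC⟩ (insert ⟨M, m2, T, t1, sB⟩ R)) :=
      fun h => hOpp (chain_side h).symm
    rw [if_pos b1, if_pos b2, if_neg hnc1, if_neg hnc2]
  · -- only the first sibling configuration is planar
    have hside : E < T ↔ M < T := by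
      by_contra hOpp
      exact b2 (sib_swap hEMs hMTs hETs hWE hWM hWT (Or.inl rfl) (Or.inr rfl) (Or.inl rfl)
        (Or.inr rfl) (Or.inl rfl) (Or.inr rfl) (Or.inr rfl) (Or.inl rfl) hOpp b1)
    have horder := sib_order hside ht b1
    have hOrd := sib_ord_full hside ht b1
    rw [if_pos b1, if_neg b2]
    by_cases hq : m1 < m2
    · have hc2 : IsPlanarTreeDiagram I j
          (insert ⟨E, e1, M, m1, sC⟩ (insert ⟨M, m2, T, t1, sB⟩ R)) :=
        sib_to_chain hjI hEMs hMTs hETs hWE hWM hWT (Or.inl rfl) (Or.inl rfl)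
          (Or.inl rfl) (Or.inl rfl) (Or.inr rfl) (Or.inl rfl) (Or.inr rfl) (Or.inl rfl)
          hq hside b1 hOrd
      have hnc1 : ¬ IsPlanarTreeDiagram I j
          (insert ⟨E, e2, M, m2, sC⟩ (insert ⟨M, m1, T, t2, sB⟩ R)) :=
        fun h => absurd (chain_order h) (asymm hq)
      rw [if_neg hnc1, if_pos hc2]
      have key : (if E < T then (-1:ℤ) else 1) * sA = (if E < M then (-1:ℤ) else 1) * sC := by
        have hprod : sA * sC = (if (E < M) ↔ ¬(E < T) then (-1:ℤ) else 1) := by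
          rw [hsign, if_pos hq]
          by_cases hPOdd : (E < M) ↔ ¬(E < T)
          · rw [if_pos (horder.mpr hPOdd), if_pos hPOdd]; norm_num
          · rw [if_neg (fun h => hPOdd (horder.mp h)), if_neg hPOdd]; norm_num
        by_cases hET2 : E < T <;> by_cases hEM2 : E < M <;>
          rcases hsA with rfl | rfl <;> rcases hsC with rfl | rfl <;>
          simp [hET2, hEM2] at hprod ⊢ <;> omega
      set a := (if E < T then (-1:ℤ) else 1) with ha
      set b := (if E < M then (-1:ℤ) else 1) with hb
      set c := (if M < T then (-1:ℤ) else 1) with hc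
      linear_combination (c * treeSign R * sB * ∏ r ∈ R, r.sign) * key
    · have hq' : m2 < m1 := (lt_or_gt_of_ne hm).resolve_left hq
      have hc1 : IsPlanarTreeDiagram I j
          (insert ⟨E, e2, M, m2, sC⟩ (insert ⟨M, m1, T, t2, sB⟩ R)) :=
        sib_to_chain hjI hEMs hMTs hETs hWE hWM hWT (Or.inl rfl) (Or.inr rfl)
          (Or.inl rfl) (Or.inr rfl) (Or.inl rfl) (Or.inl rfl) (Or.inr rfl) (Or.inr rfl)
          hq' hside b1 hOrd
      have hnc2 : ¬ IsPlanarTreeDiagram I j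
          (insert ⟨E, e1, M, m1, sC⟩ (insert ⟨M, m2, T, t1, sB⟩ R)) :=
        fun h => hq (chain_order h)
      rw [if_pos hc1, if_neg hnc2]
      have key : (if E < T then (-1:ℤ) else 1) * sA = -((if E < M then (-1:ℤ) else 1) * sC) := by
        have hprod : sA * sC = (if (E < M) ↔ ¬(E < T) then (1:ℤ) else -1) := by
          rw [hsign, if_neg hq]
          by_cases hPOdd : (E < M) ↔ ¬(E < T)
          · rw [if_pos (horder.mpr hPOdd), if_pos hPOdd]; norm_num
          · rw [if_neg (fun h => hPOdd (horder.mp h)), if_neg hPOdd]; norm_num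
        by_cases hET2 : E < T <;> by_cases hEM2 : E < M <;>
          rcases hsA with rfl | rfl <;> rcases hsC with rfl | rfl <;>
          simp [hET2, hEM2] at hprod ⊢ <;> omega
      set a := (if E < T then (-1:ℤ) else 1) with ha
      set b := (if E < M then (-1:ℤ) else 1) with hb
      set c := (if M < T then (-1:ℤ) else 1) with hc
      linear_combination (c * treeSign R * sB * ∏ r ∈ R, r.sign) * key
  · -- only the second sibling configuration is planar
    have hside : E < T ↔ M < T := by
      by_contra hOpp
      exact b1 (sib_swap hEMs hMTs hETs hWE hWM hWT (Or.inr rfl) (Or.inl rfl) (Or.inr rfl)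
        (Or.inl rfl) (Or.inr rfl) (Or.inl rfl) (Or.inl rfl) (Or.inr rfl) hOpp b2)
    have horder := sib_order hside (Ne.symm ht) b2
    have hOrd := sib_ord_full hside (Ne.symm ht) b2
    rw [if_neg b1, if_pos b2]
    by_cases hq : m1 < m2
    · have hc2 : IsPlanarTreeDiagram I j
          (insert ⟨E, e1, M, m1, sC⟩ (insert ⟨M, m2, T, t1, sB⟩ R)) :=
        sib_to_chain hjI hEMs hMTs hETs hWE hWM hWT (Or.inr rfl) (Or.inl rfl)
          (Or.inr rfl) (Or.inl rfl) (Or.inr rfl) (Or.inr rfl) (Or.inl rfl) (Or.inl rfl)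
          hq hside b2 hOrd
      have hnc1 : ¬ IsPlanarTreeDiagram I j
          (insert ⟨E, e2, M, m2, sC⟩ (insert ⟨M, m1, T, t2, sB⟩ R)) :=
        fun h => absurd (chain_order h) (asymm hq)
      rw [if_neg hnc1, if_pos hc2]
      have key : (if E < T then (-1:ℤ) else 1) * sA = -((if E < M then (-1:ℤ) else 1) * sC) := by
        have hprod : sA * sC = (if (E < M) ↔ ¬(E < T) then (1:ℤ) else -1) := by
          rw [hsign, if_pos hq]
          by_cases hPOdd : (E < M) ↔ ¬(E < T)
          · rw [if_neg (fun h => absurd (horder.mpr hPOdd) (asymm h)), if_pos hPOdd]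
            norm_num
          · rw [if_pos ((lt_or_gt_of_ne ht).resolve_right
              (fun h => hPOdd (horder.mp h))), if_neg hPOdd]
            norm_num
        by_cases hET2 : E < T <;> by_cases hEM2 : E < M <;>
          rcases hsA with rfl | rfl <;> rcases hsC with rfl | rfl <;>
          simp [hET2, hEM2] at hprod ⊢ <;> omega
      set a := (if E < T then (-1:ℤ) else 1) with ha
      set b := (if E < M then (-1:ℤ) else 1) with hb
      set c := (if M < T then (-1:ℤ) else 1) with hc
      linear_combination (-(c * treeSign R * sB * ∏ r ∈ R, r.sign)) * key
    · have hq' : m2 < m1 := (lt_or_gt_of_ne hm).resolve_left hq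
      have hc1 : IsPlanarTreeDiagram I j
          (insert ⟨E, e2, M, m2, sC⟩ (insert ⟨M, m1, T, t2, sB⟩ R)) :=
        sib_to_chain hjI hEMs hMTs hETs hWE hWM hWT (Or.inr rfl) (Or.inr rfl)
          (Or.inr rfl) (Or.inr rfl) (Or.inl rfl) (Or.inr rfl) (Or.inl rfl) (Or.inr rfl)
          hq' hside b2 hOrd
      have hnc2 : ¬ IsPlanarTreeDiagram I j
          (insert ⟨E, e1, M, m1, sC⟩ (insert ⟨M, m2, T, t1, sB⟩ R)) :=
        fun h => hq (chain_order h)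
      rw [if_pos hc1, if_neg hnc2]
      have key : (if E < T then (-1:ℤ) else 1) * sA = (if E < M then (-1:ℤ) else 1) * sC := by
        have hprod : sA * sC = (if (E < M) ↔ ¬(E < T) then (-1:ℤ) else 1) := by
          rw [hsign, if_neg hq]
          by_cases hPOdd : (E < M) ↔ ¬(E < T)
          · rw [if_neg (fun h => absurd (horder.mpr hPOdd) (asymm h)), if_pos hPOdd]
            norm_num
          · rw [if_pos ((lt_or_gt_of_ne ht).resolve_right
              (fun h => hPOdd (horder.mp h))), if_neg hPOdd]
            norm_num
        by_cases hET2 : E < T <;> by_cases hEM2 : E < M <;>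
          rcases hsA with rfl | rfl <;> rcases hsC with rfl | rfl <;>
          simp [hET2, hEM2] at hprod ⊢ <;> omega
      set a := (if E < T then (-1:ℤ) else 1) with ha
      set b := (if E < M then (-1:ℤ) else 1) with hb
      set c := (if M < T then (-1:ℤ) else 1) with hc
      linear_combination (-(c * treeSign R * sB * ∏ r ∈ R, r.sign)) * key
  · -- no sibling configuration planar: no chain configuration planar either
    have hnc1 : ¬ IsPlanarTreeDiagram I j
        (insert ⟨E, e2, M, m2, sC⟩ (insert ⟨M, m1, T, t2, sB⟩ R)) := by
      intro h
      have hi1 := chain_to_sib (sA := sA) hjI hEMs hMTs hETs hWE hWM hWT (Or.inl rfl) (Or.inr rfl)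
        (Or.inl rfl) (Or.inr rfl) (Or.inl rfl) (Or.inl rfl) (Or.inr rfl) (Or.inr rfl) ht h
      have hi2 := chain_to_sib (sA := sA) hjI hEMs hMTs hETs hWE hWM hWT (Or.inr rfl) (Or.inr rfl)
        (Or.inr rfl) (Or.inr rfl) (Or.inl rfl) (Or.inr rfl) (Or.inl rfl) (Or.inr rfl)
        (Ne.symm ht) h
      by_cases hPOdd : (E < M) ↔ ¬(E < T)
      · rcases lt_or_gt_of_ne ht with ho | ho
        · exact b1 (hi1.mpr (iff_of_true ho hPOdd))
        · exact b2 (hi2.mpr (iff_of_true ho hPOdd))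
      · rcases lt_or_gt_of_ne ht with ho | ho
        · exact b2 (hi2.mpr (iff_of_false (asymm ho) hPOdd))
        · exact b1 (hi1.mpr (iff_of_false (asymm ho) hPOdd))
    have hnc2 : ¬ IsPlanarTreeDiagram I j
        (insert ⟨E, e1, M, m1, sC⟩ (insert ⟨M, m2, T, t1, sB⟩ R)) := by
      intro h
      have hi1 := chain_to_sib (sA := sA) hjI hEMs hMTs hETs hWE hWM hWT (Or.inl rfl) (Or.inl rfl)
        (Or.inl rfl) (Or.inl rfl) (Or.inr rfl) (Or.inl rfl) (Or.inr rfl) (Or.inl rfl) ht h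
      have hi2 := chain_to_sib (sA := sA) hjI hEMs hMTs hETs hWE hWM hWT (Or.inr rfl) (Or.inl rfl)
        (Or.inr rfl) (Or.inl rfl) (Or.inr rfl) (Or.inr rfl) (Or.inl rfl) (Or.inl rfl)
        (Ne.symm ht) h
      by_cases hPOdd : (E < M) ↔ ¬(E < T)
      · rcases lt_or_gt_of_ne ht with ho | ho
        · exact b1 (hi1.mpr (iff_of_true ho hPOdd))
        · exact b2 (hi2.mpr (iff_of_true ho hPOdd))
      · rcases lt_or_gt_of_ne ht with ho | ho
        · exact b2 (hi2.mpr (iff_of_false (asymm ho) hPOdd))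
        · exact b1 (hi1.mpr (iff_of_false (asymm ho) hPOdd))
    rw [if_neg b1, if_neg b2, if_neg hnc1, if_neg hnc2]

end Exchange

/-! #### Invariance under the third move -/

lemma bsign_pm (b : Bool) : bsign b = 1 ∨ bsign b = -1 := by
  cases b
  · exact Or.inr rfl
  · exact Or.inl rfl

lemma bool_order {b : Bool} {p q : ℚ} (h : if b then p < q else q < p) :
    (if p < q then (1:ℤ) else -1) = bsign b ∧ p ≠ q ∧
      ((if q < p then (1:ℤ) else -1) = -(bsign b)) := by
  cases b
  · rw [if_neg Bool.false_ne_true] at h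
    refine ⟨if_neg (asymm h), (ne_of_lt h).symm, ?_⟩
    rw [if_pos h]; norm_num [bsign]
  · rw [if_pos rfl] at h
    refine ⟨if_pos h, ne_of_lt h, ?_⟩
    rw [if_neg (asymm h)]; norm_num [bsign]

lemma tval_single_move {n : ℕ} {I : Finset (Fin n)} {j : Fin n} {x y : GArrow n}
    {R : Finset (GArrow n)}
    (hxR : x ∉ R) (hyR : y ∉ R)
    (hts : y.tailStr = x.tailStr) (hhs : y.headStr = x.headStr) (hsg : y.sign = x.sign)
    (hWt : ∀ r ∈ R, ∀ s : Bool, (r.ep s).1 = x.tailStr →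
      ((r.ep s).2 < min x.tailPos y.tailPos ∨ max x.tailPos y.tailPos < (r.ep s).2))
    (hWh : ∀ r ∈ R, ∀ s : Bool, (r.ep s).1 = x.headStr →
      ((r.ep s).2 < min x.headPos y.headPos ∨ max x.headPos y.headPos < (r.ep s).2))
    (hcross : x.tailStr = x.headStr →
      ((x.headPos < min x.tailPos y.tailPos ∨ max x.tailPos y.tailPos < x.headPos) ∧
       (y.headPos < min x.tailPos y.tailPos ∨ max x.tailPos y.tailPos < y.headPos) ∧
       (x.tailPos < min x.headPos y.headPos ∨ max x.headPos y.headPos < x.tailPos) ∧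
       (y.tailPos < min x.headPos y.headPos ∨ max x.headPos y.headPos < y.tailPos))) :
    tval I j (insert x R) = tval I j (insert y R) := by
  refine tval_insert_eq hxR hyR hts hhs hsg ?_ ?_
  · intro s t h
    cases s <;> cases t
    · simp
    · obtain ⟨w1, w2, w3, w4⟩ := hcross h
      exact win_cross_iff w1 w2 w3
    · obtain ⟨w1, w2, w3, w4⟩ := hcross h.symm
      exact win_cross_iff w3 w4 w1
    · simp
  · intro r hr s t h
    cases t
    · exact win_lt_iff (hWt r hr s h)
    · exact win_lt_iff (hWh r hr s h)

lemma sum_decomp {n : ℕ} (A B C : GArrow n) (R0 : Finset (GArrow n))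
    (hAB : A ≠ B) (hAC : A ≠ C) (hBC : B ≠ C)
    (hA0 : A ∉ R0) (hB0 : B ∉ R0) (hC0 : C ∉ R0) (f : Finset (GArrow n) → ℤ) :
    ∑ S ∈ (insert A (insert B (insert C R0))).powerset, f S =
      ∑ R ∈ R0.powerset, (f R + f (insert C R) + f (insert B R) +
        f (insert B (insert C R)) + f (insert A R) + f (insert A (insert C R)) +
        f (insert A (insert B R)) + f (insert A (insert B (insert C R)))) := by
  have h1 : A ∉ insert B (insert C R0) := by
    rw [mem_insert, mem_insert]
    rintro (rfl | rfl | h) <;> first | exact hAB rfl | exact hAC rfl | exact hA0 h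
  have h2 : B ∉ insert C R0 := by
    rw [mem_insert]
    rintro (rfl | h) <;> first | exact hBC rfl | exact hB0 h
  rw [Finset.sum_powerset_insert h1, Finset.sum_powerset_insert h2,
    Finset.sum_powerset_insert h2, Finset.sum_powerset_insert hC0,
    Finset.sum_powerset_insert hC0, Finset.sum_powerset_insert hC0,
    Finset.sum_powerset_insert hC0]
  rw [← Finset.sum_add_distrib, ← Finset.sum_add_distrib, ← Finset.sum_add_distrib,
    ← Finset.sum_add_distrib, ← Finset.sum_add_distrib, ← Finset.sum_add_distrib,
    ← Finset.sum_add_distrib]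
  exact Finset.sum_congr rfl (fun R _ => by ring)

set_option maxHeartbeats 2000000 in
lemma Z_omega3 {n : ℕ} {I : Finset (Fin n)} {j : Fin n} (hj : j ∉ I) {G G' : GaussDiagram n}
    (h : Omega3Rel G G') : Z I j G = Z I j G' := by
  obtain ⟨sX, sY, sZ, xa, xb, ya, yc, zb, zc, u, w, ox, oy, oz,
    hA, hB, hC, hox, hoy, hoz, hadjX, hadjY, hadjZ, hG'⟩ := h
  obtain ⟨hifx, hxab, hifx'⟩ := bool_order hox
  obtain ⟨hify, hyac, hify'⟩ := bool_order hoy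
  obtain ⟨hifz, hzcb, hifz'⟩ := bool_order hoz
  cases u <;> cases w
  · set s1 : ℤ := bsign false * bsign ox * bsign oy with hs1
    set s2 : ℤ := -(bsign false * bsign ox * bsign oz) with hs2
    set s3 : ℤ := -(bsign false * bsign oy * bsign oz) with hs3
    replace hA : (⟨sY, ya, sX, xa, s1⟩ : GArrow n) ∈ G.arrows := hA
    replace hB : (⟨sZ, zb, sX, xb, s2⟩ : GArrow n) ∈ G.arrows := hB
    replace hC : (⟨sZ, zc, sY, yc, s3⟩ : GArrow n) ∈ G.arrows := hC
    replace hG' : G'.arrows =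
        (((G.arrows.erase ⟨sY, ya, sX, xa, s1⟩).erase ⟨sZ, zb, sX, xb, s2⟩).erase
          ⟨sZ, zc, sY, yc, s3⟩) ∪
        {⟨sY, yc, sX, xb, s1⟩, ⟨sZ, zc, sX, xa, s2⟩, ⟨sZ, zb, sY, ya, s3⟩} := hG'
    have hA'G : (⟨sY, yc, sX, xb, s1⟩ : GArrow n) ∈ G'.arrows := by
      rw [hG']; exact mem_union_right _ (by simp)
    have hB'G : (⟨sZ, zc, sX, xa, s2⟩ : GArrow n) ∈ G'.arrows := by
      rw [hG']; exact mem_union_right _ (by simp)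
    have hC'G : (⟨sZ, zb, sY, ya, s3⟩ : GArrow n) ∈ G'.arrows := by
      rw [hG']; exact mem_union_right _ (by simp)
    have hABne : (⟨sY, ya, sX, xa, s1⟩ : GArrow n) ≠ ⟨sZ, zb, sX, xb, s2⟩ :=
      fun hc => hxab (congrArg GArrow.headPos hc)
    have hBCne : (⟨sZ, zb, sX, xb, s2⟩ : GArrow n) ≠ ⟨sZ, zc, sY, yc, s3⟩ :=
      fun hc => hzcb (congrArg GArrow.tailPos hc).symm
    have hACne : (⟨sY, ya, sX, xa, s1⟩ : GArrow n) ≠ ⟨sZ, zc, sY, yc, s3⟩ := by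
      intro hc
      have h1 : sY = sZ := congrArg GArrow.tailStr hc
      have h2 : ya = zc := congrArg GArrow.tailPos hc
      have hpt : (GArrow.ep (⟨sZ, zc, sX, xa, s2⟩ : GArrow n) false) =
          GArrow.ep (⟨sZ, zb, sY, ya, s3⟩ : GArrow n) true := Prod.ext h1.symm h2.symm
      have := G'.endpoints_distinct _ hB'G _ hC'G false true hpt
      exact Bool.noConfusion this.2
    have hA'B'ne : (⟨sY, yc, sX, xb, s1⟩ : GArrow n) ≠ ⟨sZ, zc, sX, xa, s2⟩ :=
      fun hc => hxab (congrArg GArrow.headPos hc).symm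
    have hB'C'ne : (⟨sZ, zc, sX, xa, s2⟩ : GArrow n) ≠ ⟨sZ, zb, sY, ya, s3⟩ :=
      fun hc => hzcb (congrArg GArrow.tailPos hc)
    have hA'C'ne : (⟨sY, yc, sX, xb, s1⟩ : GArrow n) ≠ ⟨sZ, zb, sY, ya, s3⟩ := by
      intro hc
      have h3 : sX = sY := congrArg GArrow.headStr hc
      have h4 : xb = ya := congrArg GArrow.headPos hc
      have hpt : (GArrow.ep (⟨sY, ya, sX, xa, s1⟩ : GArrow n) false) =
          GArrow.ep (⟨sZ, zb, sX, xb, s2⟩ : GArrow n) true := Prod.ext h3.symm h4.symm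
      have := G.endpoints_distinct _ hA _ hB false true hpt
      exact Bool.noConfusion this.2
    set R0 := ((G.arrows.erase ⟨sY, ya, sX, xa, s1⟩).erase ⟨sZ, zb, sX, xb, s2⟩).erase
      ⟨sZ, zc, sY, yc, s3⟩ with hR0
    have hR0G : ∀ r ∈ R0, r ∈ G.arrows :=
      fun r hr => mem_of_mem_erase (mem_of_mem_erase (mem_of_mem_erase hr))
    have hrA : ∀ r ∈ R0, r ≠ ⟨sY, ya, sX, xa, s1⟩ :=
      fun r hr => (mem_erase.mp (mem_erase.mp (mem_erase.mp hr).2).2).1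
    have hrB : ∀ r ∈ R0, r ≠ ⟨sZ, zb, sX, xb, s2⟩ :=
      fun r hr => (mem_erase.mp (mem_erase.mp hr).2).1
    have hrC : ∀ r ∈ R0, r ≠ ⟨sZ, zc, sY, yc, s3⟩ := fun r hr => (mem_erase.mp hr).1
    have hA0 : (⟨sY, ya, sX, xa, s1⟩ : GArrow n) ∉ R0 := fun hr => hrA _ hr rfl
    have hB0 : (⟨sZ, zb, sX, xb, s2⟩ : GArrow n) ∉ R0 := fun hr => hrB _ hr rfl
    have hC0 : (⟨sZ, zc, sY, yc, s3⟩ : GArrow n) ∉ R0 := fun hr => hrC _ hr rfl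
    have hA'0 : (⟨sY, yc, sX, xb, s1⟩ : GArrow n) ∉ R0 := by
      intro hr
      have hme := G.endpoints_distinct _ (hR0G _ hr) _ hB true true rfl
      exact hrB _ hr hme.1
    have hB'0 : (⟨sZ, zc, sX, xa, s2⟩ : GArrow n) ∉ R0 := by
      intro hr
      have hme := G.endpoints_distinct _ (hR0G _ hr) _ hA true true rfl
      exact hrA _ hr hme.1
    have hC'0 : (⟨sZ, zb, sY, ya, s3⟩ : GArrow n) ∉ R0 := by
      intro hr
      have hme := G.endpoints_distinct _ (hR0G _ hr) _ hA true false rfl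
      exact Bool.noConfusion hme.2
    have hGeq : insert (⟨sY, ya, sX, xa, s1⟩ : GArrow n)
        (insert ⟨sZ, zb, sX, xb, s2⟩ (insert ⟨sZ, zc, sY, yc, s3⟩ R0)) = G.arrows := by
      rw [hR0, insert_erase (mem_erase.mpr ⟨Ne.symm hBCne, mem_erase.mpr ⟨Ne.symm hACne, hC⟩⟩),
        insert_erase (mem_erase.mpr ⟨Ne.symm hABne, hB⟩), insert_erase hA]
    have hG'eq : insert (⟨sY, yc, sX, xb, s1⟩ : GArrow n)
        (insert ⟨sZ, zc, sX, xa, s2⟩ (insert ⟨sZ, zb, sY, ya, s3⟩ R0)) = G'.arrows := by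
      rw [hG']
      ext x
      simp only [mem_insert, mem_union, mem_singleton]
      tauto
    have hWX0 : ∀ r ∈ R0, ∀ s : Bool, (r.ep s).1 = sX →
        ((r.ep s).2 < min xa xb ∨ max xa xb < (r.ep s).2) := fun r hr s hstr =>
      window_of_adj hadjX (hR0G r hr) s hstr
        (G.pos_ne' (hR0G r hr) hA s true (fun hq => hrA r hr hq.1) hstr)
        (G.pos_ne' (hR0G r hr) hB s true (fun hq => hrB r hr hq.1) hstr)
    have hWY0 : ∀ r ∈ R0, ∀ s : Bool, (r.ep s).1 = sY →
        ((r.ep s).2 < min ya yc ∨ max ya yc < (r.ep s).2) := fun r hr s hstr =>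
      window_of_adj hadjY (hR0G r hr) s hstr
        (G.pos_ne' (hR0G r hr) hA s false (fun hq => hrA r hr hq.1) hstr)
        (G.pos_ne' (hR0G r hr) hC s true (fun hq => hrC r hr hq.1) hstr)
    have hWZ0 : ∀ r ∈ R0, ∀ s : Bool, (r.ep s).1 = sZ →
        ((r.ep s).2 < min zb zc ∨ max zb zc < (r.ep s).2) := fun r hr s hstr =>
      window_of_adj hadjZ (hR0G r hr) s hstr
        (G.pos_ne' (hR0G r hr) hB s false (fun hq => hrB r hr hq.1) hstr)
        (G.pos_ne' (hR0G r hr) hC s false (fun hq => hrC r hr hq.1) hstr)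
    rw [Z_eq, Z_eq, ← hGeq, ← hG'eq,
      sum_decomp _ _ _ _ hABne hACne hBCne hA0 hB0 hC0 (tval I j),
      sum_decomp _ _ _ _ hA'B'ne hA'C'ne hB'C'ne hA'0 hB'0 hC'0 (tval I j)]
    refine Finset.sum_congr rfl (fun R hRmem => ?_)
    have hsub : R ⊆ R0 := mem_powerset.mp hRmem
    have hWX : ∀ r ∈ R, ∀ s : Bool, (r.ep s).1 = sX →
        ((r.ep s).2 < min xa xb ∨ max xa xb < (r.ep s).2) :=
      fun r hr => hWX0 r (hsub hr)
    have hWY : ∀ r ∈ R, ∀ s : Bool, (r.ep s).1 = sY →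
        ((r.ep s).2 < min ya yc ∨ max ya yc < (r.ep s).2) :=
      fun r hr => hWY0 r (hsub hr)
    have hWZ : ∀ r ∈ R, ∀ s : Bool, (r.ep s).1 = sZ →
        ((r.ep s).2 < min zb zc ∨ max zb zc < (r.ep s).2) :=
      fun r hr => hWZ0 r (hsub hr)
    have hAR : (⟨sY, ya, sX, xa, s1⟩ : GArrow n) ∉ R := fun hr => hA0 (hsub hr)
    have hBR : (⟨sZ, zb, sX, xb, s2⟩ : GArrow n) ∉ R := fun hr => hB0 (hsub hr)
    have hCR : (⟨sZ, zc, sY, yc, s3⟩ : GArrow n) ∉ R := fun hr => hC0 (hsub hr)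
    have hA'R : (⟨sY, yc, sX, xb, s1⟩ : GArrow n) ∉ R := fun hr => hA'0 (hsub hr)
    have hB'R : (⟨sZ, zc, sX, xa, s2⟩ : GArrow n) ∉ R := fun hr => hB'0 (hsub hr)
    have hC'R : (⟨sZ, zb, sY, ya, s3⟩ : GArrow n) ∉ R := fun hr => hC'0 (hsub hr)
    have eA : tval I j (insert ⟨sY, ya, sX, xa, s1⟩ R) =
        tval I j (insert ⟨sY, yc, sX, xb, s1⟩ R) := by
      refine tval_single_move hAR hA'R rfl rfl rfl hWY hWX ?_
      intro hss
      refine ⟨window_of_adj hadjY hA true hss.symm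
          (G.pos_ne' hA hA true false (fun hq => Bool.noConfusion hq.2) hss.symm)
          (G.pos_ne' hA hC true true (fun hq => hACne hq.1) hss.symm),
        window_of_adj hadjY hB true hss.symm
          (G.pos_ne' hB hA true false (fun hq => hABne hq.1.symm) hss.symm)
          (G.pos_ne' hB hC true true (fun hq => hBCne hq.1) hss.symm),
        window_of_adj hadjX hA false hss
          (G.pos_ne' hA hA false true (fun hq => Bool.noConfusion hq.2) hss)
          (G.pos_ne' hA hB false true (fun hq => hABne hq.1) hss),
        window_of_adj hadjX hC true hss
          (G.pos_ne' hC hA true true (fun hq => hACne hq.1.symm) hss)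
          (G.pos_ne' hC hB true true (fun hq => hBCne hq.1.symm) hss)⟩
    have eB : tval I j (insert ⟨sZ, zb, sX, xb, s2⟩ R) =
        tval I j (insert ⟨sZ, zc, sX, xa, s2⟩ R) := by
      refine tval_single_move hBR hB'R rfl rfl rfl hWZ ?_ ?_
      · intro r hr s hstr
        rw [min_comm xb xa, max_comm xb xa]
        exact hWX r hr s hstr
      intro hss
      constructor
      · exact window_of_adj hadjZ hB true hss.symm
          (G.pos_ne' hB hB true false (fun hq => Bool.noConfusion hq.2) hss.symm)
          (G.pos_ne' hB hC true false (fun hq => hBCne hq.1) hss.symm)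
      constructor
      · exact window_of_adj hadjZ hA true hss.symm
          (G.pos_ne' hA hB true false (fun hq => hABne hq.1) hss.symm)
          (G.pos_ne' hA hC true false (fun hq => hACne hq.1) hss.symm)
      constructor
      · rw [min_comm xb xa, max_comm xb xa]
        exact window_of_adj hadjX hB false hss
          (G.pos_ne' hB hA false true (fun hq => hABne hq.1.symm) hss)
          (G.pos_ne' hB hB false true (fun hq => Bool.noConfusion hq.2) hss)
      · rw [min_comm xb xa, max_comm xb xa]
        exact window_of_adj hadjX hC false hss
          (G.pos_ne' hC hA false true (fun hq => hACne hq.1.symm) hss)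
          (G.pos_ne' hC hB false true (fun hq => hBCne hq.1.symm) hss)
    have eC : tval I j (insert ⟨sZ, zc, sY, yc, s3⟩ R) =
        tval I j (insert ⟨sZ, zb, sY, ya, s3⟩ R) := by
      refine tval_single_move hCR hC'R rfl rfl rfl ?_ ?_ ?_
      · intro r hr s hstr
        rw [min_comm zc zb, max_comm zc zb]
        exact hWZ r hr s hstr
      · intro r hr s hstr
        rw [min_comm yc ya, max_comm yc ya]
        exact hWY r hr s hstr
      intro hss
      constructor
      · rw [min_comm zc zb, max_comm zc zb]
        exact window_of_adj hadjZ hC true hss.symm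
          (G.pos_ne' hC hB true false (fun hq => hBCne hq.1.symm) hss.symm)
          (G.pos_ne' hC hC true false (fun hq => Bool.noConfusion hq.2) hss.symm)
      constructor
      · rw [min_comm zc zb, max_comm zc zb]
        exact window_of_adj hadjZ hA false hss.symm
          (G.pos_ne' hA hB false false (fun hq => hABne hq.1) hss.symm)
          (G.pos_ne' hA hC false false (fun hq => hACne hq.1) hss.symm)
      constructor
      · rw [min_comm yc ya, max_comm yc ya]
        exact window_of_adj hadjY hC false hss
          (G.pos_ne' hC hA false false (fun hq => hACne hq.1.symm) hss)
          (G.pos_ne' hC hC false true (fun hq => Bool.noConfusion hq.2) hss)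
      · rw [min_comm yc ya, max_comm yc ya]
        exact window_of_adj hadjY hB false hss
          (G.pos_ne' hB hA false false (fun hq => hABne hq.1.symm) hss)
          (G.pos_ne' hB hC false true (fun hq => hBCne hq.1) hss)
    have zBC : tval I j (insert ⟨sZ, zb, sX, xb, s2⟩ (insert ⟨sZ, zc, sY, yc, s3⟩ R)) = 0 :=
      tval_zero_of_not_tree (not_tree_two_tails (mem_insert_self _ _)
        (mem_insert_of_mem (mem_insert_self _ _)) hBCne rfl)
    have zB'C' : tval I j (insert ⟨sZ, zc, sX, xa, s2⟩ (insert ⟨sZ, zb, sY, ya, s3⟩ R)) = 0 :=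
      tval_zero_of_not_tree (not_tree_two_tails (mem_insert_self _ _)
        (mem_insert_of_mem (mem_insert_self _ _)) hB'C'ne rfl)
    have zABC : tval I j (insert ⟨sY, ya, sX, xa, s1⟩ (insert ⟨sZ, zb, sX, xb, s2⟩
        (insert ⟨sZ, zc, sY, yc, s3⟩ R))) = 0 :=
      tval_zero_of_not_tree (not_tree_two_tails
        (mem_insert_of_mem (mem_insert_self _ _))
        (mem_insert_of_mem (mem_insert_of_mem (mem_insert_self _ _))) hBCne rfl)
    have zA'B'C' : tval I j (insert ⟨sY, yc, sX, xb, s1⟩ (insert ⟨sZ, zc, sX, xa, s2⟩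
        (insert ⟨sZ, zb, sY, ya, s3⟩ R))) = 0 :=
      tval_zero_of_not_tree (not_tree_two_tails
        (mem_insert_of_mem (mem_insert_self _ _))
        (mem_insert_of_mem (mem_insert_of_mem (mem_insert_self _ _))) hB'C'ne rfl)
    have ex : tval I j (insert ⟨sZ, zb, sX, xb, s2⟩ (insert ⟨sY, ya, sX, xa, s1⟩ R))
        + tval I j (insert ⟨sZ, zc, sY, yc, s3⟩ (insert ⟨sY, ya, sX, xa, s1⟩ R))
      = tval I j (insert ⟨sZ, zc, sX, xa, s2⟩ (insert ⟨sY, yc, sX, xb, s1⟩ R))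
        + tval I j (insert ⟨sZ, zb, sY, ya, s3⟩ (insert ⟨sY, yc, sX, xb, s1⟩ R)) := by
      refine exchange_sum (E := sZ) (M := sY) (T := sX) (e1 := zb) (e2 := zc)
        (m1 := ya) (m2 := yc) (t1 := xb) (t2 := xa) hj hWZ hWY ?_
        hyac (Ne.symm hxab) (G.sign_pm _ hB) (G.sign_pm _ hC) ?_
      · intro r hr s hstr
        rw [min_comm xb xa, max_comm xb xa]
        exact hWX r hr s hstr
      · rw [hifx', hify, hs2, hs3]
        rcases bsign_pm ox with h1 | h1 <;> rcases bsign_pm oy with h2 | h2 <;>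
          rcases bsign_pm oz with h3 | h3 <;> rw [h1, h2, h3] <;> norm_num [bsign]
    have cAB : tval I j (insert ⟨sY, ya, sX, xa, s1⟩ (insert ⟨sZ, zb, sX, xb, s2⟩ R)) =
        tval I j (insert ⟨sZ, zb, sX, xb, s2⟩ (insert ⟨sY, ya, sX, xa, s1⟩ R)) := by rw [Finset.insert_comm]
    have cAC : tval I j (insert ⟨sY, ya, sX, xa, s1⟩ (insert ⟨sZ, zc, sY, yc, s3⟩ R)) =
        tval I j (insert ⟨sZ, zc, sY, yc, s3⟩ (insert ⟨sY, ya, sX, xa, s1⟩ R)) := by rw [Finset.insert_comm]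
    have cA'B' : tval I j (insert ⟨sY, yc, sX, xb, s1⟩ (insert ⟨sZ, zc, sX, xa, s2⟩ R)) =
        tval I j (insert ⟨sZ, zc, sX, xa, s2⟩ (insert ⟨sY, yc, sX, xb, s1⟩ R)) := by rw [Finset.insert_comm]
    have cA'C' : tval I j (insert ⟨sY, yc, sX, xb, s1⟩ (insert ⟨sZ, zb, sY, ya, s3⟩ R)) =
        tval I j (insert ⟨sZ, zb, sY, ya, s3⟩ (insert ⟨sY, yc, sX, xb, s1⟩ R)) := by rw [Finset.insert_comm]
    linarith [eA, eB, eC, zBC, zB'C', zABC, zA'B'C', ex, cAB, cAC, cA'B', cA'C']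
  · set s1 : ℤ := bsign false * bsign ox * bsign oy with hs1
    set s2 : ℤ := -(bsign false * bsign ox * bsign oz) with hs2
    set s3 : ℤ := -(bsign true * bsign oy * bsign oz) with hs3
    replace hA : (⟨sY, ya, sX, xa, s1⟩ : GArrow n) ∈ G.arrows := hA
    replace hB : (⟨sZ, zb, sX, xb, s2⟩ : GArrow n) ∈ G.arrows := hB
    replace hC : (⟨sY, yc, sZ, zc, s3⟩ : GArrow n) ∈ G.arrows := hC
    replace hG' : G'.arrows =
        (((G.arrows.erase ⟨sY, ya, sX, xa, s1⟩).erase ⟨sZ, zb, sX, xb, s2⟩).erase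
          ⟨sY, yc, sZ, zc, s3⟩) ∪
        {⟨sY, yc, sX, xb, s1⟩, ⟨sZ, zc, sX, xa, s2⟩, ⟨sY, ya, sZ, zb, s3⟩} := hG'
    have hA'G : (⟨sY, yc, sX, xb, s1⟩ : GArrow n) ∈ G'.arrows := by
      rw [hG']; exact mem_union_right _ (by simp)
    have hB'G : (⟨sZ, zc, sX, xa, s2⟩ : GArrow n) ∈ G'.arrows := by
      rw [hG']; exact mem_union_right _ (by simp)
    have hC'G : (⟨sY, ya, sZ, zb, s3⟩ : GArrow n) ∈ G'.arrows := by
      rw [hG']; exact mem_union_right _ (by simp)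
    have hABne : (⟨sY, ya, sX, xa, s1⟩ : GArrow n) ≠ ⟨sZ, zb, sX, xb, s2⟩ :=
      fun hc => hxab (congrArg GArrow.headPos hc)
    have hACne : (⟨sY, ya, sX, xa, s1⟩ : GArrow n) ≠ ⟨sY, yc, sZ, zc, s3⟩ :=
      fun hc => hyac (congrArg GArrow.tailPos hc)
    have hBCne : (⟨sZ, zb, sX, xb, s2⟩ : GArrow n) ≠ ⟨sY, yc, sZ, zc, s3⟩ := by
      intro hc
      have h1 : sZ = sY := congrArg GArrow.tailStr hc
      have h2 : zb = yc := congrArg GArrow.tailPos hc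
      have hpt : (GArrow.ep (⟨sY, yc, sX, xb, s1⟩ : GArrow n) false) =
          GArrow.ep (⟨sY, ya, sZ, zb, s3⟩ : GArrow n) true := Prod.ext h1.symm h2.symm
      have := G'.endpoints_distinct _ hA'G _ hC'G false true hpt
      exact Bool.noConfusion this.2
    have hA'B'ne : (⟨sY, yc, sX, xb, s1⟩ : GArrow n) ≠ ⟨sZ, zc, sX, xa, s2⟩ :=
      fun hc => hxab (congrArg GArrow.headPos hc).symm
    have hA'C'ne : (⟨sY, yc, sX, xb, s1⟩ : GArrow n) ≠ ⟨sY, ya, sZ, zb, s3⟩ :=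
      fun hc => hyac (congrArg GArrow.tailPos hc).symm
    have hB'C'ne : (⟨sZ, zc, sX, xa, s2⟩ : GArrow n) ≠ ⟨sY, ya, sZ, zb, s3⟩ := by
      intro hc
      have h1 : sZ = sY := congrArg GArrow.tailStr hc
      have h2 : zc = ya := congrArg GArrow.tailPos hc
      have hpt : (GArrow.ep (⟨sY, ya, sX, xa, s1⟩ : GArrow n) false) =
          GArrow.ep (⟨sY, yc, sZ, zc, s3⟩ : GArrow n) true := Prod.ext h1.symm h2.symm
      have := G.endpoints_distinct _ hA _ hC false true hpt
      exact Bool.noConfusion this.2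
    set R0 := ((G.arrows.erase ⟨sY, ya, sX, xa, s1⟩).erase ⟨sZ, zb, sX, xb, s2⟩).erase
      ⟨sY, yc, sZ, zc, s3⟩ with hR0
    have hR0G : ∀ r ∈ R0, r ∈ G.arrows :=
      fun r hr => mem_of_mem_erase (mem_of_mem_erase (mem_of_mem_erase hr))
    have hrA : ∀ r ∈ R0, r ≠ ⟨sY, ya, sX, xa, s1⟩ :=
      fun r hr => (mem_erase.mp (mem_erase.mp (mem_erase.mp hr).2).2).1
    have hrB : ∀ r ∈ R0, r ≠ ⟨sZ, zb, sX, xb, s2⟩ :=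
      fun r hr => (mem_erase.mp (mem_erase.mp hr).2).1
    have hrC : ∀ r ∈ R0, r ≠ ⟨sY, yc, sZ, zc, s3⟩ := fun r hr => (mem_erase.mp hr).1
    have hA0 : (⟨sY, ya, sX, xa, s1⟩ : GArrow n) ∉ R0 := fun hr => hrA _ hr rfl
    have hB0 : (⟨sZ, zb, sX, xb, s2⟩ : GArrow n) ∉ R0 := fun hr => hrB _ hr rfl
    have hC0 : (⟨sY, yc, sZ, zc, s3⟩ : GArrow n) ∉ R0 := fun hr => hrC _ hr rfl
    have hWX0 : ∀ r ∈ R0, ∀ s : Bool, (r.ep s).1 = sX →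
        ((r.ep s).2 < min xa xb ∨ max xa xb < (r.ep s).2) := fun r hr s hstr =>
      window_of_adj hadjX (hR0G r hr) s hstr
        (G.pos_ne' (hR0G r hr) hA s true (fun hq => hrA r hr hq.1) hstr)
        (G.pos_ne' (hR0G r hr) hB s true (fun hq => hrB r hr hq.1) hstr)
    have hWY0 : ∀ r ∈ R0, ∀ s : Bool, (r.ep s).1 = sY →
        ((r.ep s).2 < min ya yc ∨ max ya yc < (r.ep s).2) := fun r hr s hstr =>
      window_of_adj hadjY (hR0G r hr) s hstr
        (G.pos_ne' (hR0G r hr) hA s false (fun hq => hrA r hr hq.1) hstr)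
        (G.pos_ne' (hR0G r hr) hC s false (fun hq => hrC r hr hq.1) hstr)
    have hWZ0 : ∀ r ∈ R0, ∀ s : Bool, (r.ep s).1 = sZ →
        ((r.ep s).2 < min zb zc ∨ max zb zc < (r.ep s).2) := fun r hr s hstr =>
      window_of_adj hadjZ (hR0G r hr) s hstr
        (G.pos_ne' (hR0G r hr) hB s false (fun hq => hrB r hr hq.1) hstr)
        (G.pos_ne' (hR0G r hr) hC s true (fun hq => hrC r hr hq.1) hstr)
    have hA'0 : (⟨sY, yc, sX, xb, s1⟩ : GArrow n) ∉ R0 := by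
      intro hr
      have hme := G.endpoints_distinct _ (hR0G _ hr) _ hB true true rfl
      exact hrB _ hr hme.1
    have hB'0 : (⟨sZ, zc, sX, xa, s2⟩ : GArrow n) ∉ R0 := by
      intro hr
      have hme := G.endpoints_distinct _ (hR0G _ hr) _ hA true true rfl
      exact hrA _ hr hme.1
    have hC'0 : (⟨sY, ya, sZ, zb, s3⟩ : GArrow n) ∉ R0 := by
      intro hr
      have hme := G.endpoints_distinct _ (hR0G _ hr) _ hA false false rfl
      exact hrA _ hr hme.1
    have hGeq : insert (⟨sY, ya, sX, xa, s1⟩ : GArrow n)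
        (insert ⟨sZ, zb, sX, xb, s2⟩ (insert ⟨sY, yc, sZ, zc, s3⟩ R0)) = G.arrows := by
      rw [hR0, insert_erase (mem_erase.mpr ⟨Ne.symm hBCne, mem_erase.mpr ⟨Ne.symm hACne, hC⟩⟩),
        insert_erase (mem_erase.mpr ⟨Ne.symm hABne, hB⟩), insert_erase hA]
    have hG'eq : insert (⟨sY, yc, sX, xb, s1⟩ : GArrow n)
        (insert ⟨sZ, zc, sX, xa, s2⟩ (insert ⟨sY, ya, sZ, zb, s3⟩ R0)) = G'.arrows := by
      rw [hG']
      ext x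
      simp only [mem_insert, mem_union, mem_singleton]
      tauto
    rw [Z_eq, Z_eq, ← hGeq, ← hG'eq,
      sum_decomp _ _ _ _ hABne hACne hBCne hA0 hB0 hC0 (tval I j),
      sum_decomp _ _ _ _ hA'B'ne hA'C'ne hB'C'ne hA'0 hB'0 hC'0 (tval I j)]
    refine Finset.sum_congr rfl (fun R hRmem => ?_)
    have hsub : R ⊆ R0 := mem_powerset.mp hRmem
    have hWX : ∀ r ∈ R, ∀ s : Bool, (r.ep s).1 = sX →
        ((r.ep s).2 < min xa xb ∨ max xa xb < (r.ep s).2) :=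
      fun r hr => hWX0 r (hsub hr)
    have hWY : ∀ r ∈ R, ∀ s : Bool, (r.ep s).1 = sY →
        ((r.ep s).2 < min ya yc ∨ max ya yc < (r.ep s).2) :=
      fun r hr => hWY0 r (hsub hr)
    have hWZ : ∀ r ∈ R, ∀ s : Bool, (r.ep s).1 = sZ →
        ((r.ep s).2 < min zb zc ∨ max zb zc < (r.ep s).2) :=
      fun r hr => hWZ0 r (hsub hr)
    have hAR : (⟨sY, ya, sX, xa, s1⟩ : GArrow n) ∉ R := fun hr => hA0 (hsub hr)
    have hBR : (⟨sZ, zb, sX, xb, s2⟩ : GArrow n) ∉ R := fun hr => hB0 (hsub hr)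
    have hCR : (⟨sY, yc, sZ, zc, s3⟩ : GArrow n) ∉ R := fun hr => hC0 (hsub hr)
    have hA'R : (⟨sY, yc, sX, xb, s1⟩ : GArrow n) ∉ R := fun hr => hA'0 (hsub hr)
    have hB'R : (⟨sZ, zc, sX, xa, s2⟩ : GArrow n) ∉ R := fun hr => hB'0 (hsub hr)
    have hC'R : (⟨sY, ya, sZ, zb, s3⟩ : GArrow n) ∉ R := fun hr => hC'0 (hsub hr)
    have eA : tval I j (insert ⟨sY, ya, sX, xa, s1⟩ R) =
        tval I j (insert ⟨sY, yc, sX, xb, s1⟩ R) := by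
      refine tval_single_move hAR hA'R rfl rfl rfl hWY hWX ?_
      intro hss
      refine ⟨window_of_adj hadjY hA true hss.symm
          (G.pos_ne' hA hA true false (fun hq => Bool.noConfusion hq.2) hss.symm)
          (G.pos_ne' hA hC true false (fun hq => hACne hq.1) hss.symm),
        window_of_adj hadjY hB true hss.symm
          (G.pos_ne' hB hA true false (fun hq => hABne hq.1.symm) hss.symm)
          (G.pos_ne' hB hC true false (fun hq => hBCne hq.1) hss.symm),
        window_of_adj hadjX hA false hss
          (G.pos_ne' hA hA false true (fun hq => Bool.noConfusion hq.2) hss)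
          (G.pos_ne' hA hB false true (fun hq => hABne hq.1) hss),
        window_of_adj hadjX hC false hss
          (G.pos_ne' hC hA false true (fun hq => hACne hq.1.symm) hss)
          (G.pos_ne' hC hB false true (fun hq => hBCne hq.1.symm) hss)⟩
    have eB : tval I j (insert ⟨sZ, zb, sX, xb, s2⟩ R) =
        tval I j (insert ⟨sZ, zc, sX, xa, s2⟩ R) := by
      refine tval_single_move hBR hB'R rfl rfl rfl hWZ ?_ ?_
      · intro r hr s hstr
        rw [min_comm xb xa, max_comm xb xa]
        exact hWX r hr s hstr
      intro hss
      constructor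
      · exact window_of_adj hadjZ hB true hss.symm
          (G.pos_ne' hB hB true false (fun hq => Bool.noConfusion hq.2) hss.symm)
          (G.pos_ne' hB hC true true (fun hq => hBCne hq.1) hss.symm)
      constructor
      · exact window_of_adj hadjZ hA true hss.symm
          (G.pos_ne' hA hB true false (fun hq => hABne hq.1) hss.symm)
          (G.pos_ne' hA hC true true (fun hq => hACne hq.1) hss.symm)
      constructor
      · rw [min_comm xb xa, max_comm xb xa]
        exact window_of_adj hadjX hB false hss
          (G.pos_ne' hB hA false true (fun hq => hABne hq.1.symm) hss)
          (G.pos_ne' hB hB false true (fun hq => Bool.noConfusion hq.2) hss)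
      · rw [min_comm xb xa, max_comm xb xa]
        exact window_of_adj hadjX hC true hss
          (G.pos_ne' hC hA true true (fun hq => hACne hq.1.symm) hss)
          (G.pos_ne' hC hB true true (fun hq => hBCne hq.1.symm) hss)
    have eC : tval I j (insert ⟨sY, yc, sZ, zc, s3⟩ R) =
        tval I j (insert ⟨sY, ya, sZ, zb, s3⟩ R) := by
      refine tval_single_move hCR hC'R rfl rfl rfl ?_ ?_ ?_
      · intro r hr s hstr
        rw [min_comm yc ya, max_comm yc ya]
        exact hWY r hr s hstr
      · intro r hr s hstr
        rw [min_comm zc zb, max_comm zc zb]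
        exact hWZ r hr s hstr
      intro hss
      constructor
      · rw [min_comm yc ya, max_comm yc ya]
        exact window_of_adj hadjY hC true hss.symm
          (G.pos_ne' hC hA true false (fun hq => hACne hq.1.symm) hss.symm)
          (G.pos_ne' hC hC true false (fun hq => Bool.noConfusion hq.2) hss.symm)
      constructor
      · rw [min_comm yc ya, max_comm yc ya]
        exact window_of_adj hadjY hB false hss.symm
          (G.pos_ne' hB hA false false (fun hq => hABne hq.1.symm) hss.symm)
          (G.pos_ne' hB hC false false (fun hq => hBCne hq.1) hss.symm)
      constructor
      · rw [min_comm zc zb, max_comm zc zb]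
        exact window_of_adj hadjZ hC false hss
          (G.pos_ne' hC hB false false (fun hq => hBCne hq.1.symm) hss)
          (G.pos_ne' hC hC false true (fun hq => Bool.noConfusion hq.2) hss)
      · rw [min_comm zc zb, max_comm zc zb]
        exact window_of_adj hadjZ hA false hss
          (G.pos_ne' hA hB false false (fun hq => hABne hq.1) hss)
          (G.pos_ne' hA hC false true (fun hq => hACne hq.1) hss)
    have zAC : tval I j (insert ⟨sY, ya, sX, xa, s1⟩ (insert ⟨sY, yc, sZ, zc, s3⟩ R)) = 0 :=
      tval_zero_of_not_tree (not_tree_two_tails (mem_insert_self _ _)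
        (mem_insert_of_mem (mem_insert_self _ _)) hACne rfl)
    have zA'C' : tval I j (insert ⟨sY, yc, sX, xb, s1⟩ (insert ⟨sY, ya, sZ, zb, s3⟩ R)) = 0 :=
      tval_zero_of_not_tree (not_tree_two_tails (mem_insert_self _ _)
        (mem_insert_of_mem (mem_insert_self _ _)) hA'C'ne rfl)
    have zABC : tval I j (insert ⟨sY, ya, sX, xa, s1⟩ (insert ⟨sZ, zb, sX, xb, s2⟩
        (insert ⟨sY, yc, sZ, zc, s3⟩ R))) = 0 :=
      tval_zero_of_not_tree (not_tree_two_tails (mem_insert_self _ _)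
        (mem_insert_of_mem (mem_insert_of_mem (mem_insert_self _ _))) hACne rfl)
    have zA'B'C' : tval I j (insert ⟨sY, yc, sX, xb, s1⟩ (insert ⟨sZ, zc, sX, xa, s2⟩
        (insert ⟨sY, ya, sZ, zb, s3⟩ R))) = 0 :=
      tval_zero_of_not_tree (not_tree_two_tails (mem_insert_self _ _)
        (mem_insert_of_mem (mem_insert_of_mem (mem_insert_self _ _))) hA'C'ne rfl)
    have ex : tval I j (insert ⟨sY, ya, sX, xa, s1⟩ (insert ⟨sZ, zb, sX, xb, s2⟩ R))
        + tval I j (insert ⟨sY, yc, sZ, zc, s3⟩ (insert ⟨sZ, zb, sX, xb, s2⟩ R))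
      = tval I j (insert ⟨sY, yc, sX, xb, s1⟩ (insert ⟨sZ, zc, sX, xa, s2⟩ R))
        + tval I j (insert ⟨sY, ya, sZ, zb, s3⟩ (insert ⟨sZ, zc, sX, xa, s2⟩ R)) := by
      refine exchange_sum (E := sY) (M := sZ) (T := sX) (e1 := ya) (e2 := yc)
        (m1 := zb) (m2 := zc) (t1 := xa) (t2 := xb) hj hWY hWZ hWX
        (Ne.symm hzcb) hxab (G.sign_pm _ hA) (G.sign_pm _ hC) ?_
      · rw [hifx, hifz', hs1, hs3]
        rcases bsign_pm ox with h1 | h1 <;> rcases bsign_pm oy with h2 | h2 <;>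
          rcases bsign_pm oz with h3 | h3 <;> rw [h1, h2, h3] <;> norm_num [bsign]
    have cBC : tval I j (insert ⟨sZ, zb, sX, xb, s2⟩ (insert ⟨sY, yc, sZ, zc, s3⟩ R)) =
        tval I j (insert ⟨sY, yc, sZ, zc, s3⟩ (insert ⟨sZ, zb, sX, xb, s2⟩ R)) := by rw [Finset.insert_comm]
    have cB'C' : tval I j (insert ⟨sZ, zc, sX, xa, s2⟩ (insert ⟨sY, ya, sZ, zb, s3⟩ R)) =
        tval I j (insert ⟨sY, ya, sZ, zb, s3⟩ (insert ⟨sZ, zc, sX, xa, s2⟩ R)) := by rw [Finset.insert_comm]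
    linarith [eA, eB, eC, zAC, zA'C', zABC, zA'B'C', ex, cBC, cB'C']
  · set s1 : ℤ := bsign true * bsign ox * bsign oy with hs1
    set s2 : ℤ := -(bsign true * bsign ox * bsign oz) with hs2
    set s3 : ℤ := -(bsign false * bsign oy * bsign oz) with hs3
    replace hA : (⟨sX, xa, sY, ya, s1⟩ : GArrow n) ∈ G.arrows := hA
    replace hB : (⟨sX, xb, sZ, zb, s2⟩ : GArrow n) ∈ G.arrows := hB
    replace hC : (⟨sZ, zc, sY, yc, s3⟩ : GArrow n) ∈ G.arrows := hC
    replace hG' : G'.arrows =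
        (((G.arrows.erase ⟨sX, xa, sY, ya, s1⟩).erase ⟨sX, xb, sZ, zb, s2⟩).erase
          ⟨sZ, zc, sY, yc, s3⟩) ∪
        {⟨sX, xb, sY, yc, s1⟩, ⟨sX, xa, sZ, zc, s2⟩, ⟨sZ, zb, sY, ya, s3⟩} := hG'
    have hA'G : (⟨sX, xb, sY, yc, s1⟩ : GArrow n) ∈ G'.arrows := by
      rw [hG']; exact mem_union_right _ (by simp)
    have hB'G : (⟨sX, xa, sZ, zc, s2⟩ : GArrow n) ∈ G'.arrows := by
      rw [hG']; exact mem_union_right _ (by simp)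
    have hC'G : (⟨sZ, zb, sY, ya, s3⟩ : GArrow n) ∈ G'.arrows := by
      rw [hG']; exact mem_union_right _ (by simp)
    have hABne : (⟨sX, xa, sY, ya, s1⟩ : GArrow n) ≠ ⟨sX, xb, sZ, zb, s2⟩ :=
      fun hc => hxab (congrArg GArrow.tailPos hc)
    have hACne : (⟨sX, xa, sY, ya, s1⟩ : GArrow n) ≠ ⟨sZ, zc, sY, yc, s3⟩ :=
      fun hc => hyac (congrArg GArrow.headPos hc)
    have hBCne : (⟨sX, xb, sZ, zb, s2⟩ : GArrow n) ≠ ⟨sZ, zc, sY, yc, s3⟩ := by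
      intro hc
      have h1 : sX = sZ := congrArg GArrow.tailStr hc
      have h2 : xb = zc := congrArg GArrow.tailPos hc
      have hpt : (GArrow.ep (⟨sX, xb, sY, yc, s1⟩ : GArrow n) false) =
          GArrow.ep (⟨sX, xa, sZ, zc, s2⟩ : GArrow n) true := Prod.ext h1 h2
      have := G'.endpoints_distinct _ hA'G _ hB'G false true hpt
      exact Bool.noConfusion this.2
    have hA'B'ne : (⟨sX, xb, sY, yc, s1⟩ : GArrow n) ≠ ⟨sX, xa, sZ, zc, s2⟩ :=
      fun hc => hxab (congrArg GArrow.tailPos hc).symm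
    have hA'C'ne : (⟨sX, xb, sY, yc, s1⟩ : GArrow n) ≠ ⟨sZ, zb, sY, ya, s3⟩ :=
      fun hc => hyac (congrArg GArrow.headPos hc).symm
    have hB'C'ne : (⟨sX, xa, sZ, zc, s2⟩ : GArrow n) ≠ ⟨sZ, zb, sY, ya, s3⟩ := by
      intro hc
      have h1 : sX = sZ := congrArg GArrow.tailStr hc
      have h2 : xa = zb := congrArg GArrow.tailPos hc
      have hpt : (GArrow.ep (⟨sX, xa, sY, ya, s1⟩ : GArrow n) false) =
          GArrow.ep (⟨sX, xb, sZ, zb, s2⟩ : GArrow n) true := Prod.ext h1 h2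
      have := G.endpoints_distinct _ hA _ hB false true hpt
      exact Bool.noConfusion this.2
    set R0 := ((G.arrows.erase ⟨sX, xa, sY, ya, s1⟩).erase ⟨sX, xb, sZ, zb, s2⟩).erase
      ⟨sZ, zc, sY, yc, s3⟩ with hR0
    have hR0G : ∀ r ∈ R0, r ∈ G.arrows :=
      fun r hr => mem_of_mem_erase (mem_of_mem_erase (mem_of_mem_erase hr))
    have hrA : ∀ r ∈ R0, r ≠ ⟨sX, xa, sY, ya, s1⟩ :=
      fun r hr => (mem_erase.mp (mem_erase.mp (mem_erase.mp hr).2).2).1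
    have hrB : ∀ r ∈ R0, r ≠ ⟨sX, xb, sZ, zb, s2⟩ :=
      fun r hr => (mem_erase.mp (mem_erase.mp hr).2).1
    have hrC : ∀ r ∈ R0, r ≠ ⟨sZ, zc, sY, yc, s3⟩ := fun r hr => (mem_erase.mp hr).1
    have hA0 : (⟨sX, xa, sY, ya, s1⟩ : GArrow n) ∉ R0 := fun hr => hrA _ hr rfl
    have hB0 : (⟨sX, xb, sZ, zb, s2⟩ : GArrow n) ∉ R0 := fun hr => hrB _ hr rfl
    have hC0 : (⟨sZ, zc, sY, yc, s3⟩ : GArrow n) ∉ R0 := fun hr => hrC _ hr rfl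
    have hWX0 : ∀ r ∈ R0, ∀ s : Bool, (r.ep s).1 = sX →
        ((r.ep s).2 < min xa xb ∨ max xa xb < (r.ep s).2) := fun r hr s hstr =>
      window_of_adj hadjX (hR0G r hr) s hstr
        (G.pos_ne' (hR0G r hr) hA s false (fun hq => hrA r hr hq.1) hstr)
        (G.pos_ne' (hR0G r hr) hB s false (fun hq => hrB r hr hq.1) hstr)
    have hWY0 : ∀ r ∈ R0, ∀ s : Bool, (r.ep s).1 = sY →
        ((r.ep s).2 < min ya yc ∨ max ya yc < (r.ep s).2) := fun r hr s hstr =>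
      window_of_adj hadjY (hR0G r hr) s hstr
        (G.pos_ne' (hR0G r hr) hA s true (fun hq => hrA r hr hq.1) hstr)
        (G.pos_ne' (hR0G r hr) hC s true (fun hq => hrC r hr hq.1) hstr)
    have hWZ0 : ∀ r ∈ R0, ∀ s : Bool, (r.ep s).1 = sZ →
        ((r.ep s).2 < min zb zc ∨ max zb zc < (r.ep s).2) := fun r hr s hstr =>
      window_of_adj hadjZ (hR0G r hr) s hstr
        (G.pos_ne' (hR0G r hr) hB s true (fun hq => hrB r hr hq.1) hstr)
        (G.pos_ne' (hR0G r hr) hC s false (fun hq => hrC r hr hq.1) hstr)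
    have hA'0 : (⟨sX, xb, sY, yc, s1⟩ : GArrow n) ∉ R0 := by
      intro hr
      have hme := G.endpoints_distinct _ (hR0G _ hr) _ hB false false rfl
      exact hrB _ hr hme.1
    have hB'0 : (⟨sX, xa, sZ, zc, s2⟩ : GArrow n) ∉ R0 := by
      intro hr
      have hme := G.endpoints_distinct _ (hR0G _ hr) _ hA false false rfl
      exact hrA _ hr hme.1
    have hC'0 : (⟨sZ, zb, sY, ya, s3⟩ : GArrow n) ∉ R0 := by
      intro hr
      have hme := G.endpoints_distinct _ (hR0G _ hr) _ hA true true rfl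
      exact hrA _ hr hme.1
    have hGeq : insert (⟨sX, xa, sY, ya, s1⟩ : GArrow n)
        (insert ⟨sX, xb, sZ, zb, s2⟩ (insert ⟨sZ, zc, sY, yc, s3⟩ R0)) = G.arrows := by
      rw [hR0, insert_erase (mem_erase.mpr ⟨Ne.symm hBCne, mem_erase.mpr ⟨Ne.symm hACne, hC⟩⟩),
        insert_erase (mem_erase.mpr ⟨Ne.symm hABne, hB⟩), insert_erase hA]
    have hG'eq : insert (⟨sX, xb, sY, yc, s1⟩ : GArrow n)
        (insert ⟨sX, xa, sZ, zc, s2⟩ (insert ⟨sZ, zb, sY, ya, s3⟩ R0)) = G'.arrows := by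
      rw [hG']
      ext x
      simp only [mem_insert, mem_union, mem_singleton]
      tauto
    rw [Z_eq, Z_eq, ← hGeq, ← hG'eq,
      sum_decomp _ _ _ _ hABne hACne hBCne hA0 hB0 hC0 (tval I j),
      sum_decomp _ _ _ _ hA'B'ne hA'C'ne hB'C'ne hA'0 hB'0 hC'0 (tval I j)]
    refine Finset.sum_congr rfl (fun R hRmem => ?_)
    have hsub : R ⊆ R0 := mem_powerset.mp hRmem
    have hWX : ∀ r ∈ R, ∀ s : Bool, (r.ep s).1 = sX →
        ((r.ep s).2 < min xa xb ∨ max xa xb < (r.ep s).2) :=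
      fun r hr => hWX0 r (hsub hr)
    have hWY : ∀ r ∈ R, ∀ s : Bool, (r.ep s).1 = sY →
        ((r.ep s).2 < min ya yc ∨ max ya yc < (r.ep s).2) :=
      fun r hr => hWY0 r (hsub hr)
    have hWZ : ∀ r ∈ R, ∀ s : Bool, (r.ep s).1 = sZ →
        ((r.ep s).2 < min zb zc ∨ max zb zc < (r.ep s).2) :=
      fun r hr => hWZ0 r (hsub hr)
    have hAR : (⟨sX, xa, sY, ya, s1⟩ : GArrow n) ∉ R := fun hr => hA0 (hsub hr)
    have hBR : (⟨sX, xb, sZ, zb, s2⟩ : GArrow n) ∉ R := fun hr => hB0 (hsub hr)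
    have hCR : (⟨sZ, zc, sY, yc, s3⟩ : GArrow n) ∉ R := fun hr => hC0 (hsub hr)
    have hA'R : (⟨sX, xb, sY, yc, s1⟩ : GArrow n) ∉ R := fun hr => hA'0 (hsub hr)
    have hB'R : (⟨sX, xa, sZ, zc, s2⟩ : GArrow n) ∉ R := fun hr => hB'0 (hsub hr)
    have hC'R : (⟨sZ, zb, sY, ya, s3⟩ : GArrow n) ∉ R := fun hr => hC'0 (hsub hr)
    have eA : tval I j (insert ⟨sX, xa, sY, ya, s1⟩ R) =
        tval I j (insert ⟨sX, xb, sY, yc, s1⟩ R) := by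
      refine tval_single_move hAR hA'R rfl rfl rfl hWX hWY ?_
      intro hss
      refine ⟨window_of_adj hadjX hA true hss.symm
          (G.pos_ne' hA hA true false (fun hq => Bool.noConfusion hq.2) hss.symm)
          (G.pos_ne' hA hB true false (fun hq => hABne hq.1) hss.symm),
        window_of_adj hadjX hC true hss.symm
          (G.pos_ne' hC hA true false (fun hq => hACne hq.1.symm) hss.symm)
          (G.pos_ne' hC hB true false (fun hq => hBCne hq.1.symm) hss.symm),
        window_of_adj hadjY hA false hss
          (G.pos_ne' hA hA false true (fun hq => Bool.noConfusion hq.2) hss)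
          (G.pos_ne' hA hC false true (fun hq => hACne hq.1) hss),
        window_of_adj hadjY hB false hss
          (G.pos_ne' hB hA false true (fun hq => hABne hq.1.symm) hss)
          (G.pos_ne' hB hC false true (fun hq => hBCne hq.1) hss)⟩
    have eB : tval I j (insert ⟨sX, xb, sZ, zb, s2⟩ R) =
        tval I j (insert ⟨sX, xa, sZ, zc, s2⟩ R) := by
      refine tval_single_move hBR hB'R rfl rfl rfl ?_ hWZ ?_
      · intro r hr s hstr
        rw [min_comm xb xa, max_comm xb xa]
        exact hWX r hr s hstr
      intro hss
      constructor
      · rw [min_comm xb xa, max_comm xb xa]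
        exact window_of_adj hadjX hB true hss.symm
          (G.pos_ne' hB hA true false (fun hq => hABne hq.1.symm) hss.symm)
          (G.pos_ne' hB hB true false (fun hq => Bool.noConfusion hq.2) hss.symm)
      constructor
      · rw [min_comm xb xa, max_comm xb xa]
        exact window_of_adj hadjX hC false hss.symm
          (G.pos_ne' hC hA false false (fun hq => hACne hq.1.symm) hss.symm)
          (G.pos_ne' hC hB false false (fun hq => hBCne hq.1.symm) hss.symm)
      constructor
      · exact window_of_adj hadjZ hB false hss
          (G.pos_ne' hB hB false true (fun hq => Bool.noConfusion hq.2) hss)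
          (G.pos_ne' hB hC false false (fun hq => hBCne hq.1) hss)
      · exact window_of_adj hadjZ hA false hss
          (G.pos_ne' hA hB false true (fun hq => hABne hq.1) hss)
          (G.pos_ne' hA hC false false (fun hq => hACne hq.1) hss)
    have eC : tval I j (insert ⟨sZ, zc, sY, yc, s3⟩ R) =
        tval I j (insert ⟨sZ, zb, sY, ya, s3⟩ R) := by
      refine tval_single_move hCR hC'R rfl rfl rfl ?_ ?_ ?_
      · intro r hr s hstr
        rw [min_comm zc zb, max_comm zc zb]
        exact hWZ r hr s hstr
      · intro r hr s hstr
        rw [min_comm yc ya, max_comm yc ya]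
        exact hWY r hr s hstr
      intro hss
      constructor
      · rw [min_comm zc zb, max_comm zc zb]
        exact window_of_adj hadjZ hC true hss.symm
          (G.pos_ne' hC hB true true (fun hq => hBCne hq.1.symm) hss.symm)
          (G.pos_ne' hC hC true false (fun hq => Bool.noConfusion hq.2) hss.symm)
      constructor
      · rw [min_comm zc zb, max_comm zc zb]
        exact window_of_adj hadjZ hA true hss.symm
          (G.pos_ne' hA hB true true (fun hq => hABne hq.1) hss.symm)
          (G.pos_ne' hA hC true false (fun hq => hACne hq.1) hss.symm)
      constructor
      · rw [min_comm yc ya, max_comm yc ya]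
        exact window_of_adj hadjY hC false hss
          (G.pos_ne' hC hA false true (fun hq => hACne hq.1.symm) hss)
          (G.pos_ne' hC hC false true (fun hq => Bool.noConfusion hq.2) hss)
      · rw [min_comm yc ya, max_comm yc ya]
        exact window_of_adj hadjY hB true hss
          (G.pos_ne' hB hA true true (fun hq => hABne hq.1.symm) hss)
          (G.pos_ne' hB hC true true (fun hq => hBCne hq.1) hss)
    have zAB : tval I j (insert ⟨sX, xa, sY, ya, s1⟩ (insert ⟨sX, xb, sZ, zb, s2⟩ R)) = 0 :=
      tval_zero_of_not_tree (not_tree_two_tails (mem_insert_self _ _)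
        (mem_insert_of_mem (mem_insert_self _ _)) hABne rfl)
    have zA'B' : tval I j (insert ⟨sX, xb, sY, yc, s1⟩ (insert ⟨sX, xa, sZ, zc, s2⟩ R)) = 0 :=
      tval_zero_of_not_tree (not_tree_two_tails (mem_insert_self _ _)
        (mem_insert_of_mem (mem_insert_self _ _)) hA'B'ne rfl)
    have zABC : tval I j (insert ⟨sX, xa, sY, ya, s1⟩ (insert ⟨sX, xb, sZ, zb, s2⟩
        (insert ⟨sZ, zc, sY, yc, s3⟩ R))) = 0 :=
      tval_zero_of_not_tree (not_tree_two_tails (mem_insert_self _ _)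
        (mem_insert_of_mem (mem_insert_self _ _)) hABne rfl)
    have zA'B'C' : tval I j (insert ⟨sX, xb, sY, yc, s1⟩ (insert ⟨sX, xa, sZ, zc, s2⟩
        (insert ⟨sZ, zb, sY, ya, s3⟩ R))) = 0 :=
      tval_zero_of_not_tree (not_tree_two_tails (mem_insert_self _ _)
        (mem_insert_of_mem (mem_insert_self _ _)) hA'B'ne rfl)
    have ex : tval I j (insert ⟨sX, xa, sY, ya, s1⟩ (insert ⟨sZ, zc, sY, yc, s3⟩ R))
        + tval I j (insert ⟨sX, xb, sZ, zb, s2⟩ (insert ⟨sZ, zc, sY, yc, s3⟩ R))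
      = tval I j (insert ⟨sX, xb, sY, yc, s1⟩ (insert ⟨sZ, zb, sY, ya, s3⟩ R))
        + tval I j (insert ⟨sX, xa, sZ, zc, s2⟩ (insert ⟨sZ, zb, sY, ya, s3⟩ R)) := by
      refine exchange_sum (E := sX) (M := sZ) (T := sY) (e1 := xa) (e2 := xb)
        (m1 := zc) (m2 := zb) (t1 := ya) (t2 := yc) hj hWX ?_ hWY
        hzcb hyac (G.sign_pm _ hA) (G.sign_pm _ hB) ?_
      · intro r hr s hstr
        rw [min_comm zc zb, max_comm zc zb]
        exact hWZ r hr s hstr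
      · rw [hify, hifz, hs1, hs2]
        rcases bsign_pm ox with h1 | h1 <;> rcases bsign_pm oy with h2 | h2 <;>
          rcases bsign_pm oz with h3 | h3 <;> rw [h1, h2, h3] <;> norm_num [bsign]
    linarith [eA, eB, eC, zAB, zA'B', zABC, zA'B'C', ex]
  · -- u = true, w = true
    set s1 : ℤ := bsign true * bsign ox * bsign oy with hs1
    set s2 : ℤ := -(bsign true * bsign ox * bsign oz) with hs2
    set s3 : ℤ := -(bsign true * bsign oy * bsign oz) with hs3
    replace hA : (⟨sX, xa, sY, ya, s1⟩ : GArrow n) ∈ G.arrows := hA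
    replace hB : (⟨sX, xb, sZ, zb, s2⟩ : GArrow n) ∈ G.arrows := hB
    replace hC : (⟨sY, yc, sZ, zc, s3⟩ : GArrow n) ∈ G.arrows := hC
    replace hG' : G'.arrows =
        (((G.arrows.erase ⟨sX, xa, sY, ya, s1⟩).erase ⟨sX, xb, sZ, zb, s2⟩).erase
          ⟨sY, yc, sZ, zc, s3⟩) ∪
        {⟨sX, xb, sY, yc, s1⟩, ⟨sX, xa, sZ, zc, s2⟩, ⟨sY, ya, sZ, zb, s3⟩} := hG'
    have hA'G : (⟨sX, xb, sY, yc, s1⟩ : GArrow n) ∈ G'.arrows := by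
      rw [hG']; exact mem_union_right _ (by simp)
    have hB'G : (⟨sX, xa, sZ, zc, s2⟩ : GArrow n) ∈ G'.arrows := by
      rw [hG']; exact mem_union_right _ (by simp)
    have hC'G : (⟨sY, ya, sZ, zb, s3⟩ : GArrow n) ∈ G'.arrows := by
      rw [hG']; exact mem_union_right _ (by simp)
    -- distinctness of the three old arrows
    have hABne : (⟨sX, xa, sY, ya, s1⟩ : GArrow n) ≠ ⟨sX, xb, sZ, zb, s2⟩ :=
      fun hc => hxab (congrArg GArrow.tailPos hc)
    have hBCne : (⟨sX, xb, sZ, zb, s2⟩ : GArrow n) ≠ ⟨sY, yc, sZ, zc, s3⟩ :=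
      fun hc => hzcb (congrArg GArrow.headPos hc).symm
    have hACne : (⟨sX, xa, sY, ya, s1⟩ : GArrow n) ≠ ⟨sY, yc, sZ, zc, s3⟩ := by
      intro hc
      have h1 : sY = sZ := congrArg GArrow.headStr hc
      have h2 : ya = zc := congrArg GArrow.headPos hc
      have hpt : (GArrow.ep (⟨sX, xa, sZ, zc, s2⟩ : GArrow n) true) =
          GArrow.ep (⟨sY, ya, sZ, zb, s3⟩ : GArrow n) false := Prod.ext h1.symm h2.symm
      have := G'.endpoints_distinct _ hB'G _ hC'G true false hpt
      exact Bool.noConfusion this.2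
    -- distinctness of the three new arrows
    have hA'B'ne : (⟨sX, xb, sY, yc, s1⟩ : GArrow n) ≠ ⟨sX, xa, sZ, zc, s2⟩ :=
      fun hc => hxab (congrArg GArrow.tailPos hc).symm
    have hB'C'ne : (⟨sX, xa, sZ, zc, s2⟩ : GArrow n) ≠ ⟨sY, ya, sZ, zb, s3⟩ :=
      fun hc => hzcb (congrArg GArrow.headPos hc)
    have hA'C'ne : (⟨sX, xb, sY, yc, s1⟩ : GArrow n) ≠ ⟨sY, ya, sZ, zb, s3⟩ := by
      intro hc
      have h1 : sX = sY := congrArg GArrow.tailStr hc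
      have h2 : xb = ya := congrArg GArrow.tailPos hc
      have hpt : (GArrow.ep (⟨sX, xa, sY, ya, s1⟩ : GArrow n) true) =
          GArrow.ep (⟨sX, xb, sZ, zb, s2⟩ : GArrow n) false := Prod.ext h1.symm h2.symm
      have := G.endpoints_distinct _ hA _ hB true false hpt
      exact Bool.noConfusion this.2
    set R0 := ((G.arrows.erase ⟨sX, xa, sY, ya, s1⟩).erase ⟨sX, xb, sZ, zb, s2⟩).erase
      ⟨sY, yc, sZ, zc, s3⟩ with hR0
    have hR0G : ∀ r ∈ R0, r ∈ G.arrows :=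
      fun r hr => mem_of_mem_erase (mem_of_mem_erase (mem_of_mem_erase hr))
    have hrA : ∀ r ∈ R0, r ≠ ⟨sX, xa, sY, ya, s1⟩ :=
      fun r hr => (mem_erase.mp (mem_erase.mp (mem_erase.mp hr).2).2).1
    have hrB : ∀ r ∈ R0, r ≠ ⟨sX, xb, sZ, zb, s2⟩ :=
      fun r hr => (mem_erase.mp (mem_erase.mp hr).2).1
    have hrC : ∀ r ∈ R0, r ≠ ⟨sY, yc, sZ, zc, s3⟩ := fun r hr => (mem_erase.mp hr).1
    have hA0 : (⟨sX, xa, sY, ya, s1⟩ : GArrow n) ∉ R0 := fun hr => hrA _ hr rfl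
    have hB0 : (⟨sX, xb, sZ, zb, s2⟩ : GArrow n) ∉ R0 := fun hr => hrB _ hr rfl
    have hC0 : (⟨sY, yc, sZ, zc, s3⟩ : GArrow n) ∉ R0 := fun hr => hrC _ hr rfl
    have hA'0 : (⟨sX, xb, sY, yc, s1⟩ : GArrow n) ∉ R0 := by
      intro hr
      have hme := G.endpoints_distinct _ (hR0G _ hr) _ hB false false rfl
      exact hrB _ hr hme.1
    have hB'0 : (⟨sX, xa, sZ, zc, s2⟩ : GArrow n) ∉ R0 := by
      intro hr
      have hme := G.endpoints_distinct _ (hR0G _ hr) _ hA false false rfl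
      exact hrA _ hr hme.1
    have hC'0 : (⟨sY, ya, sZ, zb, s3⟩ : GArrow n) ∉ R0 := by
      intro hr
      have hme := G.endpoints_distinct _ (hR0G _ hr) _ hA false true rfl
      exact Bool.noConfusion hme.2
    have hGeq : insert (⟨sX, xa, sY, ya, s1⟩ : GArrow n)
        (insert ⟨sX, xb, sZ, zb, s2⟩ (insert ⟨sY, yc, sZ, zc, s3⟩ R0)) = G.arrows := by
      rw [hR0, insert_erase (mem_erase.mpr ⟨Ne.symm hBCne, mem_erase.mpr ⟨Ne.symm hACne, hC⟩⟩),
        insert_erase (mem_erase.mpr ⟨Ne.symm hABne, hB⟩), insert_erase hA]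
    have hG'eq : insert (⟨sX, xb, sY, yc, s1⟩ : GArrow n)
        (insert ⟨sX, xa, sZ, zc, s2⟩ (insert ⟨sY, ya, sZ, zb, s3⟩ R0)) = G'.arrows := by
      rw [hG']
      ext x
      simp only [mem_insert, mem_union, mem_singleton]
      tauto
    have hWX0 : ∀ r ∈ R0, ∀ s : Bool, (r.ep s).1 = sX →
        ((r.ep s).2 < min xa xb ∨ max xa xb < (r.ep s).2) := fun r hr s hstr =>
      window_of_adj hadjX (hR0G r hr) s hstr
        (G.pos_ne' (hR0G r hr) hA s false (fun hq => hrA r hr hq.1) hstr)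
        (G.pos_ne' (hR0G r hr) hB s false (fun hq => hrB r hr hq.1) hstr)
    have hWY0 : ∀ r ∈ R0, ∀ s : Bool, (r.ep s).1 = sY →
        ((r.ep s).2 < min ya yc ∨ max ya yc < (r.ep s).2) := fun r hr s hstr =>
      window_of_adj hadjY (hR0G r hr) s hstr
        (G.pos_ne' (hR0G r hr) hA s true (fun hq => hrA r hr hq.1) hstr)
        (G.pos_ne' (hR0G r hr) hC s false (fun hq => hrC r hr hq.1) hstr)
    have hWZ0 : ∀ r ∈ R0, ∀ s : Bool, (r.ep s).1 = sZ →
        ((r.ep s).2 < min zb zc ∨ max zb zc < (r.ep s).2) := fun r hr s hstr =>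
      window_of_adj hadjZ (hR0G r hr) s hstr
        (G.pos_ne' (hR0G r hr) hB s true (fun hq => hrB r hr hq.1) hstr)
        (G.pos_ne' (hR0G r hr) hC s true (fun hq => hrC r hr hq.1) hstr)
    rw [Z_eq, Z_eq, ← hGeq, ← hG'eq,
      sum_decomp _ _ _ _ hABne hACne hBCne hA0 hB0 hC0 (tval I j),
      sum_decomp _ _ _ _ hA'B'ne hA'C'ne hB'C'ne hA'0 hB'0 hC'0 (tval I j)]
    refine Finset.sum_congr rfl (fun R hRmem => ?_)
    have hsub : R ⊆ R0 := mem_powerset.mp hRmem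
    have hWX : ∀ r ∈ R, ∀ s : Bool, (r.ep s).1 = sX →
        ((r.ep s).2 < min xa xb ∨ max xa xb < (r.ep s).2) :=
      fun r hr => hWX0 r (hsub hr)
    have hWY : ∀ r ∈ R, ∀ s : Bool, (r.ep s).1 = sY →
        ((r.ep s).2 < min ya yc ∨ max ya yc < (r.ep s).2) :=
      fun r hr => hWY0 r (hsub hr)
    have hWZ : ∀ r ∈ R, ∀ s : Bool, (r.ep s).1 = sZ →
        ((r.ep s).2 < min zb zc ∨ max zb zc < (r.ep s).2) :=
      fun r hr => hWZ0 r (hsub hr)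
    have hAR : (⟨sX, xa, sY, ya, s1⟩ : GArrow n) ∉ R := fun hr => hA0 (hsub hr)
    have hBR : (⟨sX, xb, sZ, zb, s2⟩ : GArrow n) ∉ R := fun hr => hB0 (hsub hr)
    have hCR : (⟨sY, yc, sZ, zc, s3⟩ : GArrow n) ∉ R := fun hr => hC0 (hsub hr)
    have hA'R : (⟨sX, xb, sY, yc, s1⟩ : GArrow n) ∉ R := fun hr => hA'0 (hsub hr)
    have hB'R : (⟨sX, xa, sZ, zc, s2⟩ : GArrow n) ∉ R := fun hr => hB'0 (hsub hr)
    have hC'R : (⟨sY, ya, sZ, zb, s3⟩ : GArrow n) ∉ R := fun hr => hC'0 (hsub hr)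
    have eA : tval I j (insert ⟨sX, xa, sY, ya, s1⟩ R) =
        tval I j (insert ⟨sX, xb, sY, yc, s1⟩ R) := by
      refine tval_single_move hAR hA'R rfl rfl rfl hWX hWY ?_
      intro hss
      refine ⟨window_of_adj hadjX hA true hss.symm
          (G.pos_ne' hA hA true false (fun hq => Bool.noConfusion hq.2) hss.symm)
          (G.pos_ne' hA hB true false (fun hq => hABne hq.1) hss.symm),
        window_of_adj hadjX hC false hss.symm
          (G.pos_ne' hC hA false false (fun hq => hACne hq.1.symm) hss.symm)
          (G.pos_ne' hC hB false false (fun hq => hBCne hq.1.symm) hss.symm),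
        window_of_adj hadjY hA false hss
          (G.pos_ne' hA hA false true (fun hq => Bool.noConfusion hq.2) hss)
          (G.pos_ne' hA hC false false (fun hq => hACne hq.1) hss),
        window_of_adj hadjY hB false hss
          (G.pos_ne' hB hA false true (fun hq => hABne hq.1.symm) hss)
          (G.pos_ne' hB hC false false (fun hq => hBCne hq.1) hss)⟩
    have eB : tval I j (insert ⟨sX, xb, sZ, zb, s2⟩ R) =
        tval I j (insert ⟨sX, xa, sZ, zc, s2⟩ R) := by
      refine tval_single_move hBR hB'R rfl rfl rfl ?_ hWZ ?_
      · intro r hr s hstr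
        rw [min_comm xb xa, max_comm xb xa]
        exact hWX r hr s hstr
      intro hss
      constructor
      · rw [min_comm xb xa, max_comm xb xa]
        exact window_of_adj hadjX hB true hss.symm
          (G.pos_ne' hB hA true false (fun hq => hABne hq.1.symm) hss.symm)
          (G.pos_ne' hB hB true false (fun hq => Bool.noConfusion hq.2) hss.symm)
      constructor
      · rw [min_comm xb xa, max_comm xb xa]
        exact window_of_adj hadjX hC true hss.symm
          (G.pos_ne' hC hA true false (fun hq => hACne hq.1.symm) hss.symm)
          (G.pos_ne' hC hB true false (fun hq => hBCne hq.1.symm) hss.symm)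
      exact ⟨window_of_adj hadjZ hB false hss
          (G.pos_ne' hB hB false true (fun hq => Bool.noConfusion hq.2) hss)
          (G.pos_ne' hB hC false true (fun hq => hBCne hq.1) hss),
        window_of_adj hadjZ hA false hss
          (G.pos_ne' hA hB false true (fun hq => hABne hq.1) hss)
          (G.pos_ne' hA hC false true (fun hq => hACne hq.1) hss)⟩
    have eC : tval I j (insert ⟨sY, yc, sZ, zc, s3⟩ R) =
        tval I j (insert ⟨sY, ya, sZ, zb, s3⟩ R) := by
      refine tval_single_move hCR hC'R rfl rfl rfl ?_ ?_ ?_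
      · intro r hr s hstr
        rw [min_comm yc ya, max_comm yc ya]
        exact hWY r hr s hstr
      · intro r hr s hstr
        rw [min_comm zc zb, max_comm zc zb]
        exact hWZ r hr s hstr
      intro hss
      constructor
      · rw [min_comm yc ya, max_comm yc ya]
        exact window_of_adj hadjY hC true hss.symm
          (G.pos_ne' hC hA true true (fun hq => hACne hq.1.symm) hss.symm)
          (G.pos_ne' hC hC true false (fun hq => Bool.noConfusion hq.2) hss.symm)
      constructor
      · rw [min_comm yc ya, max_comm yc ya]
        exact window_of_adj hadjY hB true hss.symm
          (G.pos_ne' hB hA true true (fun hq => hABne hq.1.symm) hss.symm)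
          (G.pos_ne' hB hC true false (fun hq => hBCne hq.1) hss.symm)
      constructor
      · rw [min_comm zc zb, max_comm zc zb]
        exact window_of_adj hadjZ hC false hss
          (G.pos_ne' hC hB false true (fun hq => hBCne hq.1.symm) hss)
          (G.pos_ne' hC hC false true (fun hq => Bool.noConfusion hq.2) hss)
      · rw [min_comm zc zb, max_comm zc zb]
        exact window_of_adj hadjZ hA true hss
          (G.pos_ne' hA hB true true (fun hq => hABne hq.1) hss)
          (G.pos_ne' hA hC true true (fun hq => hACne hq.1) hss)
    have zAB : tval I j (insert ⟨sX, xa, sY, ya, s1⟩ (insert ⟨sX, xb, sZ, zb, s2⟩ R)) = 0 :=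
      tval_zero_of_not_tree (not_tree_two_tails (mem_insert_self _ _)
        (mem_insert_of_mem (mem_insert_self _ _)) hABne rfl)
    have zA'B' : tval I j (insert ⟨sX, xb, sY, yc, s1⟩ (insert ⟨sX, xa, sZ, zc, s2⟩ R)) = 0 :=
      tval_zero_of_not_tree (not_tree_two_tails (mem_insert_self _ _)
        (mem_insert_of_mem (mem_insert_self _ _)) hA'B'ne rfl)
    have zABC : tval I j (insert ⟨sX, xa, sY, ya, s1⟩ (insert ⟨sX, xb, sZ, zb, s2⟩
        (insert ⟨sY, yc, sZ, zc, s3⟩ R))) = 0 :=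
      tval_zero_of_not_tree (not_tree_two_tails (mem_insert_self _ _)
        (mem_insert_of_mem (mem_insert_self _ _)) hABne rfl)
    have zA'B'C' : tval I j (insert ⟨sX, xb, sY, yc, s1⟩ (insert ⟨sX, xa, sZ, zc, s2⟩
        (insert ⟨sY, ya, sZ, zb, s3⟩ R))) = 0 :=
      tval_zero_of_not_tree (not_tree_two_tails (mem_insert_self _ _)
        (mem_insert_of_mem (mem_insert_self _ _)) hA'B'ne rfl)
    have ex : tval I j (insert ⟨sX, xb, sZ, zb, s2⟩ (insert ⟨sY, yc, sZ, zc, s3⟩ R))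
        + tval I j (insert ⟨sX, xa, sY, ya, s1⟩ (insert ⟨sY, yc, sZ, zc, s3⟩ R))
      = tval I j (insert ⟨sX, xa, sZ, zc, s2⟩ (insert ⟨sY, ya, sZ, zb, s3⟩ R))
        + tval I j (insert ⟨sX, xb, sY, yc, s1⟩ (insert ⟨sY, ya, sZ, zb, s3⟩ R)) := by
      refine exchange_sum (E := sX) (M := sY) (T := sZ) (e1 := xb) (e2 := xa)
        (m1 := yc) (m2 := ya) (t1 := zb) (t2 := zc) hj ?_ ?_ hWZ
        (Ne.symm hyac) (Ne.symm hzcb) (G.sign_pm _ hB) (G.sign_pm _ hA) ?_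
      · intro r hr s hstr
        rw [min_comm xb xa, max_comm xb xa]
        exact hWX r hr s hstr
      · intro r hr s hstr
        rw [min_comm yc ya, max_comm yc ya]
        exact hWY r hr s hstr
      · rw [hifz', hify', hs1, hs2, show bsign true = 1 from rfl]
        rcases bsign_pm ox with hxx | hxx <;> rw [hxx] <;> ring
    linarith [eA, eB, eC, zAB, zA'B', zABC, zA'B'C', ex]


/-- A single Reidemeister move on Gauss diagrams. -/
def ReidMove {n : ℕ} (G G' : GaussDiagram n) : Prop :=
  Omega1Rel G G' ∨ Omega2Rel G G' ∨ Omega3Rel G G'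

/-- **Invariance under Reidemeister moves.**  Fix `n ≥ 1`, a subset
`I ⊆ {1,…,n}` and `j ∉ I`.  If two Gauss diagrams on `n` strings are related by
a single Reidemeister move `Ω1`, `Ω2` or `Ω3`, then they have the same tree
invariant `Z_{I,j}`; consequently `Z_{I,j}` is well defined on ordered virtual
tangles on `n` strings, i.e. on equivalence classes of Gauss diagrams modulo
these moves (and in particular it is an isotopy invariant of ordered classical
tangles). -/
theorem tree_invariant_is_invariant {n : ℕ} (hn : 1 ≤ n)
    (I : Finset (Fin n)) (j : Fin n) (hj : j ∉ I) :
    (∀ G G' : GaussDiagram n, ReidMove G G' → Z I j G = Z I j G') ∧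
    (∀ G G' : GaussDiagram n, Relation.EqvGen ReidMove G G' →
      Z I j G = Z I j G') := by
  have main : ∀ G G' : GaussDiagram n, ReidMove G G' → Z I j G = Z I j G' := by
    rintro G G' (h | h | h)
    · rcases h with h | h
      · exact Z_omega1del h
      · exact (Z_omega1del h).symm
    · rcases h with h | h
      · exact Z_omega2del h
      · exact (Z_omega2del h).symm
    · exact Z_omega3 hj h
  refine ⟨main, fun G G' h => ?_⟩
  induction h with
  | rel x y h => exact main x y h
  | refl x => rfl
  | symm x y _ ih => exact ih.symm
  | trans x y z _ _ ih1 ih2 => exact ih1.trans ih2
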